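/- arXiv:1701.01656 — 7 statements merged into one kernel-verified Lean document; each statement's English description precedes it below -/
import Mathlib

section
/- Let n ≥ 2. For every decorated tree (T,σ) ∈ D_{n−1} and every parameter triple (k,l,x) ∈ P_n, the pair h_n((T,σ),(k,l,x)) = (T′,σ′) is again a decorated tree, i.e. it belongs to D_n: T′ is a rooted labeled tree on [n] and σ′ is a stamp history for T′. -/
/-!
Robin-Hood pruning: the deterministic pruning map `h` is well defined.

Conventions: a rooted labeled tree on `[n]` is encoded on `Fin n` by a root `r` and a
parent map `p` with `p r = r` and every vertex reaching the root by iterating `p`.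
Stamps are 0-based: the paper's stamp of a vertex `v` is `(σ v : ℕ) + 1`; the paper's
parameters `k, l` are kept 1-based (as natural numbers), and `x i` stands for the paper's
`x_{i+1}`.  The pruning maps a decorated tree on `n + 1` vertices (the paper's `n - 1 ≥ 1`
vertices) to one on `n + 2` vertices, the new vertex being `Fin.last (n+1)`.
-/

/-- `(r, p)` encodes a rooted labeled tree on `Fin N`. -/
def IsRootedTree {N : ℕ} (r : Fin N) (p : Fin N → Fin N) : Prop :=
  p r = r ∧ ∀ v : Fin N, ∃ k : ℕ, p^[k] v = r

/-- `σ` is a stamp history for the tree `(r, p)`: stamps strictly increase away from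
the root. -/
def IsStampHistory {N : ℕ} (r : Fin N) (p : Fin N → Fin N) (σ : Equiv.Perm (Fin N)) : Prop :=
  ∀ v : Fin N, v ≠ r → σ (p v) < σ v

/-- Membership in the parameter set `P_{N+1}` for pruning a tree on `N` vertices:
either `1 ≤ l < k ≤ N + 1`, or `k = 1`, `l = 0` and `x_1 = 1`. -/
def PMem {N : ℕ} (k l : ℕ) (x : Fin N → Bool) : Prop :=
  (1 ≤ l ∧ l < k ∧ k ≤ N + 1) ∨ (k = 1 ∧ l = 0 ∧ ∀ h : 0 < N, x ⟨0, h⟩ = true)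

/-- The root of the pruned tree: the new vertex if `k = 1`, otherwise the old root. -/
def hRoot {n : ℕ} (r : Fin (n + 1)) (k : ℕ) : Fin (n + 2) :=
  if k = 1 then Fin.last (n + 1) else r.castSucc

/-- The parent map of the pruned tree: vertices `v` with `x_{σ(v)} = 1` and `σ(v) ≥ k`
are rewired to the new vertex; the new vertex attaches to the vertex with stamp `l`
(if `k > 1`), and all other vertices keep their parent. -/
def hParent {n : ℕ} (r : Fin (n + 1)) (p : Fin (n + 1) → Fin (n + 1))
    (σ : Equiv.Perm (Fin (n + 1))) (k l : ℕ) (x : Fin (n + 1) → Bool) :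
    Fin (n + 2) → Fin (n + 2) := fun v =>
  if hv : v = Fin.last (n + 1) then
    if k = 1 then Fin.last (n + 1) else (σ.symm (Fin.ofNat (n + 1) (l - 1 : ℕ))).castSucc
  else
    (if x (σ (v.castPred hv)) = true ∧ k ≤ (σ (v.castPred hv) : ℕ) + 1 then Fin.last (n + 1)
     else (p (v.castPred hv)).castSucc)

/-- The stamp history of the pruned tree: the new vertex gets stamp `k`, and the old
stamps `≥ k` are shifted up by one. -/
def hStamp {n : ℕ} (σ : Equiv.Perm (Fin (n + 1))) (k : ℕ) : Equiv.Perm (Fin (n + 2)) :=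
  (finSuccEquiv' (Fin.last (n + 1))).trans
    ((Equiv.optionCongr σ).trans (finSuccEquiv' (Fin.ofNat (n + 2) (k - 1 : ℕ))).symm)

section Aux

/-- In a rooted tree with a stamp history, the root carries the minimal stamp. -/
lemma rh_stamp_root_le {N : ℕ} {r : Fin N} {p : Fin N → Fin N} {σ : Equiv.Perm (Fin N)}
    (hT : IsRootedTree r p) (hσ : IsStampHistory r p σ) : ∀ v, σ r ≤ σ v := by
  intro v
  obtain ⟨m, hm⟩ := hT.2 v
  induction m generalizing v with
  | zero => simp at hm; simp [hm]
  | succ m ih =>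
    by_cases h : v = r
    · simp [h]
    · have h1 : σ (p v) < σ v := hσ v h
      have h2 : σ r ≤ σ (p v) := ih (p v) (by simpa [Function.iterate_succ_apply] using hm)
      exact h2.trans h1.le

lemma rh_stamp_root_eq_zero {N : ℕ} {r : Fin (N + 1)} {p : Fin (N + 1) → Fin (N + 1)}
    {σ : Equiv.Perm (Fin (N + 1))} (hT : IsRootedTree r p) (hσ : IsStampHistory r p σ) :
    σ r = 0 := by
  have := rh_stamp_root_le hT hσ (σ.symm 0)
  simpa using Fin.le_zero_iff.mp (by simpa using this)

/-- A stamp history plus a fixed root gives reachability of the root. -/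
lemma rh_reach {N : ℕ} {r : Fin N} {p : Fin N → Fin N} {σ : Equiv.Perm (Fin N)}
    (hr : p r = r) (hσ : IsStampHistory r p σ) : ∀ v, ∃ m, p^[m] v = r := by
  have key : ∀ s : ℕ, ∀ v, (σ v : ℕ) = s → ∃ m, p^[m] v = r := by
    intro s
    induction s using Nat.strong_induction_on with
    | _ s ih =>
      intro v hv
      by_cases h : v = r
      · exact ⟨0, by simp [h]⟩
      · obtain ⟨m, hm⟩ := ih (σ (p v)) (by rw [← hv]; exact hσ v h) (p v) rfl
        exact ⟨m + 1, by simpa [Function.iterate_succ_apply] using hm⟩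
  exact fun v => key _ v rfl

end Aux
/-- Lemma: the Robin-Hood pruning is well defined.
For every decorated tree `(T, σ) ∈ D_{n-1}` (on `n + 1` vertices here) and every
parameter triple `(k, l, x) ∈ P_n`, the output of the deterministic pruning is again a
decorated tree: the pruned pair is a rooted labeled tree on `n + 2` vertices and the
adjusted permutation is a stamp history for it. -/
theorem robinHood_pruning_wellDefined (n : ℕ)
    (r : Fin (n + 1)) (p : Fin (n + 1) → Fin (n + 1)) (σ : Equiv.Perm (Fin (n + 1)))
    (k l : ℕ) (x : Fin (n + 1) → Bool)
    (hT : IsRootedTree r p) (hσ : IsStampHistory r p σ) (hP : PMem k l x) :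
    IsRootedTree (hRoot r k) (hParent r p σ k l x) ∧
      IsStampHistory (hRoot r k) (hParent r p σ k l x) (hStamp σ k) := by
  have hk1 : 1 ≤ k := by rcases hP with ⟨h1, h2, _⟩ | ⟨h1, _⟩ <;> omega
  have hkN : k ≤ n + 2 := by rcases hP with ⟨_, _, h3⟩ | ⟨h1, _⟩ <;> omega
  set K : Fin (n + 2) := Fin.ofNat (n + 2) (k - 1 : ℕ) with hKdef
  have hKval : (K : ℕ) = k - 1 := by rw [hKdef, Fin.val_ofNat]; exact Nat.mod_eq_of_lt (by omega)
  have hroot0 : σ r = 0 := rh_stamp_root_eq_zero hT hσ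
  -- stamp computations
  have hSlast : hStamp σ k (Fin.last (n + 1)) = K := by
    simp [hStamp]
    rfl
  have hScast : ∀ u : Fin (n + 1), hStamp σ k u.castSucc = K.succAbove (σ u) := by
    intro u
    simp [hStamp, ← Fin.succAbove_last]
    rfl
  have hAbove_lt : ∀ j : Fin (n + 1), (j : ℕ) < k - 1 → (K.succAbove j : ℕ) = j := by
    intro j hj
    rw [Fin.succAbove_of_castSucc_lt _ _ (by rw [Fin.lt_def]; simpa [hKval] using hj)]
    simp
  have hAbove_ge : ∀ j : Fin (n + 1), k - 1 ≤ (j : ℕ) → (K.succAbove j : ℕ) = j + 1 := by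
    intro j hj
    rw [Fin.succAbove_of_le_castSucc _ _ (by rw [Fin.le_def]; simpa [hKval] using hj)]
    simp
  -- root is rewired when k = 1
  have hCroot : k = 1 → (x (σ r) = true ∧ k ≤ (σ r : ℕ) + 1) := by
    intro hk
    rcases hP with ⟨h1, h2, _⟩ | ⟨_, _, h3⟩
    · omega
    · refine ⟨?_, by omega⟩
      have : σ r = ⟨0, Nat.succ_pos n⟩ := by rw [hroot0]; rfl
      rw [this]; exact h3 _
  -- the parent map fixes the root
  have hfix : hParent r p σ k l x (hRoot r k) = hRoot r k := by
    by_cases hk : k = 1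
    · simp [hRoot, hParent, hk]
    · have hne : r.castSucc ≠ Fin.last (n + 1) := Fin.castSucc_lt_last r |>.ne
      simp only [hRoot, hParent, if_neg hk, dif_neg hne, Fin.castPred_castSucc]
      rw [if_neg]
      · rw [hT.1]
      · rintro ⟨-, hc⟩
        rw [hroot0] at hc
        simp at hc
        omega
  -- the stamp history property
  have hSH : IsStampHistory (hRoot r k) (hParent r p σ k l x) (hStamp σ k) := by
    intro v hv
    by_cases hvl : v = Fin.last (n + 1)
    · subst hvl
      have hk : k ≠ 1 := by
        intro hk; exact hv (by simp [hRoot, hk])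
      rcases hP with ⟨h1, h2, h3⟩ | ⟨h1, _⟩; swap
      · omega
      set L : Fin (n + 1) := Fin.ofNat (n + 1) (l - 1 : ℕ) with hLdef
      have hLval : (L : ℕ) = l - 1 := by rw [hLdef, Fin.val_ofNat]; exact Nat.mod_eq_of_lt (by omega)
      have hp' : hParent r p σ k l x (Fin.last (n + 1)) = (σ.symm L).castSucc := by
        simp [hParent, hk]
        rfl
      rw [hp', hScast, hSlast, Fin.lt_def, Equiv.apply_symm_apply]
      rw [hAbove_lt L (by omega), hKval]
      omega
    · obtain ⟨u, rfl⟩ := Fin.exists_castSucc_eq.mpr hvl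
      have hp' := hParent r p σ k l x u.castSucc
      by_cases hC : x (σ u) = true ∧ k ≤ (σ u : ℕ) + 1
      · have : hParent r p σ k l x u.castSucc = Fin.last (n + 1) := by
          simp [hParent, hvl, hC]
        rw [this, hSlast, hScast, Fin.lt_def, hKval, hAbove_ge (σ u) (by omega)]
        omega
      · have hpar : hParent r p σ k l x u.castSucc = (p u).castSucc := by
          simp only [hParent, dif_neg hvl, Fin.castPred_castSucc]
          exact if_neg hC
        have hur : u ≠ r := by
          intro h
          subst h
          by_cases hk : k = 1
          · exact hC (hCroot hk)
          · exact hv (by simp [hRoot, hk])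
        rw [hpar, hScast, hScast]
        exact Fin.strictMono_succAbove K (hσ u hur)
  refine ⟨⟨hfix, ?_⟩, hSH⟩
  exact rh_reach hfix hSH
end

section
/- For every c ∈ (0,2) there exist α > 0 with α < (1 − c + √(1 + 2c − c²))/4 (a quantity which is < 1) and a constant C > 0 such that for all n, all integers m with 0 < m < c·ln n, and all distinct vertices v, w ∈ [n]: P(D(v) ≥ m and D(w) ≥ m) ≤ P(D(v) ≥ m)·P(D(w) ≥ m) + C·2^{−2m}·n^{−α}. -/
/-!
Tail bound for the degree of a fixed vertex in a random recursive tree.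

The random recursive tree on `[n]` is encoded by the type `RecTree n` of sequences of
independent uniform parent choices: for `j : Fin (n-1)`, the (0-based) vertex `j + 1`
chooses its parent `t j` uniformly in `{0, …, j}`.  Since each coordinate is uniform and
independent, the law of the random recursive tree is the uniform distribution on
`RecTree n`, and probabilities are ratios of cardinalities.
-/

/-- Parent choice sequences encoding recursive trees on `n` (0-based) vertices. -/
abbrev RecTree (n : ℕ) := ∀ j : Fin (n - 1), Fin ((j : ℕ) + 1)

/-- The degree (number of children) of vertex `i` in the recursive tree `t`. -/
noncomputable def rDeg {n : ℕ} (t : RecTree n) (i : Fin n) : ℕ :=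
  Nat.card {j : Fin (n - 1) // ((t j : ℕ)) = (i : ℕ)}

/-- The probability of an event under the law of the random recursive tree on `n`
vertices (the uniform distribution on `RecTree n`). -/
noncomputable def rProb (n : ℕ) (s : Set (RecTree n)) : ℝ :=
  (Nat.card {t : RecTree n // t ∈ s} : ℝ) / (Nat.card (RecTree n) : ℝ)


/-- The sample space of a uniformly random decorated tree: a recursive tree together
with an independent uniform relabeling permutation. -/
abbrev DecSpace (n : ℕ) := RecTree n × Equiv.Perm (Fin n)

/-- The degree of vertex `v` in a uniformly random decorated tree:
`D(v) = d_{R_n}(σ(v))`. -/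
noncomputable def relDeg {n : ℕ} (p : DecSpace n) (v : Fin n) : ℕ := rDeg p.1 (p.2 v)

/-- Probability of an event for a uniformly random decorated tree (uniform measure on
`DecSpace n`). -/
noncomputable def dProb (n : ℕ) (s : Set (DecSpace n)) : ℝ :=
  (Nat.card {p : DecSpace n // p ∈ s} : ℝ) / (Nat.card (DecSpace n) : ℝ)

open Finset

section AuxLemmas

private lemma card_subtype_mono' {α : Type*} [Finite α] {P Q : α → Prop}
    (h : ∀ a, P a → Q a) : Nat.card {a // P a} ≤ Nat.card {a // Q a} :=
  Nat.card_le_card_of_injective (fun x => ⟨x.1, h x.1 x.2⟩)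
    (fun x y hxy => Subtype.ext (by simpa using congrArg Subtype.val hxy))

private lemma nat_le_self_mul_self (a : ℕ) : a ≤ a * a := by
  rcases Nat.eq_zero_or_pos a with h | h
  · simp [h]
  · exact Nat.le_mul_of_pos_left a h

private def subtypeProdEquivSigmaFst {A B : Type*} (P : A × B → Prop) :
    {p : A × B // P p} ≃ Σ a : A, {b : B // P (a, b)} where
  toFun p := ⟨p.1.1, p.1.2, p.2⟩
  invFun q := ⟨(q.1, q.2.1), q.2.2⟩
  left_inv p := rfl
  right_inv q := rfl

private def subtypeProdEquivSigmaSnd {A B : Type*} (P : A × B → Prop) :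
    {p : A × B // P p} ≃ Σ b : B, {a : A // P (a, b)} where
  toFun p := ⟨p.1.2, p.1.1, p.2⟩
  invFun q := ⟨(q.2.1, q.1), q.2.2⟩
  left_inv p := rfl
  right_inv q := rfl

private lemma card_subtype_prod_fst {A B : Type*} [Fintype A] [Fintype B] (P : A × B → Prop) :
    Nat.card {p : A × B // P p} = ∑ a : A, Nat.card {b : B // P (a, b)} := by
  classical
  rw [Nat.card_congr (subtypeProdEquivSigmaFst P)]
  simp [Nat.card_eq_fintype_card]

private lemma card_subtype_prod_snd {A B : Type*} [Fintype A] [Fintype B] (P : A × B → Prop) :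
    Nat.card {p : A × B // P p} = ∑ b : B, Nat.card {a : A // P (a, b)} := by
  classical
  rw [Nat.card_congr (subtypeProdEquivSigmaSnd P)]
  simp [Nat.card_eq_fintype_card]

private lemma cheb_aux {ι : Type*} [Fintype ι] (F G : ι → ℕ) (F0 G0 : ℕ)
    (hF : ∀ a, F0 ≤ F a) (hG : ∀ a, G0 ≤ G a) (h : ∀ a, F a = F0 ∨ G a = G0) :
    Fintype.card ι * ∑ a, F a * G a ≤ (∑ a, F a) * (∑ a, G a) := by
  have key : ∀ a b : ι, F a * G a + F b * G b ≤ F a * G b + F b * G a := by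
    intro a b
    rcases h a with ha | ha <;> rcases h b with hb | hb
    · rw [ha, hb]; exact le_of_eq (by ring)
    · have h1 : F a ≤ F b := ha ▸ hF b
      have h2 : G b ≤ G a := hb ▸ hG a
      exact mul_add_mul_le_mul_add_mul h1 h2
    · have h1 : F b ≤ F a := hb ▸ hF a
      have h2 : G a ≤ G b := ha ▸ hG b
      have := mul_add_mul_le_mul_add_mul h1 h2
      linarith
    · rw [ha, hb]
  have H : ∑ a : ι, ∑ b : ι, (F a * G a + F b * G b) ≤
      ∑ a : ι, ∑ b : ι, (F a * G b + F b * G a) :=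
    Finset.sum_le_sum fun a _ => Finset.sum_le_sum fun b _ => key a b
  have e1 : ∑ a : ι, ∑ b : ι, (F a * G a + F b * G b) =
      2 * (Fintype.card ι * ∑ a, F a * G a) := by
    simp only [Finset.sum_add_distrib, Finset.sum_const, Finset.card_univ, smul_eq_mul,
      ← Finset.mul_sum]
    ring
  have e2 : ∑ a : ι, ∑ b : ι, (F a * G b + F b * G a) =
      2 * ((∑ a, F a) * (∑ a, G a)) := by
    simp only [Finset.sum_add_distrib, ← Finset.mul_sum, ← Finset.sum_mul]
    ring
  omega

end AuxLemmas

section NA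

/-- Negative association for sums of exclusive indicators over an independent product. -/
private lemma na_main (N : ℕ) : ∀ (α : Fin N → Type) (_ : ∀ k, Fintype (α k))
    (u v : ∀ k, α k → ℕ), (∀ k a, u k a = 0 ∨ v k a = 0) → ∀ (m m' : ℤ),
    Nat.card {t : ∀ k, α k // m ≤ ∑ k, (u k (t k) : ℤ) ∧ m' ≤ ∑ k, (v k (t k) : ℤ)} *
      Nat.card (∀ k, α k) ≤
    Nat.card {t : ∀ k, α k // m ≤ ∑ k, (u k (t k) : ℤ)} *
      Nat.card {t : ∀ k, α k // m' ≤ ∑ k, (v k (t k) : ℤ)} := by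
  induction N with
  | zero =>
    intro α inst u v huv m m'
    letI := inst
    have hT : Nat.card (∀ k : Fin 0, α k) = 1 := Nat.card_unique
    rw [hT, mul_one]
    exact le_trans (nat_le_self_mul_self _)
      (Nat.mul_le_mul (card_subtype_mono' fun t h => h.1)
        (card_subtype_mono' fun t h => h.2))
  | succ N ih =>
    intro α inst u v huv m m'
    letI := inst
    -- helper: decompose a subtype card over the first coordinate
    have hsplit : ∀ P : (∀ k, α k) → Prop,
        Nat.card {t : ∀ k, α k // P t} =
          ∑ a : α 0, Nat.card {t' : ∀ k : Fin N, α k.succ // P (Fin.cons a t')} := by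
      intro P
      rw [← Nat.card_congr (Equiv.subtypeEquiv (Fin.consEquiv α) (fun q => Iff.rfl)),
        card_subtype_prod_fst]
      rfl
    have hcardT : Nat.card (∀ k, α k) =
        Fintype.card (α 0) * Nat.card (∀ k : Fin N, α k.succ) := by
      rw [← Nat.card_congr (Fin.consEquiv α), Nat.card_prod, Nat.card_eq_fintype_card]
    -- sums over cons
    have hsum : ∀ (w : ∀ k, α k → ℕ) (a : α 0) (t' : ∀ k : Fin N, α k.succ),
        ∑ k, (w k ((Fin.cons a t' : ∀ k, α k) k) : ℤ) =
          (w 0 a : ℤ) + ∑ k : Fin N, (w k.succ (t' k) : ℤ) := by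
      intro w a t'
      rw [Fin.sum_univ_succ]
      simp
    set F : ℤ → ℕ := fun μ =>
      Nat.card {t' : ∀ k : Fin N, α k.succ // μ ≤ ∑ k : Fin N, (u k.succ (t' k) : ℤ)} with hF
    set G : ℤ → ℕ := fun μ =>
      Nat.card {t' : ∀ k : Fin N, α k.succ // μ ≤ ∑ k : Fin N, (v k.succ (t' k) : ℤ)} with hG
    set A : ℤ → ℤ → ℕ := fun μ μ' =>
      Nat.card {t' : ∀ k : Fin N, α k.succ // μ ≤ ∑ k : Fin N, (u k.succ (t' k) : ℤ) ∧
        μ' ≤ ∑ k : Fin N, (v k.succ (t' k) : ℤ)} with hAdef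
    have eAB : Nat.card {t : ∀ k, α k // m ≤ ∑ k, (u k (t k) : ℤ) ∧
        m' ≤ ∑ k, (v k (t k) : ℤ)} =
        ∑ a : α 0, A (m - u 0 a) (m' - v 0 a) := by
      rw [hsplit]
      refine Finset.sum_congr rfl fun a _ => Nat.card_congr
        (Equiv.subtypeEquivRight fun t' => ?_)
      rw [hsum u a t', hsum v a t', sub_le_iff_le_add', sub_le_iff_le_add']
    have eA : Nat.card {t : ∀ k, α k // m ≤ ∑ k, (u k (t k) : ℤ)} =
        ∑ a : α 0, F (m - u 0 a) := by
      rw [hsplit]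
      refine Finset.sum_congr rfl fun a _ => Nat.card_congr
        (Equiv.subtypeEquivRight fun t' => ?_)
      rw [hsum u a t', sub_le_iff_le_add']
    have eB : Nat.card {t : ∀ k, α k // m' ≤ ∑ k, (v k (t k) : ℤ)} =
        ∑ a : α 0, G (m' - v 0 a) := by
      rw [hsplit]
      refine Finset.sum_congr rfl fun a _ => Nat.card_congr
        (Equiv.subtypeEquivRight fun t' => ?_)
      rw [hsum v a t', sub_le_iff_le_add']
    rw [eAB, eA, eB, hcardT]
    have hkey : ∀ a : α 0, A (m - u 0 a) (m' - v 0 a) * Nat.card (∀ k : Fin N, α k.succ) ≤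
        F (m - u 0 a) * G (m' - v 0 a) := fun a =>
      ih (fun k => α k.succ) (fun k => inst k.succ) (fun k => u k.succ) (fun k => v k.succ)
        (fun k a => huv k.succ a) _ _
    have hFmono : ∀ μ₁ μ₂ : ℤ, μ₁ ≤ μ₂ → F μ₂ ≤ F μ₁ := fun μ₁ μ₂ h =>
      card_subtype_mono' fun t' ht' => le_trans h ht'
    have hGmono : ∀ μ₁ μ₂ : ℤ, μ₁ ≤ μ₂ → G μ₂ ≤ G μ₁ := fun μ₁ μ₂ h =>
      card_subtype_mono' fun t' ht' => le_trans h ht'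
    calc (∑ a : α 0, A (m - u 0 a) (m' - v 0 a)) *
          (Fintype.card (α 0) * Nat.card (∀ k : Fin N, α k.succ))
        = Fintype.card (α 0) *
            ∑ a : α 0, A (m - u 0 a) (m' - v 0 a) * Nat.card (∀ k : Fin N, α k.succ) := by
          rw [Finset.mul_sum, Finset.sum_mul]
          exact Finset.sum_congr rfl fun a _ => by ring
      _ ≤ Fintype.card (α 0) * ∑ a : α 0, F (m - u 0 a) * G (m' - v 0 a) :=
          Nat.mul_le_mul_left _ (Finset.sum_le_sum fun a _ => hkey a)
      _ ≤ (∑ a : α 0, F (m - u 0 a)) * (∑ a : α 0, G (m' - v 0 a)) := by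
          refine cheb_aux _ _ (F m) (G m') (fun a => hFmono _ _ (sub_le_self m (by positivity)))
            (fun a => hGmono _ _ (sub_le_self m' (by positivity))) (fun a => ?_)
          rcases huv 0 a with h | h
          · left; rw [h]; norm_num
          · right; rw [h]; norm_num

end NA

private lemma rDeg_eq_sum {n : ℕ} (t : RecTree n) (i : Fin n) :
    rDeg t i = ∑ k : Fin (n - 1), if ((t k : ℕ)) = (i : ℕ) then 1 else 0 := by
  rw [rDeg, Nat.card_eq_fintype_card, Fintype.card_subtype, Finset.card_filter]

private lemma na_app {n : ℕ} (m : ℕ) (i j : Fin n) (hij : i ≠ j) :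
    Nat.card {t : RecTree n // m ≤ rDeg t i ∧ m ≤ rDeg t j} * Nat.card (RecTree n) ≤
    Nat.card {t : RecTree n // m ≤ rDeg t i} * Nat.card {t : RecTree n // m ≤ rDeg t j} := by
  classical
  have hu : ∀ (l : Fin n) (t : RecTree n), m ≤ rDeg t l ↔
      (m : ℤ) ≤ ∑ k : Fin (n - 1),
        ((if ((t k : ℕ)) = (l : ℕ) then 1 else 0 : ℕ) : ℤ) := by
    intro l t
    rw [rDeg_eq_sum]
    constructor <;> intro h <;> exact_mod_cast h
  have key := na_main (n - 1) (fun k => Fin ((k : ℕ) + 1)) (fun k => inferInstance)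
    (fun _ a => if (a : ℕ) = (i : ℕ) then 1 else 0)
    (fun _ a => if (a : ℕ) = (j : ℕ) then 1 else 0)
    (fun k a => by
      by_cases h : (a : ℕ) = (i : ℕ)
      · right
        have hj : ¬ ((a : ℕ) = (j : ℕ)) := fun h2 => hij (Fin.ext (h.symm.trans h2))
        simp [hj]
      · left; simp [h]) (m : ℤ) (m : ℤ)
  have e1 : Nat.card {t : RecTree n // m ≤ rDeg t i ∧ m ≤ rDeg t j} =
      Nat.card {t : RecTree n // (m : ℤ) ≤ ∑ k : Fin (n - 1),
        ((if ((t k : ℕ)) = (i : ℕ) then 1 else 0 : ℕ) : ℤ) ∧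
        (m : ℤ) ≤ ∑ k : Fin (n - 1),
        ((if ((t k : ℕ)) = (j : ℕ) then 1 else 0 : ℕ) : ℤ)} :=
    Nat.card_congr (Equiv.subtypeEquivRight fun t => and_congr (hu i t) (hu j t))
  have e2 : Nat.card {t : RecTree n // m ≤ rDeg t i} =
      Nat.card {t : RecTree n // (m : ℤ) ≤ ∑ k : Fin (n - 1),
        ((if ((t k : ℕ)) = (i : ℕ) then 1 else 0 : ℕ) : ℤ)} :=
    Nat.card_congr (Equiv.subtypeEquivRight fun t => hu i t)
  have e3 : Nat.card {t : RecTree n // m ≤ rDeg t j} =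
      Nat.card {t : RecTree n // (m : ℤ) ≤ ∑ k : Fin (n - 1),
        ((if ((t k : ℕ)) = (j : ℕ) then 1 else 0 : ℕ) : ℤ)} :=
    Nat.card_congr (Equiv.subtypeEquivRight fun t => hu j t)
  rw [e1, e2, e3]
  exact key

private lemma perm_cheb {n : ℕ} (Nf : Fin n → ℕ) (v w : Fin n) (hvw : v ≠ w) :
    (∑ σ : Equiv.Perm (Fin n), Nf (σ v) * Nf (σ w)) * Nat.card (Equiv.Perm (Fin n)) ≤
    (∑ σ : Equiv.Perm (Fin n), Nf (σ v)) * (∑ σ : Equiv.Perm (Fin n), Nf (σ w)) := by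
  classical
  have hQ : ∀ x : Fin n, x ≠ v → x ≠ w →
      (∑ σ : Equiv.Perm (Fin n), Nf (σ v) * Nf (σ x)) =
      ∑ σ : Equiv.Perm (Fin n), Nf (σ v) * Nf (σ w) := by
    intro x hxv hxw
    have hsv : (Equiv.swap w x) v = v := Equiv.swap_apply_of_ne_of_ne hvw (Ne.symm hxv)
    calc ∑ σ : Equiv.Perm (Fin n), Nf (σ v) * Nf (σ x)
        = ∑ ρ : Equiv.Perm (Fin n),
            Nf ((Equiv.mulRight (Equiv.swap w x) ρ) v) *
            Nf ((Equiv.mulRight (Equiv.swap w x) ρ) x) :=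
          (Equiv.sum_comp (Equiv.mulRight (Equiv.swap w x))
            (fun σ => Nf (σ v) * Nf (σ x))).symm
      _ = ∑ ρ : Equiv.Perm (Fin n), Nf (ρ v) * Nf (ρ w) := by
          refine Finset.sum_congr rfl fun ρ _ => ?_
          simp [Equiv.Perm.mul_apply, hsv, Equiv.swap_apply_right]
  have hQsym : ∑ σ : Equiv.Perm (Fin n), Nf (σ w) * Nf (σ w) =
      ∑ σ : Equiv.Perm (Fin n), Nf (σ v) * Nf (σ v) := by
    calc ∑ σ : Equiv.Perm (Fin n), Nf (σ w) * Nf (σ w)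
        = ∑ ρ : Equiv.Perm (Fin n),
            Nf ((Equiv.mulRight (Equiv.swap v w) ρ) w) *
            Nf ((Equiv.mulRight (Equiv.swap v w) ρ) w) :=
          (Equiv.sum_comp (Equiv.mulRight (Equiv.swap v w))
            (fun σ => Nf (σ w) * Nf (σ w))).symm
      _ = _ := by
          refine Finset.sum_congr rfl fun ρ _ => ?_
          simp [Equiv.Perm.mul_apply, Equiv.swap_apply_right]
  have hPQ : (∑ σ : Equiv.Perm (Fin n), Nf (σ v) * Nf (σ w)) ≤
      ∑ σ : Equiv.Perm (Fin n), Nf (σ v) * Nf (σ v) := by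
    have h2 : 2 * ∑ σ : Equiv.Perm (Fin n), Nf (σ v) * Nf (σ w) ≤
        2 * ∑ σ : Equiv.Perm (Fin n), Nf (σ v) * Nf (σ v) := by
      calc 2 * ∑ σ : Equiv.Perm (Fin n), Nf (σ v) * Nf (σ w)
          = ∑ σ : Equiv.Perm (Fin n), 2 * (Nf (σ v) * Nf (σ w)) := Finset.mul_sum _ _ _
        _ ≤ ∑ σ : Equiv.Perm (Fin n), (Nf (σ v) * Nf (σ v) + Nf (σ w) * Nf (σ w)) :=
            Finset.sum_le_sum fun σ _ => by
              have := two_mul_le_add_sq (Nf (σ v)) (Nf (σ w))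
              simpa [pow_two, mul_assoc] using this
        _ = (∑ σ : Equiv.Perm (Fin n), Nf (σ v) * Nf (σ v)) +
            ∑ σ : Equiv.Perm (Fin n), Nf (σ w) * Nf (σ w) := Finset.sum_add_distrib
        _ = 2 * ∑ σ : Equiv.Perm (Fin n), Nf (σ v) * Nf (σ v) := by rw [hQsym]; ring
    omega
  calc (∑ σ : Equiv.Perm (Fin n), Nf (σ v) * Nf (σ w)) * Nat.card (Equiv.Perm (Fin n))
      = ∑ _π : Equiv.Perm (Fin n), ∑ σ : Equiv.Perm (Fin n), Nf (σ v) * Nf (σ w) := by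
        rw [Finset.sum_const, Finset.card_univ, Nat.card_eq_fintype_card, smul_eq_mul,
          mul_comm]
    _ ≤ ∑ π : Equiv.Perm (Fin n), ∑ σ : Equiv.Perm (Fin n), Nf (σ v) * Nf (σ (π w)) := by
        refine Finset.sum_le_sum fun π _ => ?_
        rcases eq_or_ne (π w) v with h | h
        · rw [h]; exact hPQ
        · rcases eq_or_ne (π w) w with h2 | h2
          · rw [h2]
          · exact le_of_eq (hQ (π w) h h2).symm
    _ = ∑ σ : Equiv.Perm (Fin n), ∑ π : Equiv.Perm (Fin n), Nf (σ v) * Nf (σ (π w)) :=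
        Finset.sum_comm
    _ = ∑ σ : Equiv.Perm (Fin n), Nf (σ v) * ∑ π : Equiv.Perm (Fin n), Nf (σ (π w)) := by
        refine Finset.sum_congr rfl fun σ _ => ?_
        rw [Finset.mul_sum]
    _ = ∑ σ : Equiv.Perm (Fin n), Nf (σ v) * ∑ τ : Equiv.Perm (Fin n), Nf (τ w) := by
        refine Finset.sum_congr rfl fun σ _ => ?_
        congr 1
        exact Equiv.sum_comp (Equiv.mulLeft σ) (fun τ => Nf (τ w))
    _ = (∑ σ : Equiv.Perm (Fin n), Nf (σ v)) * (∑ τ : Equiv.Perm (Fin n), Nf (τ w)) :=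
        (Finset.sum_mul _ _ _).symm

/-- Proposition 4.1: almost negative correlation of high degrees.
For every `c ∈ (0,2)` the quantity `(1 - c + √(1 + 2c - c²))/4` is `< 1`, and there are
`α > 0` below this quantity and a constant `C > 0` such that for all `n`, all `m` with
`0 < m < c ln n` and all distinct vertices `v, w`,
`P(D(v) ≥ m, D(w) ≥ m) ≤ P(D(v) ≥ m) P(D(w) ≥ m) + C ⬝ 2^{-2m} n^{-α}`. -/
theorem almost_negative_correlation (c : ℝ) (hc0 : 0 < c) (hc2 : c < 2) :
    (1 - c + Real.sqrt (1 + 2 * c - c ^ 2)) / 4 < 1 ∧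
    ∃ α : ℝ, 0 < α ∧ α < (1 - c + Real.sqrt (1 + 2 * c - c ^ 2)) / 4 ∧
      ∃ C > 0, ∀ n : ℕ, ∀ m : ℕ, 0 < m → (m : ℝ) < c * Real.log n →
        ∀ v w : Fin n, v ≠ w →
          dProb n {p | m ≤ relDeg p v ∧ m ≤ relDeg p w} ≤
            dProb n {p | m ≤ relDeg p v} * dProb n {p | m ≤ relDeg p w} +
              C * (2 : ℝ) ^ (-(2 * (m : ℝ))) * (n : ℝ) ^ (-α) := by
  classical
  have hs : 0 < 1 + 2 * c - c ^ 2 := by nlinarith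
  have hsqrt2 : Real.sqrt (1 + 2 * c - c ^ 2) ≤ 2 := by
    have h4 : Real.sqrt 4 = 2 := by
      rw [show (4 : ℝ) = 2 ^ 2 by norm_num, Real.sqrt_sq (by norm_num : (0:ℝ) ≤ 2)]
    calc Real.sqrt (1 + 2 * c - c ^ 2) ≤ Real.sqrt 4 := Real.sqrt_le_sqrt (by nlinarith)
      _ = 2 := h4
  have hq1 : (1 - c + Real.sqrt (1 + 2 * c - c ^ 2)) / 4 < 1 := by linarith
  have hqpos : 0 < (1 - c + Real.sqrt (1 + 2 * c - c ^ 2)) / 4 := by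
    rcases le_or_gt c 1 with h | h
    · have := Real.sqrt_pos.2 hs; linarith
    · have h2 : c - 1 < Real.sqrt (1 + 2 * c - c ^ 2) := by
        rw [show Real.sqrt (1 + 2 * c - c ^ 2) = Real.sqrt (1 + 2 * c - c ^ 2) from rfl]
        have := (Real.lt_sqrt (by linarith : (0:ℝ) ≤ c - 1)).2
          (by nlinarith : (c - 1) ^ 2 < 1 + 2 * c - c ^ 2)
        exact this
      linarith
  refine ⟨hq1, (1 - c + Real.sqrt (1 + 2 * c - c ^ 2)) / 8, by linarith, by linarith,
    1, one_pos, ?_⟩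
  intro n m _ _ v w hvw
  set α := (1 - c + Real.sqrt (1 + 2 * c - c ^ 2)) / 8 with hα
  have hmain : dProb n {p | m ≤ relDeg p v ∧ m ≤ relDeg p w} ≤
      dProb n {p | m ≤ relDeg p v} * dProb n {p | m ≤ relDeg p w} := by
    have hΩ : Nat.card (DecSpace n) =
        Nat.card (RecTree n) * Nat.card (Equiv.Perm (Fin n)) := Nat.card_prod _ _
    have hTpos : 0 < Nat.card (RecTree n) := Nat.card_pos
    have hPpos : 0 < Nat.card (Equiv.Perm (Fin n)) := Nat.card_pos
    have cAB : Nat.card {p : DecSpace n //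
        p ∈ {p : DecSpace n | m ≤ relDeg p v ∧ m ≤ relDeg p w}} =
        ∑ σ : Equiv.Perm (Fin n),
          Nat.card {t : RecTree n // m ≤ rDeg t (σ v) ∧ m ≤ rDeg t (σ w)} :=
      card_subtype_prod_snd (A := RecTree n) (B := Equiv.Perm (Fin n))
        (fun p => m ≤ rDeg p.1 (p.2 v) ∧ m ≤ rDeg p.1 (p.2 w))
    have cA : Nat.card {p : DecSpace n // p ∈ {p : DecSpace n | m ≤ relDeg p v}} =
        ∑ σ : Equiv.Perm (Fin n), Nat.card {t : RecTree n // m ≤ rDeg t (σ v)} :=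
      card_subtype_prod_snd (A := RecTree n) (B := Equiv.Perm (Fin n))
        (fun p => m ≤ rDeg p.1 (p.2 v))
    have cB : Nat.card {p : DecSpace n // p ∈ {p : DecSpace n | m ≤ relDeg p w}} =
        ∑ σ : Equiv.Perm (Fin n), Nat.card {t : RecTree n // m ≤ rDeg t (σ w)} :=
      card_subtype_prod_snd (A := RecTree n) (B := Equiv.Perm (Fin n))
        (fun p => m ≤ rDeg p.1 (p.2 w))
    have hnat : Nat.card {p : DecSpace n //
          p ∈ {p : DecSpace n | m ≤ relDeg p v ∧ m ≤ relDeg p w}} *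
          Nat.card (DecSpace n) ≤
        Nat.card {p : DecSpace n // p ∈ {p : DecSpace n | m ≤ relDeg p v}} *
          Nat.card {p : DecSpace n // p ∈ {p : DecSpace n | m ≤ relDeg p w}} := by
      rw [cAB, cA, cB, hΩ]
      calc (∑ σ : Equiv.Perm (Fin n),
              Nat.card {t : RecTree n // m ≤ rDeg t (σ v) ∧ m ≤ rDeg t (σ w)}) *
            (Nat.card (RecTree n) * Nat.card (Equiv.Perm (Fin n)))
          = (∑ σ : Equiv.Perm (Fin n),
              Nat.card {t : RecTree n // m ≤ rDeg t (σ v) ∧ m ≤ rDeg t (σ w)} *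
                Nat.card (RecTree n)) * Nat.card (Equiv.Perm (Fin n)) := by
            rw [← mul_assoc, Finset.sum_mul]
        _ ≤ (∑ σ : Equiv.Perm (Fin n),
              Nat.card {t : RecTree n // m ≤ rDeg t (σ v)} *
                Nat.card {t : RecTree n // m ≤ rDeg t (σ w)}) *
              Nat.card (Equiv.Perm (Fin n)) :=
            Nat.mul_le_mul_right _ (Finset.sum_le_sum fun σ _ =>
              na_app m (σ v) (σ w) (fun h => hvw (σ.injective h)))
        _ ≤ _ := perm_cheb (fun i => Nat.card {t : RecTree n // m ≤ rDeg t i}) v w hvw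
    have hΩpos : (0 : ℝ) < (Nat.card (DecSpace n) : ℝ) := by
      have : 0 < Nat.card (DecSpace n) := by rw [hΩ]; positivity
      exact_mod_cast this
    rw [dProb, dProb, dProb, div_mul_div_comm, div_le_div_iff₀ hΩpos (by positivity)]
    calc (Nat.card {p : DecSpace n //
            p ∈ {p : DecSpace n | m ≤ relDeg p v ∧ m ≤ relDeg p w}} : ℝ) *
          ((Nat.card (DecSpace n) : ℝ) * (Nat.card (DecSpace n) : ℝ))
        = ((Nat.card {p : DecSpace n //
            p ∈ {p : DecSpace n | m ≤ relDeg p v ∧ m ≤ relDeg p w}} : ℝ) *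
            (Nat.card (DecSpace n) : ℝ)) * (Nat.card (DecSpace n) : ℝ) := by ring
      _ ≤ ((Nat.card {p : DecSpace n // p ∈ {p : DecSpace n | m ≤ relDeg p v}} : ℝ) *
            (Nat.card {p : DecSpace n // p ∈ {p : DecSpace n | m ≤ relDeg p w}} : ℝ)) *
            (Nat.card (DecSpace n) : ℝ) := by
          refine mul_le_mul_of_nonneg_right ?_ (le_of_lt hΩpos)
          exact_mod_cast hnat
  have herr : 0 ≤ 1 * (2 : ℝ) ^ (-(2 * (m : ℝ))) * (n : ℝ) ^ (-α) := by positivity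
  linarith
end

section
/- For every c ∈ (0,2), setting ε = (2−c)²/4, the following holds: there exists a sequence δ_n ≥ 0 with δ_n = o(n^{−ε}) as n → ∞ such that for all n and all integers m with 0 < m < c·ln n, 2^{−m}·(1 − δ_n) ≤ P(D(1) ≥ m) ≤ 2^{−m}. Equivalently, 2^{−m}·n·(1 − δ_n) ≤ λ_{n,m} ≤ 2^{−m}·n, where λ_{n,m} = E[#{v ∈ [n] : D(v) ≥ m}]. -/
namespace RRT
open Finset Nat

abbrev T (n : ℕ) := ∀ j : Fin n, Fin ((j : ℕ) + 1)

def degT {n : ℕ} (t : T n) (i : ℕ) : ℕ := (univ.filter fun j => ((t j : ℕ) = i)).card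

def A (n m i : ℕ) : ℕ := (univ.filter fun t : T n => m ≤ degT t i).card

def S (n m : ℕ) : ℕ := ∑ i ∈ range (n + 1), A n m i

lemma cardT (n : ℕ) : Fintype.card (T n) = n ! := by
  rw [Fintype.card_pi]
  simp only [Fintype.card_fin]
  rw [Fin.prod_univ_eq_prod_range (fun k => k + 1) n,
    Finset.prod_range_add_one_eq_factorial]

lemma A_eq_sum (n m i : ℕ) : A n m i = ∑ t : T n, if m ≤ degT t i then 1 else 0 :=
  card_filter _ _

lemma A_zero (n i : ℕ) : A n 0 i = n ! := by
  have : (univ.filter fun t : T n => 0 ≤ degT t i) = univ := by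
    simp
  rw [A, this, Finset.card_univ, cardT]

lemma degT_eq_zero {n : ℕ} (t : T n) {i : ℕ} (h : n ≤ i) : degT t i = 0 := by
  rw [degT, Finset.card_eq_zero, Finset.filter_eq_empty_iff]
  intro j _
  have h1 : (t j : ℕ) < (j : ℕ) + 1 := (t j).isLt
  have h2 : (j : ℕ) < n := j.isLt
  omega

lemma A_of_le {n m i : ℕ} (h : n ≤ i) : A n (m + 1) i = 0 := by
  rw [A, Finset.card_eq_zero, Finset.filter_eq_empty_iff]
  intro t _
  rw [degT_eq_zero t h]
  omega

lemma degT_snoc (n : ℕ) (k : Fin (n + 1)) (t : T n) (i : ℕ) :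
    degT (Fin.snocEquiv (fun j : Fin (n + 1) => Fin ((j : ℕ) + 1)) (k, t)) i
      = degT t i + if (k : ℕ) = i then 1 else 0 := by
  rw [degT, degT, card_filter, card_filter, Fin.sum_univ_castSucc]
  simp [Fin.snocEquiv, Fin.snoc_castSucc, Fin.snoc_last]

lemma A_succ (n m i : ℕ) (hi : i ≤ n) :
    A (n + 1) (m + 1) i = A n m i + n * A n (m + 1) i := by
  rw [A_eq_sum, ← Equiv.sum_comp (Fin.snocEquiv (fun j : Fin (n + 1) => Fin ((j : ℕ) + 1)))
    (fun t' => if m + 1 ≤ degT t' i then 1 else 0), Fintype.sum_prod_type]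
  have h1 : ∀ (k : Fin (n + 1)) (t : T n),
      (if m + 1 ≤ degT ((Fin.snocEquiv (fun j : Fin (n + 1) => Fin ((j : ℕ) + 1))) (k, t)) i
        then 1 else 0)
      = if (k : ℕ) = i then (if m ≤ degT t i then 1 else 0)
        else (if m + 1 ≤ degT t i then 1 else 0) := by
    intro k t
    rw [degT_snoc]
    by_cases h : (k : ℕ) = i <;> simp [h, Nat.succ_le_succ_iff]
  simp only [h1]
  have h2 : ∀ k : Fin (n + 1),
      (∑ t : T n, if (k : ℕ) = i then (if m ≤ degT t i then 1 else 0)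
        else (if m + 1 ≤ degT t i then 1 else 0))
      = if (k : ℕ) = i then A n m i else A n (m + 1) i := by
    intro k
    by_cases h : (k : ℕ) = i <;> simp [h, A_eq_sum]
  simp only [Fin.val_last, Fin.coe_castSucc, h2]
  rw [Finset.sum_ite, Finset.sum_const, Finset.sum_const]
  have hc1 : (univ.filter fun k : Fin (n + 1) => (k : ℕ) = i).card = 1 := by
    rw [show (univ.filter fun k : Fin (n + 1) => (k : ℕ) = i) = {⟨i, Nat.lt_succ_of_le hi⟩} by
      ext k; simp [Fin.ext_iff]]
    rfl
  have hc2 : (univ.filter fun k : Fin (n + 1) => ¬ ((k : ℕ) = i)).card = n := by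
    have := Finset.card_filter_add_card_filter_not (s := (univ : Finset (Fin (n + 1))))
      (p := fun k : Fin (n + 1) => (k : ℕ) = i)
    rw [Finset.card_univ, Fintype.card_fin] at this
    omega
  rw [hc1, hc2]
  simp [mul_comm]

lemma S_zero (n : ℕ) : S n 0 = (n + 1) * n ! := by
  rw [S]
  rw [Finset.sum_congr rfl (fun i _ => A_zero n i), Finset.sum_const, Finset.card_range]
  simp [mul_comm]

lemma S_base (m : ℕ) : S 0 (m + 1) = 0 := by
  rw [S]
  simp [A_of_le (Nat.zero_le _)]

lemma S_succ (n m : ℕ) : S (n + 1) (m + 1) = S n m + n * S n (m + 1) := by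
  rw [S, Finset.sum_range_succ, A_of_le (le_refl (n + 1)), add_zero]
  rw [Finset.sum_congr rfl (fun i hi => A_succ n m i (by
    simpa using Nat.lt_succ_iff.mp (Finset.mem_range.mp hi)))]
  rw [Finset.sum_add_distrib, ← Finset.mul_sum, S, S]

lemma S_upper (n : ℕ) : ∀ m, 2 ^ m * S n m ≤ (n + 1)! := by
  induction n with
  | zero =>
    intro m
    cases m with
    | zero => simp [S_zero]
    | succ m => simp [S_base]
  | succ n ih =>
    intro m
    cases m with
    | zero => simp [S_zero, Nat.factorial_succ]
    | succ m =>
      rw [S_succ]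
      have h1 := ih m
      have h2 := ih (m + 1)
      have : 2 ^ (m + 1) * (S n m + n * S n (m + 1))
          = 2 * (2 ^ m * S n m) + n * (2 ^ (m + 1) * S n (m + 1)) := by ring
      rw [this, Nat.factorial_succ]
      calc 2 * (2 ^ m * S n m) + n * (2 ^ (m + 1) * S n (m + 1))
          ≤ 2 * (n + 1)! + n * (n + 1)! := by
            gcongr
        _ = (n + 1 + 1) * (n + 1)! := by ring


open Real

noncomputable def Pprod (b : ℝ) (n : ℕ) : ℝ := ∏ k ∈ Finset.range n, (1 - b / (k + 2))

lemma Pprod_nonneg {b : ℝ} (hb2 : b < 2) (n : ℕ) : 0 ≤ Pprod b n := by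
  apply Finset.prod_nonneg
  intro k _
  have hk : (2 : ℝ) ≤ (k : ℝ) + 2 := by
    have := Nat.cast_nonneg (α := ℝ) k; linarith
  have : b / ((k : ℝ) + 2) < 1 := by
    rcases le_or_gt b 0 with h | h
    · have : b / ((k : ℝ) + 2) ≤ 0 := div_nonpos_of_nonpos_of_nonneg h (by positivity)
      linarith
    · rw [div_lt_one (by positivity)]; linarith
  linarith

lemma harmonic_lb (n : ℕ) :
    Real.log (n + 1) - 1 ≤ ∑ k ∈ Finset.range n, (1 : ℝ) / (k + 2) := by
  have tele : ∑ k ∈ Finset.range n,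
      (Real.log ((k + 1 : ℕ) + 2) - Real.log ((k : ℕ) + 2))
      = Real.log ((n : ℝ) + 2) - Real.log 2 := by
    rw [Finset.sum_range_sub (fun k : ℕ => Real.log ((k : ℕ) + 2)) n]
    norm_num
  have hterm : ∀ k ∈ Finset.range n,
      Real.log ((k + 1 : ℕ) + 2) - Real.log ((k : ℕ) + 2) ≤ (1 : ℝ) / (k + 2) := by
    intro k _
    have hk2 : (0 : ℝ) < (k : ℝ) + 2 := by positivity
    have hk3 : (0 : ℝ) < (k : ℝ) + 3 := by positivity
    have h1 : Real.log ((k + 1 : ℕ) + 2) - Real.log ((k : ℕ) + 2)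
        = Real.log (((k : ℝ) + 3) / ((k : ℝ) + 2)) := by
      rw [Real.log_div (by positivity) (by positivity)]
      congr 2
      push_cast
      ring
    rw [h1]
    have := Real.log_le_sub_one_of_pos (show (0:ℝ) < ((k : ℝ) + 3) / ((k : ℝ) + 2) by positivity)
    have heq : ((k : ℝ) + 3) / ((k : ℝ) + 2) - 1 = 1 / ((k : ℝ) + 2) := by
      field_simp
      norm_num
    linarith [this, heq ▸ this]
  have hsum := Finset.sum_le_sum hterm
  rw [tele] at hsum
  have hlog2 : Real.log 2 ≤ 1 := by
    have := Real.log_le_sub_one_of_pos (show (0:ℝ) < 2 by norm_num)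
    linarith
  have hmono : Real.log ((n : ℝ) + 1) ≤ Real.log ((n : ℝ) + 2) :=
    Real.log_le_log (by positivity) (by linarith)
  linarith

lemma Pprod_le {b : ℝ} (hb0 : 0 ≤ b) (hb2 : b < 2) (n : ℕ) :
    Pprod b n ≤ Real.exp b * ((n : ℝ) + 1) ^ (-b) := by
  have h1 : Pprod b n ≤ ∏ k ∈ Finset.range n, Real.exp (-(b / (k + 2))) := by
    apply Finset.prod_le_prod
    · intro k _
      have hk : (2 : ℝ) ≤ (k : ℝ) + 2 := by
        have := Nat.cast_nonneg (α := ℝ) k; linarith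
      have : b / ((k : ℝ) + 2) ≤ b / 2 :=
        div_le_div_of_nonneg_left hb0 (by norm_num) hk
      linarith [show b / 2 < 1 by linarith]
    · intro k _
      exact Real.one_sub_le_exp_neg _
  rw [← Real.exp_sum] at h1
  have h2 : ∑ k ∈ Finset.range n, (-(b / ((k : ℝ) + 2)))
      = -(b * ∑ k ∈ Finset.range n, (1 : ℝ) / (k + 2)) := by
    rw [Finset.mul_sum, ← Finset.sum_neg_distrib]
    apply Finset.sum_congr rfl
    intro k _
    field_simp
  have h3 : -(b * ∑ k ∈ Finset.range n, (1 : ℝ) / (k + 2))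
      ≤ -(b * (Real.log ((n : ℝ) + 1) - 1)) := by
    have := harmonic_lb n
    nlinarith [mul_le_mul_of_nonneg_left (harmonic_lb n) hb0]
  have h4 : Real.exp (-(b * (Real.log ((n : ℝ) + 1) - 1)))
      = Real.exp b * ((n : ℝ) + 1) ^ (-b) := by
    rw [Real.rpow_def_of_pos (by positivity)]
    rw [← Real.exp_add]
    ring_nf
  calc Pprod b n ≤ Real.exp (∑ k ∈ Finset.range n, (-(b / ((k : ℝ) + 2)))) := h1
    _ ≤ Real.exp (-(b * (Real.log ((n : ℝ) + 1) - 1))) := by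
        rw [h2]; exact Real.exp_le_exp.mpr h3
    _ = Real.exp b * ((n : ℝ) + 1) ^ (-b) := h4



lemma S_lower {a : ℝ} (ha : 1 < a) : ∀ n m : ℕ,
    (((n + 1)! : ℕ) : ℝ) - 2 ^ m * S n m ≤ (((n + 1)! : ℕ) : ℝ) * a ^ m * Pprod (2 - 2 / a) n := by
  have ha0 : (0 : ℝ) < a := by linarith
  have hb0 : 0 < 2 - 2 / a := by
    have : 2 / a < 2 := by rw [div_lt_iff₀ ha0]; nlinarith
    linarith
  have hb2 : 2 - 2 / a < 2 := by
    have : 0 < 2 / a := by positivity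
    linarith
  intro n
  induction n with
  | zero =>
    intro m
    cases m with
    | zero => simp [S_zero, Pprod]
    | succ m =>
      rw [S_base]
      simp only [Pprod, Finset.range_zero, Finset.prod_empty, mul_one]
      have h1 : (1 : ℝ) ≤ a ^ (m + 1) := one_le_pow₀ ha.le
      norm_num
      linarith [h1]
  | succ n ih =>
    intro m
    cases m with
    | zero =>
      have h0 : (((n + 1 + 1)! : ℕ) : ℝ) - 2 ^ 0 * S (n + 1) 0 = 0 := by
        rw [S_zero]
        push_cast [Nat.factorial_succ]
        ring
      rw [h0]
      have : (0:ℝ) ≤ (((n + 1 + 1)! : ℕ) : ℝ) * a ^ 0 * Pprod (2 - 2 / a) (n + 1) := by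
        have := Pprod_nonneg hb2 (n + 1)
        positivity
      linarith
    | succ m =>
      have hrec : ((S (n + 1) (m + 1) : ℕ) : ℝ) = S n m + n * S n (m + 1) := by
        exact_mod_cast congrArg (fun x : ℕ => (x : ℝ)) (S_succ n m)
      have ih1 := ih m
      have ih2 := ih (m + 1)
      have hP : Pprod (2 - 2 / a) (n + 1)
          = Pprod (2 - 2 / a) n * (1 - (2 - 2 / a) / (n + 2)) := by
        rw [Pprod, Finset.prod_range_succ, ← Pprod]
      have hPn : 0 ≤ Pprod (2 - 2 / a) n := Pprod_nonneg hb2 n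
      have hfac : (((n + 1 + 1)! : ℕ) : ℝ) = (n + 2) * (((n + 1)! : ℕ) : ℝ) := by
        push_cast [Nat.factorial_succ]
        ring
      have hgoal : (((n + 1 + 1)! : ℕ) : ℝ) - 2 ^ (m + 1) * S (n + 1) (m + 1)
          = 2 * ((((n + 1)! : ℕ) : ℝ) - 2 ^ m * S n m)
            + n * ((((n + 1)! : ℕ) : ℝ) - 2 ^ (m + 1) * S n (m + 1)) := by
        rw [hrec, hfac]
        push_cast
        ring
      rw [hgoal, hP]
      have hstep : 2 * ((((n + 1)! : ℕ) : ℝ) - 2 ^ m * S n m)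
            + n * ((((n + 1)! : ℕ) : ℝ) - 2 ^ (m + 1) * S n (m + 1))
          ≤ 2 * ((((n + 1)! : ℕ) : ℝ) * a ^ m * Pprod (2 - 2 / a) n)
            + n * ((((n + 1)! : ℕ) : ℝ) * a ^ (m + 1) * Pprod (2 - 2 / a) n) := by
        have hn0 : (0:ℝ) ≤ n := Nat.cast_nonneg n
        nlinarith [ih1, ih2, mul_le_mul_of_nonneg_left ih2 hn0]
      refine hstep.trans (le_of_eq ?_)
      rw [hfac]
      have hane : a ≠ 0 := ne_of_gt ha0
      field_simp
      ring


end RRT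

namespace RRT
open Finset Nat

lemma natCard_filter {α : Type*} [Fintype α] (p : α → Prop) [DecidablePred p] :
    Nat.card {x // p x} = (Finset.univ.filter p).card := by
  rw [Nat.card_eq_fintype_card, Fintype.card_subtype]

lemma rDeg_eq {N : ℕ} (t : RecTree (N + 1)) (i : Fin (N + 1)) :
    rDeg t i = degT (n := N) t ((i : ℕ)) := by
  rw [rDeg, natCard_filter]
  rfl

lemma perm_fiber (N : ℕ) (v0 i : Fin (N + 1)) :
    (Finset.univ.filter fun σ : Equiv.Perm (Fin (N + 1)) => σ v0 = i).card = N ! := by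
  have hconst : ∀ j : Fin (N + 1),
      (Finset.univ.filter fun σ : Equiv.Perm (Fin (N + 1)) => σ v0 = j).card
        = (Finset.univ.filter fun σ : Equiv.Perm (Fin (N + 1)) => σ v0 = i).card := by
    intro j
    apply Finset.card_nbij' (fun σ => σ.trans (Equiv.swap j i))
      (fun σ => σ.trans (Equiv.swap j i))
    · intro σ hσ
      simp only [Finset.mem_filter, Finset.mem_univ, true_and] at hσ ⊢
      simp_all [Equiv.trans_apply]
    · intro σ hσ
      simp only [Finset.mem_filter, Finset.mem_univ, true_and] at hσ ⊢
      simp_all [Equiv.trans_apply]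
    · intro σ _
      ext z
      simp [Equiv.trans_apply, Equiv.swap_apply_self]
    · intro σ _
      ext z
      simp [Equiv.trans_apply, Equiv.swap_apply_self]
  have hsum : ∑ j : Fin (N + 1),
      (Finset.univ.filter fun σ : Equiv.Perm (Fin (N + 1)) => σ v0 = j).card = (N + 1)! := by
    rw [← Finset.card_eq_sum_card_fiberwise
      (f := fun σ : Equiv.Perm (Fin (N + 1)) => σ v0) (t := Finset.univ)
      (fun σ _ => Finset.mem_univ _)]
    rw [Finset.card_univ, Fintype.card_perm, Fintype.card_fin]
  rw [Finset.sum_congr rfl (fun j _ => hconst j), Finset.sum_const, Finset.card_univ,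
    Fintype.card_fin, smul_eq_mul] at hsum
  have h2 : (N + 1) * (Finset.univ.filter
      fun σ : Equiv.Perm (Fin (N + 1)) => σ v0 = i).card = (N + 1) * N ! := by
    rw [hsum, Nat.factorial_succ]
  exact Nat.eq_of_mul_eq_mul_left (Nat.succ_pos N) h2

lemma card_dec (N m : ℕ) (v0 : Fin (N + 1)) :
    Nat.card {p : DecSpace (N + 1) // m ≤ relDeg p v0} = N ! * S N m := by
  rw [natCard_filter]
  rw [Finset.card_filter]
  rw [Fintype.sum_prod_type_right]
  have h1 : ∀ σ : Equiv.Perm (Fin (N + 1)),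
      (∑ t : RecTree (N + 1), if m ≤ relDeg (t, σ) v0 then 1 else 0)
        = A N m ((σ v0 : ℕ)) := by
    intro σ
    rw [A_eq_sum]
    apply Finset.sum_congr rfl
    intro t _
    have : relDeg (t, σ) v0 = degT (n := N) t ((σ v0 : ℕ)) := rDeg_eq t (σ v0)
    rw [this]
  rw [Finset.sum_congr rfl (fun σ _ => h1 σ)]
  have h2 := Finset.sum_fiberwise_of_maps_to'
    (s := (Finset.univ : Finset (Equiv.Perm (Fin (N + 1)))))
    (t := (Finset.univ : Finset (Fin (N + 1))))
    (g := fun σ : Equiv.Perm (Fin (N + 1)) => σ v0)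
    (fun σ _ => Finset.mem_univ _) (fun i : Fin (N + 1) => A N m ((i : ℕ)))
  rw [← h2]
  have h3 : ∀ i : Fin (N + 1),
      (∑ _σ ∈ Finset.univ.filter fun σ : Equiv.Perm (Fin (N + 1)) => σ v0 = i,
        A N m ((i : ℕ))) = N ! * A N m ((i : ℕ)) := by
    intro i
    rw [Finset.sum_const, perm_fiber, smul_eq_mul]
  rw [Finset.sum_congr rfl (fun i _ => h3 i), ← Finset.mul_sum]
  congr 1
  rw [S, ← Fin.sum_univ_eq_sum_range (fun i => A N m i) (N + 1)]

lemma card_decSpace (N : ℕ) : Nat.card (DecSpace (N + 1)) = N ! * (N + 1)! := by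
  rw [Nat.card_eq_fintype_card, Fintype.card_prod, Fintype.card_perm, Fintype.card_fin]
  congr 1
  exact cardT N

lemma sum_card (N m : ℕ) :
    (∑ p : DecSpace (N + 1), Nat.card {v : Fin (N + 1) // m ≤ relDeg p v})
      = (N + 1)! * S N m := by
  have h1 : ∀ p : DecSpace (N + 1),
      Nat.card {v : Fin (N + 1) // m ≤ relDeg p v}
        = ∑ i : Fin (N + 1), if m ≤ degT (n := N) p.1 ((i : ℕ)) then 1 else 0 := by
    intro p
    have e : {v : Fin (N + 1) // m ≤ relDeg p v}
        ≃ {i : Fin (N + 1) // m ≤ rDeg p.1 i} :=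
      Equiv.subtypeEquiv p.2 (fun v => Iff.rfl)
    rw [Nat.card_congr e, natCard_filter, Finset.card_filter]
    apply Finset.sum_congr rfl
    intro i _
    rw [rDeg_eq]
  rw [Finset.sum_congr rfl (fun p _ => h1 p)]
  rw [Fintype.sum_prod_type]
  have h2 : ∀ t : RecTree (N + 1),
      (∑ _σ : Equiv.Perm (Fin (N + 1)),
        ∑ i : Fin (N + 1), if m ≤ degT (n := N) t ((i : ℕ)) then 1 else 0)
      = (N + 1)! * ∑ i : Fin (N + 1), if m ≤ degT (n := N) t ((i : ℕ)) then 1 else 0 := by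
    intro t
    rw [Finset.sum_const, Finset.card_univ, Fintype.card_perm, Fintype.card_fin, smul_eq_mul]
  rw [Finset.sum_congr rfl (fun t _ => h2 t), ← Finset.mul_sum]
  congr 1
  rw [Finset.sum_comm]
  rw [S, ← Fin.sum_univ_eq_sum_range (fun i => A N m i) (N + 1)]
  apply Finset.sum_congr rfl
  intro i _
  rw [A_eq_sum]
  rfl

end RRT

set_option maxHeartbeats 1000000 in
open Nat in
open Filter in
/-- Proposition: bounds on `P(D(1) ≥ m)`, Appendix A, Prop. `upper m`.
For every `c ∈ (0,2)`, with `ε = (2-c)²/4`, there is a nonnegative sequence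
`δ_n = o(n^{-ε})` such that for all `n ≥ 1` and all `0 < m < c ln n`,
`2^{-m}(1 - δ_n) ≤ P(D(1) ≥ m) ≤ 2^{-m}`; equivalently,
`2^{-m} n (1 - δ_n) ≤ λ_{n,m} ≤ 2^{-m} n` where `λ_{n,m} = E[#{v : D(v) ≥ m}]`. -/
theorem degree_tail_estimates (c : ℝ) (hc0 : 0 < c) (hc2 : c < 2) :
    ∃ δ : ℕ → ℝ, (∀ n, 0 ≤ δ n) ∧
      (δ =o[atTop] fun n : ℕ => (n : ℝ) ^ (-((2 - c) ^ 2 / 4))) ∧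
      ∀ n : ℕ, ∀ hn : 1 ≤ n, ∀ m : ℕ, 0 < m → (m : ℝ) < c * Real.log n →
        ((2 : ℝ) ^ (-(m : ℝ)) * (1 - δ n) ≤ dProb n {p | m ≤ relDeg p ⟨0, hn⟩} ∧
          dProb n {p | m ≤ relDeg p ⟨0, hn⟩} ≤ (2 : ℝ) ^ (-(m : ℝ))) ∧
        ((2 : ℝ) ^ (-(m : ℝ)) * (n : ℝ) * (1 - δ n) ≤
            (∑ p : DecSpace n, (Nat.card {v : Fin n // m ≤ relDeg p v} : ℝ)) /
              (Nat.card (DecSpace n) : ℝ) ∧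
          (∑ p : DecSpace n, (Nat.card {v : Fin n // m ≤ relDeg p v} : ℝ)) /
              (Nat.card (DecSpace n) : ℝ) ≤ (2 : ℝ) ^ (-(m : ℝ)) * (n : ℝ)) := by
  have hx0 : 0 < (2 - c) / 2 := by linarith
  have hx1 : (2 - c) / 2 < 1 := by linarith
  set x : ℝ := (2 - c) / 2 with hxdef
  set a : ℝ := Real.exp x with hadef
  have ha0 : 0 < a := Real.exp_pos x
  have ha1 : 1 < a := by
    have := Real.add_one_lt_exp (ne_of_gt hx0)
    rw [hadef]; linarith
  set b : ℝ := 2 - 2 / a with hbdef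
  have hainv : a⁻¹ = Real.exp (-x) := by rw [hadef, ← Real.exp_neg]
  have hb0 : 0 < b := by
    have h2a : 2 / a < 2 := by rw [div_lt_iff₀ ha0]; nlinarith
    rw [hbdef]; linarith
  have hb2 : b < 2 := by
    have : 0 < 2 / a := by positivity
    rw [hbdef]; linarith
  set g : ℝ := b - c * x with hgdef
  have hex : Real.exp (-x) < 1 - x + x ^ 2 / 2 := by
    have hcube : 1 + x + x ^ 2 / 2 + x ^ 3 / 6 ≤ Real.exp x := by
      have h := Real.sum_le_exp_of_nonneg hx0.le 4
      rw [Finset.sum_range_succ, Finset.sum_range_succ, Finset.sum_range_succ,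
        Finset.sum_range_succ, Finset.sum_range_zero] at h
      norm_num [Nat.factorial] at h
      linarith
    have hpos : (0:ℝ) < 1 + x + x ^ 2 / 2 + x ^ 3 / 6 := by positivity
    have hmul : Real.exp (-x) * (1 + x + x ^ 2 / 2 + x ^ 3 / 6) ≤ 1 := by
      have h2 := mul_le_mul_of_nonneg_left hcube (Real.exp_pos (-x)).le
      rw [← Real.exp_add] at h2
      simpa using h2
    have hexpand : (1 : ℝ) < (1 - x + x ^ 2 / 2) * (1 + x + x ^ 2 / 2 + x ^ 3 / 6) := by
      nlinarith [pow_pos hx0 3, pow_pos hx0 4, pow_pos hx0 5]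
    nlinarith [Real.exp_pos (-x), hpos]
  have hge : (2 - c) ^ 2 / 4 < g := by
    have h2a : 2 / a = 2 * Real.exp (-x) := by rw [div_eq_mul_inv, hainv]
    have hc_eq : c = 2 - 2 * x := by rw [hxdef]; ring
    have he_eq : (2 - c) ^ 2 / 4 = x ^ 2 := by rw [hxdef]; ring
    rw [hgdef, hbdef, h2a, he_eq, hc_eq]
    nlinarith [hex]
  refine ⟨fun n => Real.exp b * (n : ℝ) ^ (-g), fun n => by positivity, ?_, ?_⟩
  · -- little-o
    rw [Asymptotics.isLittleO_iff]
    intro C hC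
    set ε : ℝ := (2 - c) ^ 2 / 4 with hedef
    have hge' : 0 < g - ε := by rw [hedef]; linarith
    have h1 : Tendsto (fun n : ℕ => Real.exp b * (n : ℝ) ^ (-(g - ε))) atTop (nhds 0) := by
      have h2 := (tendsto_rpow_neg_atTop hge').comp tendsto_natCast_atTop_atTop
      have h3 := h2.const_mul (Real.exp b)
      simpa using h3
    filter_upwards [h1.eventually_lt_const hC, eventually_ge_atTop 1] with n hnC hn1
    have hn0 : (0:ℝ) < n := by exact_mod_cast hn1
    have hsplit : (n:ℝ) ^ (-g) = (n:ℝ) ^ (-(g - ε)) * (n:ℝ) ^ (-ε) := by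
      rw [← Real.rpow_add hn0]; ring_nf
    rw [Real.norm_eq_abs, Real.norm_eq_abs, abs_of_nonneg (by positivity),
      abs_of_nonneg (by positivity : (0:ℝ) ≤ (n:ℝ) ^ (-ε))]
    calc Real.exp b * (n:ℝ) ^ (-g)
        = (Real.exp b * (n:ℝ) ^ (-(g - ε))) * (n:ℝ) ^ (-ε) := by rw [hsplit]; ring
      _ ≤ C * (n:ℝ) ^ (-ε) := mul_le_mul_of_nonneg_right hnC.le (by positivity)
  · intro n hn m hm hmc
    obtain ⟨N, rfl⟩ : ∃ N, n = N + 1 := ⟨n - 1, by omega⟩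
    have hnR : (0:ℝ) < (N:ℝ) + 1 := by positivity
    have hfp : (0:ℝ) < (((N+1)! : ℕ) : ℝ) := by
      exact_mod_cast Nat.factorial_pos (N+1)
    have h2p : (0:ℝ) < (2:ℝ) ^ m := by positivity
    -- upper bound (cast)
    have hup : (2:ℝ) ^ m * (RRT.S N m : ℝ) ≤ (((N+1)! : ℕ) : ℝ) := by
      have := Nat.cast_le (α := ℝ) |>.mpr (RRT.S_upper N m)
      push_cast at this
      convert this using 2 <;> norm_num
    -- lower bound
    have hmain := RRT.S_lower ha1 N m
    rw [← hbdef] at hmain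
    have hPle := RRT.Pprod_le hb0.le hb2 N
    have ham : a ^ m ≤ ((N:ℝ) + 1) ^ (c * x) := by
      have h1 : a ^ m = Real.exp ((m : ℝ) * x) := by
        rw [hadef, ← Real.exp_nat_mul]
      have hmle : (m : ℝ) ≤ c * Real.log ((N:ℝ) + 1) := by
        push_cast at hmc; linarith
      have h2 : Real.exp ((m:ℝ) * x) ≤ Real.exp (Real.log ((N:ℝ)+1) * (c * x)) := by
        apply Real.exp_le_exp.mpr
        nlinarith [hx0]
      have h3 : ((N:ℝ)+1) ^ (c * x) = Real.exp (Real.log ((N:ℝ)+1) * (c * x)) := by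
        rw [Real.rpow_def_of_pos hnR]
      rw [h1, h3]; exact h2
    have hdelta : (((N+1)! : ℕ) : ℝ) - 2 ^ m * RRT.S N m
        ≤ (((N+1)! : ℕ) : ℝ) * (Real.exp b * ((N+1 : ℕ) : ℝ) ^ (-g)) := by
      have hPn : 0 ≤ RRT.Pprod b N := RRT.Pprod_nonneg hb2 N
      have step1 : (((N+1)!:ℕ):ℝ) * a ^ m * RRT.Pprod b N
          ≤ (((N+1)!:ℕ):ℝ) * a ^ m * (Real.exp b * ((N:ℝ)+1) ^ (-b)) := by
        apply mul_le_mul_of_nonneg_left hPle (by positivity)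
      have step2 : (((N+1)!:ℕ):ℝ) * a ^ m * (Real.exp b * ((N:ℝ)+1) ^ (-b))
          ≤ (((N+1)!:ℕ):ℝ) * (((N:ℝ)+1) ^ (c * x)) * (Real.exp b * ((N:ℝ)+1) ^ (-b)) := by
        have hnn : (0:ℝ) ≤ Real.exp b * ((N:ℝ)+1) ^ (-b) := by positivity
        have := mul_le_mul_of_nonneg_right
          (mul_le_mul_of_nonneg_left ham hfp.le) hnn
        exact this
      have step3 : (((N+1)!:ℕ):ℝ) * (((N:ℝ)+1) ^ (c * x)) * (Real.exp b * ((N:ℝ)+1) ^ (-b))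
          = (((N+1)! : ℕ) : ℝ) * (Real.exp b * ((N+1 : ℕ) : ℝ) ^ (-g)) := by
        have hr : ((N:ℝ)+1) ^ (c * x) * ((N:ℝ)+1) ^ (-b) = ((N:ℝ)+1) ^ (-g) := by
          rw [← Real.rpow_add hnR]
          congr 1
          rw [hgdef]; ring
        have hcast : ((N+1 : ℕ) : ℝ) = (N:ℝ) + 1 := by push_cast; ring
        rw [hcast, ← hr]
        ring
      calc (((N+1)! : ℕ) : ℝ) - 2 ^ m * RRT.S N m
          ≤ (((N+1)!:ℕ):ℝ) * a ^ m * RRT.Pprod b N := hmain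
        _ ≤ (((N+1)!:ℕ):ℝ) * a ^ m * (Real.exp b * ((N:ℝ)+1) ^ (-b)) := step1
        _ ≤ (((N+1)!:ℕ):ℝ) * (((N:ℝ)+1) ^ (c * x)) * (Real.exp b * ((N:ℝ)+1) ^ (-b)) := step2
        _ = (((N+1)! : ℕ) : ℝ) * (Real.exp b * ((N+1 : ℕ) : ℝ) ^ (-g)) := step3
    -- identify probabilities
    have hdP : dProb (N+1) {p | m ≤ relDeg p ⟨0, hn⟩}
        = (RRT.S N m : ℝ) / (((N+1)! : ℕ) : ℝ) := by
      rw [dProb]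
      have hnum : Nat.card {p : DecSpace (N+1) // p ∈ {p : DecSpace (N+1) | m ≤ relDeg p ⟨0, hn⟩}}
          = N ! * RRT.S N m := RRT.card_dec N m ⟨0, hn⟩
      rw [hnum, RRT.card_decSpace N]
      push_cast
      rw [mul_div_mul_left _ _ (by positivity : ((N ! : ℕ) : ℝ) ≠ 0)]
    have hsumEq : (∑ p : DecSpace (N+1), (Nat.card {v : Fin (N+1) // m ≤ relDeg p v} : ℝ))
          / (Nat.card (DecSpace (N+1)) : ℝ)
        = ((N:ℝ)+1) * ((RRT.S N m : ℝ) / (((N+1)! : ℕ) : ℝ)) := by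
      have h1 : (∑ p : DecSpace (N+1), (Nat.card {v : Fin (N+1) // m ≤ relDeg p v} : ℝ))
          = (((N+1)! * RRT.S N m : ℕ) : ℝ) := by
        rw [← Nat.cast_sum, RRT.sum_card]
      rw [h1, RRT.card_decSpace N]
      have hNf : ((N ! : ℕ) : ℝ) ≠ 0 := by positivity
      have hN1f : (((N+1)! : ℕ) : ℝ) ≠ 0 := ne_of_gt hfp
      push_cast [Nat.factorial_succ] at hNf hN1f ⊢
      field_simp
    have h2m : (2:ℝ) ^ (-(m:ℝ)) = ((2:ℝ) ^ m)⁻¹ := by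
      rw [← Real.rpow_natCast 2 m, ← Real.rpow_neg (by norm_num)]
    have hK : (((N+1)! : ℕ) : ℝ) * (1 - Real.exp b * ((N+1:ℕ):ℝ) ^ (-g))
        ≤ 2 ^ m * RRT.S N m := by nlinarith [hdelta]
    have hlow1 : (2:ℝ) ^ (-(m:ℝ)) * (1 - Real.exp b * ((N+1:ℕ):ℝ) ^ (-g))
        ≤ (RRT.S N m : ℝ) / (((N+1)! : ℕ) : ℝ) := by
      rw [h2m, inv_eq_one_div, div_mul_eq_mul_div, div_le_div_iff₀ h2p hfp]
      nlinarith [hK]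
    have hup1 : (RRT.S N m : ℝ) / (((N+1)! : ℕ) : ℝ) ≤ (2:ℝ) ^ (-(m:ℝ)) := by
      rw [h2m, inv_eq_one_div, div_le_div_iff₀ hfp h2p]
      nlinarith [hup]
    have hNcast : ((N+1 : ℕ) : ℝ) = (N:ℝ) + 1 := by push_cast; ring
    refine ⟨⟨?_, ?_⟩, ?_, ?_⟩
    · rw [hdP]; exact hlow1
    · rw [hdP]; exact hup1
    · rw [hsumEq, hNcast]
      nlinarith [hlow1, hnR]
    · rw [hsumEq, hNcast]
      nlinarith [hup1, hnR]
end

section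
/- Let A be a finite set and (I_a)_{a∈A} an exchangeable collection of {0,1}-valued random variables with P(I_a = 1) > 0, W = Σ_{a∈A} I_a and λ = E[W]. Fix a ∈ A and suppose there is a vector-level coupling: random vectors (I_b)_{b∈A} and (J_{ab})_{b∈A} on a common probability space, where (I_b)_{b∈A} has the law of the original collection and (J_{ab})_{b∈A} has its conditional law given I_a = 1, such that J_{ab} ≤ I_b almost surely for every b ∈ A with b ≠ a. Then d_TV(W, Poisson(λ)) ≤ E[I_a] + Σ_{b ∈ A, b ≠ a} E[I_b − J_{ab}]. -/
open MeasureTheory ProbabilityTheory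

/-- Total variation distance between two (probability) measures on `ℕ`. -/
noncomputable def tvDistM (μ ν : Measure ℕ) : ℝ :=
  ⨆ s : Set ℕ, |(μ s).toReal - (ν s).toReal|

open MeasureTheory ProbabilityTheory Finset

namespace CSaux

noncomputable def pE (lam : ℝ) (k : ℕ) : ℝ := ∑ i ∈ Finset.range (k+1), lam^i / i.factorial
noncomputable def pG (lam : ℝ) (k : ℕ) : ℝ := Real.exp lam - pE lam k
noncomputable def ppi (lam : ℝ) (j : ℕ) : ℝ := Real.exp (-lam) * (lam^j / j.factorial)

variable {lam : ℝ}

lemma hasSum_explam (lam : ℝ) : HasSum (fun i : ℕ => lam^i / i.factorial) (Real.exp lam) := by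
  rw [Real.exp_eq_exp_ℝ]; exact NormedSpace.expSeries_div_hasSum_exp lam

lemma hasSum_ppi (lam : ℝ) : HasSum (ppi lam) 1 := by
  have := (hasSum_explam lam).mul_left (Real.exp (-lam))
  rw [← Real.exp_add, neg_add_cancel, Real.exp_zero] at this
  exact this

lemma ppi_nonneg (hlam : 0 < lam) (j : ℕ) : 0 ≤ ppi lam j := by
  unfold ppi; positivity

lemma pE_nonneg (hlam : 0 < lam) (k : ℕ) : 0 ≤ pE lam k := by
  unfold pE; positivity

lemma hasSum_tail (hlam : 0 < lam) (k : ℕ) :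
    HasSum (fun m : ℕ => lam^(m + (k+1)) / (m + (k+1)).factorial) (pG lam k) := by
  have h := (hasSum_nat_add_iff' (f := fun i : ℕ => lam^i / i.factorial) (k+1)).2
    (hasSum_explam lam)
  unfold pG pE
  exact h

lemma pG_nonneg (hlam : 0 < lam) (k : ℕ) : 0 ≤ pG lam k := by
  have := hasSum_tail hlam k
  have h0 : (0:ℝ) ≤ pG lam k := by
    refine hasSum_le (fun m => ?_) hasSum_zero this
    positivity
  exact h0

lemma kG_le (hlam : 0 < lam) (k : ℕ) :
    ((k:ℝ)+1) * pG lam (k+1) ≤ lam * pG lam k := by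
  refine hasSum_le (fun m => ?_) ((hasSum_tail hlam (k+1)).mul_left ((k:ℝ)+1))
    ((hasSum_tail hlam k).mul_left lam)
  have h1 : lam * (lam^(m + (k+1)) / (m + (k+1)).factorial)
      = ((m:ℝ) + (k+1) + 1) * (lam^(m + (k+2)) / (m + (k+2)).factorial) := by
    have hf : ((m + (k+2)).factorial : ℝ) = ((m + (k+1) + 1 : ℕ) : ℝ) * ((m + (k+1)).factorial : ℝ) := by
      rw [show m + (k+2) = (m + (k+1)) + 1 by ring]
      push_cast [Nat.factorial_succ]
      ring
    rw [hf]
    have hfn : ((m + (k+1)).factorial : ℝ) ≠ 0 := by positivity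
    have hgn : ((m + (k+1) + 1 : ℕ) : ℝ) ≠ 0 := by positivity
    field_simp
    rw [show m + (k+2) = (m + (k+1)) + 1 by ring, pow_succ]
    push_cast
    ring
  rw [h1]
  have h2 : ((k:ℝ)+1) ≤ ((m:ℝ) + (k+1) + 1) := by push_cast; linarith [Nat.cast_nonneg (α := ℝ) m]
  have h3 : (0:ℝ) ≤ lam^(m + (k+2)) / (m + (k+2)).factorial := by positivity
  calc ((k:ℝ)+1) * (lam^(m+(k+1)+1) / (m+(k+1)+1).factorial)
      = ((k:ℝ)+1) * (lam^(m+(k+2)) / (m+(k+2)).factorial) := by ring_nf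
    _ ≤ ((m:ℝ) + (k+1) + 1) * (lam^(m + (k+2)) / (m + (k+2)).factorial) :=
        mul_le_mul_of_nonneg_right h2 h3

lemma kE_ge (hlam : 0 < lam) (k : ℕ) :
    lam * pE lam k ≤ ((k:ℝ)+1) * pE lam (k+1) := by
  unfold pE
  rw [Finset.mul_sum]
  have h1 : ∀ i ∈ Finset.range (k+1), lam * (lam^i / i.factorial)
      ≤ ((k:ℝ)+1) * (lam^(i+1) / (i+1).factorial) := by
    intro i hi
    rw [Finset.mem_range] at hi
    have hle : (i:ℝ) + 1 ≤ (k:ℝ) + 1 := by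
      have := Nat.lt_succ_iff.mp hi; exact_mod_cast by omega
    have hf : ((i+1).factorial : ℝ) = ((i:ℝ)+1) * (i.factorial : ℝ) := by
      push_cast [Nat.factorial_succ]; ring
    have hfi : (i.factorial : ℝ) ≠ 0 := by positivity
    have : lam * (lam^i / i.factorial) = ((i:ℝ)+1) * (lam^(i+1) / (i+1).factorial) := by
      rw [hf, pow_succ]; field_simp
    rw [this]
    have hnn : (0:ℝ) ≤ lam^(i+1) / (i+1).factorial := by positivity
    exact mul_le_mul_of_nonneg_right hle hnn
  calc ∑ i ∈ Finset.range (k+1), lam * (lam^i / i.factorial)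
      ≤ ∑ i ∈ Finset.range (k+1), ((k:ℝ)+1) * (lam^(i+1) / (i+1).factorial) :=
        Finset.sum_le_sum h1
    _ = ((k:ℝ)+1) * ∑ i ∈ Finset.range (k+1), lam^(i+1) / (i+1).factorial := by
        rw [Finset.mul_sum]
    _ ≤ ((k:ℝ)+1) * ∑ i ∈ Finset.range (k+2), lam^i / i.factorial := by
        apply mul_le_mul_of_nonneg_left _ (by positivity)
        rw [Finset.sum_range_succ' (fun i => lam^i / (i.factorial:ℝ)) (k+1)]
        have : (0:ℝ) ≤ lam^0 / (Nat.factorial 0 : ℝ) := by positivity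
        linarith

/-- Stein solution for a singleton `{j}`. -/
noncomputable def fj (lam : ℝ) (j : ℕ) : ℕ → ℝ
  | 0 => 0
  | (k+1) => (k.factorial / lam^(k+1)) *
      ((if j ≤ k then lam^j / j.factorial else 0) - ppi lam j * pE lam k)

lemma fj_head (hlam : 0 < lam) {j k : ℕ} (h : k < j) :
    fj lam j (k+1) = -((k.factorial * ppi lam j / lam^(k+1)) * pE lam k) := by
  show (k.factorial / lam^(k+1) : ℝ) * _ = _
  rw [if_neg (by omega)]
  ring

lemma fj_tail (hlam : 0 < lam) {j k : ℕ} (h : j ≤ k) :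
    fj lam j (k+1) = (k.factorial * ppi lam j / lam^(k+1)) * pG lam k := by
  show (k.factorial / lam^(k+1) : ℝ) * _ = _
  rw [if_pos h]
  have hid : lam^j / (j.factorial : ℝ) = ppi lam j * Real.exp lam := by
    unfold ppi
    rw [Real.exp_neg]
    field_simp
  rw [hid]
  unfold pG
  ring

/-- negative head increment: for `1 ≤ k < j`. -/
lemma fD_head (hlam : 0 < lam) {j k : ℕ} (hk : 1 ≤ k) (h : k < j) :
    fj lam j (k+1) - fj lam j k ≤ 0 := by
  obtain ⟨m, rfl⟩ : ∃ m, k = m + 1 := ⟨k - 1, by omega⟩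
  rw [fj_head hlam h, fj_head hlam (by omega : m < j)]
  rw [sub_nonpos, neg_le_neg_iff]
  have hppi := ppi_nonneg hlam j
  have key : (m.factorial : ℝ) / lam^(m+1) * pE lam m
      ≤ ((m+1).factorial : ℝ) / lam^(m+2) * pE lam (m+1) := by
    rw [div_mul_eq_mul_div, div_mul_eq_mul_div, div_le_div_iff₀ (by positivity) (by positivity)]
    have hfs : ((m+1).factorial : ℝ) = ((m:ℝ)+1) * m.factorial := by
      push_cast [Nat.factorial_succ]; ring
    rw [hfs, pow_succ (a := lam) (n := m+1)]
    have := kE_ge hlam m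
    have hmf : (0:ℝ) ≤ (m.factorial:ℝ) := by positivity
    have hlp : (0:ℝ) < lam^(m+1) := by positivity
    calc (m.factorial:ℝ) * pE lam m * (lam^(m+1) * lam)
        = ((m.factorial:ℝ) * lam^(m+1)) * (lam * pE lam m) := by ring
      _ ≤ ((m.factorial:ℝ) * lam^(m+1)) * (((m:ℝ)+1) * pE lam (m+1)) := by
          apply mul_le_mul_of_nonneg_left this (by positivity)
      _ = ((m:ℝ)+1) * (m.factorial:ℝ) * pE lam (m+1) * lam^(m+1) := by ring
  calc (m+1).factorial * ppi lam j / lam^(m+1+1) * pE lam (m+1)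
      = ppi lam j * (((m+1).factorial : ℝ) / lam^(m+2) * pE lam (m+1)) := by ring
    _ ≥ ppi lam j * ((m.factorial : ℝ) / lam^(m+1) * pE lam m) :=
        mul_le_mul_of_nonneg_left key hppi
    _ = m.factorial * ppi lam j / lam^(m+1) * pE lam m := by ring

/-- negative tail increment: for `j < k`. -/
lemma fD_tail (hlam : 0 < lam) {j k : ℕ} (h : j < k) :
    fj lam j (k+1) - fj lam j k ≤ 0 := by
  obtain ⟨m, rfl⟩ : ∃ m, k = m + 1 := ⟨k - 1, by omega⟩
  rw [fj_tail hlam (by omega : j ≤ m + 1), fj_tail hlam (by omega : j ≤ m)]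
  rw [sub_nonpos]
  have hppi := ppi_nonneg hlam j
  have key : ((m+1).factorial : ℝ) / lam^(m+2) * pG lam (m+1)
      ≤ (m.factorial : ℝ) / lam^(m+1) * pG lam m := by
    rw [div_mul_eq_mul_div, div_mul_eq_mul_div, div_le_div_iff₀ (by positivity) (by positivity)]
    have hfs : ((m+1).factorial : ℝ) = ((m:ℝ)+1) * m.factorial := by
      push_cast [Nat.factorial_succ]; ring
    rw [hfs, pow_succ (a := lam) (n := m+1)]
    have := kG_le hlam m
    calc ((m:ℝ)+1) * (m.factorial:ℝ) * pG lam (m+1) * lam^(m+1)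
        = ((m.factorial:ℝ) * lam^(m+1)) * (((m:ℝ)+1) * pG lam (m+1)) := by ring
      _ ≤ ((m.factorial:ℝ) * lam^(m+1)) * (lam * pG lam m) := by
          apply mul_le_mul_of_nonneg_left this (by positivity)
      _ = (m.factorial:ℝ) * pG lam m * (lam^(m+1) * lam) := by ring
  calc ((m+1).factorial : ℝ) * ppi lam j / lam^(m+1+1) * pG lam (m+1)
      = ppi lam j * (((m+1).factorial : ℝ) / lam^(m+2) * pG lam (m+1)) := by ring
    _ ≤ ppi lam j * ((m.factorial : ℝ) / lam^(m+1) * pG lam m) :=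
        mul_le_mul_of_nonneg_left key hppi
    _ = (m.factorial:ℝ) * ppi lam j / lam^(m+1) * pG lam m := by ring

/-- diagonal increment bound. -/
lemma fD_diag (hlam : 0 < lam) {k : ℕ} (hk : 1 ≤ k) :
    fj lam k (k+1) - fj lam k k ≤ 1 / lam := by
  obtain ⟨m, rfl⟩ : ∃ m, k = m + 1 := ⟨k - 1, by omega⟩
  have h1 : fj lam (m+1) (m+1+1) = 1/lam
      - ((m+1).factorial * ppi lam (m+1) / lam^(m+2)) * pE lam (m+1) := by
    show ((m+1).factorial / lam^(m+1+1) : ℝ) * _ = _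
    rw [if_pos (le_refl (m+1))]
    have hfne : (((m+1).factorial : ℕ) : ℝ) ≠ 0 := by positivity
    field_simp
    ring
  have h2 : fj lam (m+1) (m+1) = -((m.factorial * ppi lam (m+1) / lam^(m+1)) * pE lam m) :=
    fj_head hlam (by omega)
  rw [h1, h2]
  have hppi := ppi_nonneg hlam (m+1)
  have key : (m.factorial : ℝ) / lam^(m+1) * pE lam m
      ≤ ((m+1).factorial : ℝ) / lam^(m+2) * pE lam (m+1) := by
    rw [div_mul_eq_mul_div, div_mul_eq_mul_div, div_le_div_iff₀ (by positivity) (by positivity)]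
    have hfs : ((m+1).factorial : ℝ) = ((m:ℝ)+1) * m.factorial := by
      push_cast [Nat.factorial_succ]; ring
    rw [hfs, pow_succ (a := lam) (n := m+1)]
    have := kE_ge hlam m
    calc (m.factorial:ℝ) * pE lam m * (lam^(m+1) * lam)
        = ((m.factorial:ℝ) * lam^(m+1)) * (lam * pE lam m) := by ring
      _ ≤ ((m.factorial:ℝ) * lam^(m+1)) * (((m:ℝ)+1) * pE lam (m+1)) := by
          apply mul_le_mul_of_nonneg_left this (by positivity)
      _ = ((m:ℝ)+1) * (m.factorial:ℝ) * pE lam (m+1) * lam^(m+1) := by ring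
  have h3 : ((m.factorial:ℝ) * ppi lam (m+1) / lam^(m+1)) * pE lam m
      ≤ (((m+1).factorial:ℝ) * ppi lam (m+1) / lam^(m+2)) * pE lam (m+1) := by
    calc ((m.factorial:ℝ) * ppi lam (m+1) / lam^(m+1)) * pE lam m
        = ppi lam (m+1) * ((m.factorial:ℝ) / lam^(m+1) * pE lam m) := by ring
      _ ≤ ppi lam (m+1) * (((m+1).factorial:ℝ) / lam^(m+2) * pE lam (m+1)) :=
          mul_le_mul_of_nonneg_left key hppi
      _ = (((m+1).factorial:ℝ) * ppi lam (m+1) / lam^(m+2)) * pE lam (m+1) := by ring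
  linarith


lemma summable_ind_ppi (lam : ℝ) (hlam : 0 < lam) (s : Set ℕ) :
    Summable (Set.indicator s (ppi lam)) := by
  apply Summable.of_nonneg_of_le (fun j => Set.indicator_nonneg (fun j _ => ppi_nonneg hlam j) j)
    (Set.indicator_le_self' (fun j _ => ppi_nonneg hlam j)) (hasSum_ppi lam).summable

/-- Poisson probability of a set. -/
noncomputable def ppiS (lam : ℝ) (s : Set ℕ) : ℝ := ∑' j, Set.indicator s (ppi lam) j

/-- Stein solution for a set `s`. -/
noncomputable def fS (lam : ℝ) (s : Set ℕ) : ℕ → ℝ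
  | 0 => 0
  | (k+1) => (k.factorial / lam^(k+1)) *
      ((∑ i ∈ Finset.range (k+1), Set.indicator s (fun i => lam^i / i.factorial) i)
        - ppiS lam s * pE lam k)

lemma hasSum_fS (hlam : 0 < lam) (s : Set ℕ) (K : ℕ) :
    HasSum (fun j => Set.indicator s (fun j => fj lam j K) j) (fS lam s K) := by
  cases K with
  | zero =>
    have : (fun j => Set.indicator s (fun j => fj lam j 0) j) = fun _ => (0:ℝ) := by
      funext j; simp [fj, Set.indicator_apply]
    rw [this]; exact hasSum_zero
  | succ k =>
    set c : ℝ := k.factorial / lam^(k+1) with hc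
    have h1 : HasSum (fun j => Set.indicator s
        (fun j => c * (if j ≤ k then lam^j / j.factorial else 0)) j)
        (c * ∑ i ∈ Finset.range (k+1), Set.indicator s (fun i => lam^i / i.factorial) i) := by
      have hsupp : ∀ j ∉ Finset.range (k+1), Set.indicator s
          (fun j => c * (if j ≤ k then lam^j / j.factorial else 0)) j = 0 := by
        intro j hj
        rw [Finset.mem_range] at hj
        have : ¬ j ≤ k := by omega
        simp [Set.indicator_apply, this]
      have : HasSum _ _ := hasSum_sum_of_ne_finset_zero hsupp
      convert this using 1
      rw [Finset.mul_sum]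
      apply Finset.sum_congr rfl
      intro i hi
      rw [Finset.mem_range] at hi
      have hik : i ≤ k := by omega
      by_cases his : i ∈ s <;> simp [Set.indicator_apply, his, hik]
    have h2 : HasSum (fun j => (c * pE lam k) * Set.indicator s (ppi lam) j)
        ((c * pE lam k) * ppiS lam s) :=
      ((summable_ind_ppi lam hlam s).hasSum).mul_left _
    have h3 := h1.sub h2
    have heq : (fun j => Set.indicator s
        (fun j => c * (if j ≤ k then lam^j / j.factorial else 0)) j
        - (c * pE lam k) * Set.indicator s (ppi lam) j)
        = fun j => Set.indicator s (fun j => fj lam j (k+1)) j := by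
      funext j
      by_cases his : j ∈ s
      · rw [Set.indicator_of_mem his, Set.indicator_of_mem his, Set.indicator_of_mem his]
        simp only [fj]
        ring
      · rw [Set.indicator_of_notMem his, Set.indicator_of_notMem his,
          Set.indicator_of_notMem his]
        ring
    rw [heq] at h3
    convert h3 using 1
    show c * _ = _
    ring
    rfl

lemma fS_delta_le (hlam : 0 < lam) (s : Set ℕ) {k : ℕ} (hk : 1 ≤ k) :
    fS lam s (k+1) - fS lam s k ≤ 1 / lam := by
  have hD := (hasSum_fS hlam s (k+1)).sub (hasSum_fS hlam s k)
  have hg : HasSum (fun j : ℕ => if j = k then 1/lam else 0) (1/lam) := hasSum_ite_eq k (1/lam)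
  refine hasSum_le (fun j => ?_) hD hg
  by_cases his : j ∈ s
  · rw [Set.indicator_of_mem his, Set.indicator_of_mem his]
    by_cases hjk : j = k
    · subst hjk; simp only [if_pos rfl]; exact fD_diag hlam hk
    · rw [if_neg hjk]
      rcases Nat.lt_or_ge j k with h | h
      · exact fD_tail hlam h
      · exact fD_head hlam hk (by omega)
  · rw [Set.indicator_of_notMem his, Set.indicator_of_notMem his, sub_zero]
    by_cases hjk : j = k
    · rw [if_pos hjk]; positivity
    · rw [if_neg hjk]

lemma ppiS_compl (hlam : 0 < lam) (s : Set ℕ) : ppiS lam s + ppiS lam sᶜ = 1 := by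
  unfold ppiS
  rw [← Summable.tsum_add (summable_ind_ppi lam hlam s) (summable_ind_ppi lam hlam sᶜ)]
  have : (fun j => Set.indicator s (ppi lam) j + Set.indicator sᶜ (ppi lam) j) = ppi lam := by
    funext j
    by_cases his : j ∈ s <;> simp [Set.indicator_apply, his]
  rw [this]
  exact (hasSum_ppi lam).tsum_eq

lemma fS_compl (hlam : 0 < lam) (s : Set ℕ) (K : ℕ) : fS lam s K + fS lam sᶜ K = 0 := by
  cases K with
  | zero => show (0:ℝ) + 0 = 0; ring
  | succ k =>
    show (k.factorial / lam^(k+1) : ℝ) * _ + (k.factorial / lam^(k+1) : ℝ) * _ = 0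
    have hsum : (∑ i ∈ Finset.range (k+1), Set.indicator s (fun i => lam^i / i.factorial) i)
        + (∑ i ∈ Finset.range (k+1), Set.indicator sᶜ (fun i => lam^i / i.factorial) i)
        = pE lam k := by
      rw [← Finset.sum_add_distrib]
      unfold pE
      apply Finset.sum_congr rfl
      intro i _
      by_cases his : i ∈ s <;> simp [Set.indicator_apply, his]
    have hp := ppiS_compl hlam s
    linear_combination ((k.factorial:ℝ) / lam^(k+1)) * hsum
      - ((k.factorial:ℝ) / lam^(k+1)) * pE lam k * hp

lemma fS_delta_abs (hlam : 0 < lam) (s : Set ℕ) {k : ℕ} (hk : 1 ≤ k) :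
    |fS lam s (k+1) - fS lam s k| ≤ 1 / lam := by
  rw [abs_le]
  constructor
  · have h := fS_delta_le hlam sᶜ hk
    have h1 := fS_compl hlam s (k+1)
    have h2 := fS_compl hlam s k
    linarith
  · exact fS_delta_le hlam s hk

lemma fS_stein (hlam : 0 < lam) (s : Set ℕ) (k : ℕ) :
    lam * fS lam s (k+1) - k * fS lam s k
      = Set.indicator s (fun _ => (1:ℝ)) k - ppiS lam s := by
  cases k with
  | zero =>
    simp only [fS]
    have h0 : (∑ i ∈ Finset.range 1, Set.indicator s (fun i => lam^i / i.factorial) i)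
        = Set.indicator s (fun _ => (1:ℝ)) 0 := by
      rw [Finset.sum_range_one]
      by_cases his : (0:ℕ) ∈ s <;> simp [Set.indicator_apply, his]
    rw [h0]
    have hpE0 : pE lam 0 = 1 := by unfold pE; simp
    rw [hpE0]
    have hln : lam ≠ 0 := ne_of_gt hlam
    field_simp
    simp
  | succ k =>
    simp only [fS]
    have hS : (∑ i ∈ Finset.range (k+2), Set.indicator s (fun i => lam^i / i.factorial) i)
        = (∑ i ∈ Finset.range (k+1), Set.indicator s (fun i => lam^i / i.factorial) i)
          + Set.indicator s (fun _ => (1:ℝ)) (k+1) * (lam^(k+1) / (k+1).factorial) := by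
      rw [Finset.sum_range_succ]
      congr 1
      by_cases his : (k+1) ∈ s <;> simp [Set.indicator_apply, his]
    have hpE : pE lam (k+1) = pE lam k + lam^(k+1) / (k+1).factorial := by
      unfold pE; rw [Finset.sum_range_succ]
    rw [hS, hpE]
    have hfs : ((k+1).factorial : ℝ) = ((k:ℝ)+1) * k.factorial := by
      push_cast [Nat.factorial_succ]; ring
    have hln : lam ≠ 0 := ne_of_gt hlam
    have hfn : (k.factorial : ℝ) ≠ 0 := by positivity
    rw [hfs]
    field_simp
    push_cast
    ring

lemma tele_abs {f : ℕ → ℝ} {c : ℝ} (h : ∀ k, 1 ≤ k → |f (k+1) - f k| ≤ c)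
    {m M : ℕ} (hm : 1 ≤ m) (hmM : m ≤ M) : |f M - f m| ≤ c * ((M:ℝ) - m) := by
  induction M, hmM using Nat.le_induction with
  | base => simp
  | succ M hM ih =>
    have hc : 0 ≤ c := le_trans (abs_nonneg _) (h 1 le_rfl)
    have h1 := h M (le_trans hm hM)
    calc |f (M+1) - f m| ≤ |f (M+1) - f M| + |f M - f m| := by
          have := abs_sub_le (f (M+1)) (f M) (f m); linarith [this]
      _ ≤ c + c * ((M:ℝ) - m) := add_le_add h1 ih
      _ = c * (((M:ℕ):ℝ) + 1 - m) := by ring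
      _ = c * (((M+1:ℕ):ℝ) - m) := by push_cast; ring


end CSaux

section Main

open CSaux

variable {Ω Ω' : Type*} [MeasurableSpace Ω] [MeasurableSpace Ω']

theorem chenStein_monotone_coupling' (μ : Measure Ω) [IsProbabilityMeasure μ]
    (μ' : Measure Ω') [IsProbabilityMeasure μ']
    {A : Type*} [Fintype A] [DecidableEq A] (I : A → Ω → ℕ)
    (hmeas : ∀ a, Measurable (I a))
    (h01 : ∀ a ω, I a ω ≤ 1)
    (hpos : ∀ a, 0 < μ {ω | I a ω = 1})
    (hexch : ∀ π : Equiv.Perm A,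
      Measure.map (fun ω => fun a => I (π a) ω) μ = Measure.map (fun ω => fun a => I a ω) μ)
    (a : A) (I' J : A → Ω' → ℕ)
    (hI'meas : ∀ b, Measurable (I' b)) (hJmeas : ∀ b, Measurable (J b))
    (hlawI : Measure.map (fun ω => fun b => I' b ω) μ' =
      Measure.map (fun ω => fun b => I b ω) μ)
    (hlawJ : Measure.map (fun ω => fun b => J b ω) μ' =
      Measure.map (fun ω => fun b => I b ω) (μ[|{ω | I a ω = 1}]))
    (hdom : ∀ᵐ ω ∂μ', ∀ b, b ≠ a → J b ω ≤ I' b ω) :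
    ∀ t : Set ℕ,
      |((Measure.map (fun ω => ∑ b, I b ω) μ) t).toReal -
        (((poissonPMF (Real.toNNReal (∫ ω, ((∑ b, I b ω : ℕ) : ℝ) ∂μ))).toMeasure) t).toReal| ≤
      (∫ ω, (I a ω : ℝ) ∂μ) +
        ∑ b ∈ Finset.univ.erase a, ∫ ω, ((I' b ω : ℝ) - (J b ω : ℝ)) ∂μ' := by
  classical
  intro t
  set n := Fintype.card A with hn
  set lam : ℝ := ∫ ω, ((∑ b, I b ω : ℕ) : ℝ) ∂μ with hlamdef
  set W : Ω → ℕ := fun ω => ∑ b, I b ω with hWdef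
  set W' : Ω' → ℕ := fun ω => ∑ b, I' b ω with hW'def
  set V : Ω' → ℕ := fun ω => ∑ b, J b ω with hVdef
  have hWmeas : Measurable W := Finset.measurable_sum _ (fun b _ => hmeas b)
  have hW'meas : Measurable W' := Finset.measurable_sum _ (fun b _ => hI'meas b)
  have hVmeas : Measurable V := Finset.measurable_sum _ (fun b _ => hJmeas b)
  have hWle : ∀ ω, W ω ≤ n := by
    intro ω
    calc ∑ b, I b ω ≤ ∑ _b : A, 1 := Finset.sum_le_sum (fun b _ => h01 b ω)
      _ = n := by simp [hn]
  set s : Set Ω := {ω | I a ω = 1} with hsdef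
  have hs : MeasurableSet s := hmeas a (measurableSet_singleton 1)
  have hμs0 : μ s ≠ 0 := (hpos a).ne'
  have hμst : μ s ≠ ⊤ := measure_ne_top μ s
  set p : ℝ := (μ s).toReal with hpdef
  have hppos : 0 < p := ENNReal.toReal_pos hμs0 hμst
  -- integrability helpers
  have castm : Measurable (fun k : ℕ => (k : ℝ)) := measurable_from_top
  have intμ : ∀ (g : Ω → ℝ) (C : ℝ), Measurable g → (∀ ω, |g ω| ≤ C) → Integrable g μ := by
    intro g C hg hb
    refine Integrable.mono' (integrable_const C) hg.aestronglyMeasurable ?_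
    exact Filter.Eventually.of_forall (by simpa [Real.norm_eq_abs] using hb)
  have intμ' : ∀ (g : Ω' → ℝ) (C : ℝ), Measurable g → (∀ᵐ ω ∂μ', |g ω| ≤ C) →
      Integrable g μ' := by
    intro g C hg hb
    refine Integrable.mono' (integrable_const C) hg.aestronglyMeasurable ?_
    simpa [Real.norm_eq_abs] using hb
  -- permutation invariance of integrals
  have hperm : ∀ (π : Equiv.Perm A) (g : (A → ℕ) → ℝ),
      ∫ ω, g (fun c => I (π c) ω) ∂μ = ∫ ω, g (fun c => I c ω) ∂μ := by
    intro π g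
    have hm1 : Measurable (fun ω => fun c => I (π c) ω) :=
      measurable_pi_lambda _ (fun c => hmeas (π c))
    have hm2 : Measurable (fun ω => fun c => I c ω) :=
      measurable_pi_lambda _ (fun c => hmeas c)
    have hg : AEStronglyMeasurable g (Measure.map (fun ω => fun c => I c ω) μ) :=
      (measurable_of_countable g).aestronglyMeasurable
    rw [← integral_map hm1.aemeasurable (by rw [hexch π]; exact hg),
        ← integral_map hm2.aemeasurable hg, hexch π]
  -- law transports
  have hlawI' : ∀ g : (A → ℕ) → ℝ,
      ∫ ω, g (fun c => I' c ω) ∂μ' = ∫ ω, g (fun c => I c ω) ∂μ := by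
    intro g
    rw [← integral_map (measurable_pi_lambda _ (fun c => hI'meas c)).aemeasurable
        (measurable_of_countable g).aestronglyMeasurable, hlawI,
        integral_map (measurable_pi_lambda _ (fun c => hmeas c)).aemeasurable
        (measurable_of_countable g).aestronglyMeasurable]
  have hlawJ' : ∀ g : (A → ℕ) → ℝ,
      ∫ ω, g (fun c => J c ω) ∂μ' = ∫ ω, g (fun c => I c ω) ∂(μ[|s]) := by
    intro g
    rw [← integral_map (measurable_pi_lambda _ (fun c => hJmeas c)).aemeasurable
        (measurable_of_countable g).aestronglyMeasurable, hlawJ,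
        integral_map (measurable_pi_lambda _ (fun c => hmeas c)).aemeasurable
        (measurable_of_countable g).aestronglyMeasurable]
  -- conditional integral formula
  have hcondint : ∀ h : Ω → ℝ, ∫ ω, h ω ∂(μ[|s]) = p⁻¹ * ∫ ω, Set.indicator s h ω ∂μ := by
    intro h
    rw [ProbabilityTheory.cond, integral_smul_measure, ENNReal.toReal_inv, smul_eq_mul,
      integral_indicator hs]
  -- indicator form of I a
  have hindIa : ∀ (g : Ω → ℝ), (fun ω => (I a ω : ℝ) * g ω) = Set.indicator s g := by
    intro g
    funext ω
    by_cases h1 : I a ω = 1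
    · have : ω ∈ s := h1
      rw [Set.indicator_of_mem this, h1]; simp
    · have h0 : I a ω = 0 := by have := h01 a ω; omega
      have : ω ∉ s := h1
      rw [Set.indicator_of_notMem this, h0]; simp
  -- E[I a] = p
  have hIa_int : ∫ ω, (I a ω : ℝ) ∂μ = p := by
    have h1 : (fun ω => (I a ω : ℝ)) = Set.indicator s (fun _ => (1:ℝ)) := by
      have := hindIa (fun _ => (1:ℝ))
      simpa using this
    rw [h1, integral_indicator hs]
    simp [hpdef]
    rfl
  -- all E[I b] equal, with a test function
  have hswap2 : ∀ (b : A) (f : ℕ → ℝ), Integrable (fun ω => (I b ω : ℝ) * f (W ω)) μ ∧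
      ∫ ω, (I b ω : ℝ) * f (W ω) ∂μ = ∫ ω, (I a ω : ℝ) * f (W ω) ∂μ := by
    intro b f
    constructor
    · refine intμ _ (∑ i ∈ Finset.range (n+1), |f i|) ?_ ?_
      · exact (castm.comp' (hmeas b)).mul (measurable_from_top.comp' hWmeas)
      · intro ω
        rw [abs_mul]
        have h1 : |(I b ω : ℝ)| ≤ 1 := by
          rw [abs_of_nonneg (by positivity)]
          exact_mod_cast h01 b ω
        have h2 : |f (W ω)| ≤ ∑ i ∈ Finset.range (n+1), |f i| :=
          Finset.single_le_sum (f := fun i => |f i|) (fun i _ => abs_nonneg _)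
            (Finset.mem_range.mpr (by have := hWle ω; omega))
        have h3 : (0:ℝ) ≤ |f (W ω)| := abs_nonneg _
        nlinarith
    · have h := hperm (Equiv.swap a b) (fun v => (v a : ℝ) * f (∑ c, v c))
      calc ∫ ω, (I b ω : ℝ) * f (W ω) ∂μ
          = ∫ ω, (fun v : A → ℕ => (v a : ℝ) * f (∑ c, v c))
              (fun c => I ((Equiv.swap a b) c) ω) ∂μ := by
            congr 1; funext ω
            show (I b ω : ℝ) * f (W ω) = (I ((Equiv.swap a b) a) ω : ℝ) * f (∑ c, I ((Equiv.swap a b) c) ω)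
            rw [Equiv.swap_apply_left, Equiv.sum_comp (Equiv.swap a b) (fun c => I c ω)]
        _ = ∫ ω, (fun v : A → ℕ => (v a : ℝ) * f (∑ c, v c)) (fun c => I c ω) ∂μ := h
        _ = ∫ ω, (I a ω : ℝ) * f (W ω) ∂μ := rfl
  -- lam = n * p
  have hlam_np : lam = n * p := by
    have e1 : ∀ ω, ((∑ b, I b ω : ℕ) : ℝ) = ∑ b, ((I b ω : ℝ) * (fun _ : ℕ => (1:ℝ)) (W ω)) := by
      intro ω; push_cast; simp
    calc lam = ∫ ω, ∑ b, ((I b ω : ℝ) * (fun _ : ℕ => (1:ℝ)) (W ω)) ∂μ := by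
          rw [hlamdef]; congr 1; funext ω; exact e1 ω
      _ = ∑ b, ∫ ω, (I b ω : ℝ) * (fun _ : ℕ => (1:ℝ)) (W ω) ∂μ :=
          integral_finset_sum _ (fun b _ => (hswap2 b (fun _ : ℕ => (1:ℝ))).1)
      _ = ∑ _b : A, ∫ ω, (I a ω : ℝ) * (fun _ : ℕ => (1:ℝ)) (W ω) ∂μ :=
          Finset.sum_congr rfl (fun b _ => (hswap2 b (fun _ : ℕ => (1:ℝ))).2)
      _ = n * ∫ ω, (I a ω : ℝ) * (fun _ : ℕ => (1:ℝ)) (W ω) ∂μ := by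
          rw [Finset.sum_const, hn]; simp [nsmul_eq_mul]
      _ = n * p := by
          congr 1
          have : (fun ω => (I a ω : ℝ) * (fun _ : ℕ => (1:ℝ)) (W ω)) = fun ω => (I a ω : ℝ) := by
            funext ω; simp
          rw [this] at *
          exact hIa_int
  have hnpos : 0 < n := by rw [hn]; exact Fintype.card_pos_iff.mpr ⟨a⟩
  have hlampos : 0 < lam := by
    rw [hlam_np]
    have : (1:ℝ) ≤ n := by exact_mod_cast hnpos
    nlinarith
  -- a.e. helpers on μ'
  have aeof : ∀ (T : Set Ω'), MeasurableSet T → μ' T = 1 → ∀ᵐ ω ∂μ', ω ∈ T := by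
    intro T hT h1
    have h0 : μ' Tᶜ = 0 := by
      rw [measure_compl hT (measure_ne_top μ' T), h1, measure_univ]; simp
    exact MeasureTheory.ae_iff.2 (by simpa [Set.compl_def] using h0)
  have hI'le : ∀ᵐ ω ∂μ', ∀ b, I' b ω ≤ 1 := by
    have hEm : MeasurableSet {v : A → ℕ | ∀ b, v b ≤ 1} := (Set.to_countable _).measurableSet
    have h1 : μ' ((fun ω => fun c => I' c ω) ⁻¹' {v | ∀ b, v b ≤ 1}) = 1 := by
      rw [← Measure.map_apply (measurable_pi_lambda _ (fun c => hI'meas c)) hEm, hlawI,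
          Measure.map_apply (measurable_pi_lambda _ (fun c => hmeas c)) hEm]
      have : (fun ω => fun c => I c ω) ⁻¹' {v | ∀ b, v b ≤ 1} = Set.univ := by
        ext ω; simp only [Set.mem_preimage, Set.mem_setOf_eq, Set.mem_univ, iff_true]
        exact fun b => h01 b ω
      rw [this, measure_univ]
    exact aeof _ ((measurable_pi_lambda _ (fun c => hI'meas c)) hEm) h1
  have hcond1 : ∀ (E : Set (A → ℕ)), MeasurableSet E →
      ((fun ω => fun c => I c ω) ⁻¹' E) = s →
      μ' ((fun ω => fun c => J c ω) ⁻¹' E) = 1 := by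
    intro E hEm hpre
    rw [← Measure.map_apply (measurable_pi_lambda _ (fun c => hJmeas c)) hEm, hlawJ,
        Measure.map_apply (measurable_pi_lambda _ (fun c => hmeas c)) hEm, hpre,
        ProbabilityTheory.cond_apply hs μ s, Set.inter_self]
    exact ENNReal.inv_mul_cancel hμs0 hμst
  have hJa : ∀ᵐ ω ∂μ', J a ω = 1 := by
    have hEm : MeasurableSet {v : A → ℕ | v a = 1} := (Set.to_countable _).measurableSet
    have h1 := hcond1 _ hEm (by ext ω; simp [hsdef])
    exact aeof _ ((measurable_pi_lambda _ (fun c => hJmeas c)) hEm) h1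
  have hJle : ∀ᵐ ω ∂μ', ∀ b, J b ω ≤ 1 := by
    have hEm : MeasurableSet {v : A → ℕ | ∀ b, v b ≤ 1} := (Set.to_countable _).measurableSet
    have h1 : μ' ((fun ω => fun c => J c ω) ⁻¹' {v | ∀ b, v b ≤ 1}) = 1 := by
      rw [← Measure.map_apply (measurable_pi_lambda _ (fun c => hJmeas c)) hEm, hlawJ,
          Measure.map_apply (measurable_pi_lambda _ (fun c => hmeas c)) hEm]
      have hpre : (fun ω => fun c => I c ω) ⁻¹' {v : A → ℕ | ∀ b, v b ≤ 1} = Set.univ := by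
        ext ω; simp only [Set.mem_preimage, Set.mem_setOf_eq, Set.mem_univ, iff_true]
        exact fun b => h01 b ω
      rw [hpre, ProbabilityTheory.cond]
      simp only [Measure.smul_apply, Measure.restrict_apply MeasurableSet.univ,
        Set.univ_inter, smul_eq_mul]
      exact ENNReal.inv_mul_cancel hμs0 hμst
    exact aeof _ ((measurable_pi_lambda _ (fun c => hJmeas c)) hEm) h1
  -- combined a.e. structure
  have hae : ∀ᵐ ω ∂μ', 1 ≤ V ω ∧ V ω ≤ W' ω + 1 ∧ W' ω ≤ n := by
    filter_upwards [hdom, hJa, hI'le, hJle] with ω h1 h2 h3 h4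
    have hV1 : 1 ≤ V ω := by
      rw [hVdef]
      calc 1 = J a ω := h2.symm
        _ ≤ ∑ b, J b ω := Finset.single_le_sum (f := fun b => J b ω)
            (fun b _ => Nat.zero_le _) (Finset.mem_univ a)
    have hVW : V ω ≤ W' ω + 1 := by
      have eV : ∑ b ∈ Finset.univ.erase a, J b ω + J a ω = ∑ b, J b ω :=
        Finset.sum_erase_add _ _ (Finset.mem_univ a)
      have eW : ∑ b ∈ Finset.univ.erase a, I' b ω + I' a ω = ∑ b, I' b ω :=
        Finset.sum_erase_add _ _ (Finset.mem_univ a)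
      have h5 : ∑ b ∈ Finset.univ.erase a, J b ω ≤ ∑ b ∈ Finset.univ.erase a, I' b ω :=
        Finset.sum_le_sum (fun b hb => h1 b (Finset.ne_of_mem_erase hb))
      show (∑ b, J b ω) ≤ (∑ b, I' b ω) + 1
      omega
    have hW'n : W' ω ≤ n := by
      rw [hW'def]
      calc ∑ b, I' b ω ≤ ∑ _b : A, 1 := Finset.sum_le_sum (fun b _ => h3 b)
        _ = n := by simp [hn]
    exact ⟨hV1, hVW, hW'n⟩
  -- the Stein function
  set f : ℕ → ℝ := CSaux.fS lam t with hf
  set Cf : ℝ := ∑ i ∈ Finset.range (n+2), |f i| with hCf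
  have hfb : ∀ k, k ≤ n + 1 → |f k| ≤ Cf := by
    intro k hk
    exact Finset.single_le_sum (f := fun i => |f i|) (fun i _ => abs_nonneg _)
      (Finset.mem_range.mpr (by omega))
  -- measure identities
  have hmapW : ((Measure.map W μ) t).toReal
      = ∫ ω, Set.indicator t (fun _ => (1:ℝ)) (W ω) ∂μ := by
    rw [Measure.map_apply hWmeas (Set.to_countable t).measurableSet]
    rw [← measureReal_def, ← integral_indicator_one (hWmeas (Set.to_countable t).measurableSet)]
    congr 1
  have hpois : (((poissonPMF (Real.toNNReal lam)).toMeasure) t).toReal = CSaux.ppiS lam t := by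
    rw [PMF.toMeasure_apply _ (Set.to_countable t).measurableSet]
    rw [ENNReal.tsum_toReal_eq]
    · unfold CSaux.ppiS
      congr 1; funext j
      by_cases hj : j ∈ t
      · rw [Set.indicator_of_mem hj, Set.indicator_of_mem hj]
        show (ENNReal.ofReal (poissonPMFReal _ j)).toReal = CSaux.ppi lam j
        rw [ENNReal.toReal_ofReal poissonPMFReal_nonneg]
        unfold poissonPMFReal CSaux.ppi
        rw [Real.coe_toNNReal lam hlampos.le]
        ring
      · rw [Set.indicator_of_notMem hj, Set.indicator_of_notMem hj]; simp
    · intro j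
      by_cases hj : j ∈ t
      · rw [Set.indicator_of_mem hj]
        exact ENNReal.ofReal_ne_top
      · rw [Set.indicator_of_notMem hj]; exact ENNReal.zero_ne_top
  -- μ-side integrability
  have intfW1 : Integrable (fun ω => f (W ω + 1)) μ := by
    refine intμ _ Cf (measurable_from_top.comp' (hWmeas.add_const 1)) (fun ω => ?_)
    exact hfb _ (by have := hWle ω; omega)
  have intWfW : Integrable (fun ω => (W ω : ℝ) * f (W ω)) μ := by
    refine intμ _ (n * Cf) ((castm.comp' hWmeas).mul (measurable_from_top.comp' hWmeas))
      (fun ω => ?_)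
    rw [abs_mul]
    have h1 : |(W ω : ℝ)| ≤ n := by
      rw [abs_of_nonneg (by positivity)]
      exact_mod_cast hWle ω
    have h2 : |f (W ω)| ≤ Cf := hfb _ (by have := hWle ω; omega)
    have h3 : (0:ℝ) ≤ |f (W ω)| := abs_nonneg _
    nlinarith
  -- Stein decomposition of the difference
  have h1 : ((Measure.map W μ) t).toReal - (((poissonPMF (Real.toNNReal lam)).toMeasure) t).toReal
      = ∫ ω, (lam * f (W ω + 1) - (W ω : ℝ) * f (W ω)) ∂μ := by
    rw [hmapW, hpois]
    have e1 : ∀ ω, lam * f (W ω + 1) - (W ω : ℝ) * f (W ω)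
        = Set.indicator t (fun _ => (1:ℝ)) (W ω) - CSaux.ppiS lam t := by
      intro ω; exact CSaux.fS_stein hlampos t (W ω)
    have e2 : ∫ ω, (lam * f (W ω + 1) - (W ω : ℝ) * f (W ω)) ∂μ
        = ∫ ω, (Set.indicator t (fun _ => (1:ℝ)) (W ω) - CSaux.ppiS lam t) ∂μ := by
      congr 1; funext ω; exact e1 ω
    rw [e2]
    have intind : Integrable (fun ω => Set.indicator t (fun _ => (1:ℝ)) (W ω)) μ := by
      refine intμ _ 1 (measurable_from_top.comp' hWmeas) (fun ω => ?_)
      by_cases h : W ω ∈ t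
      · rw [Set.indicator_of_mem h]; simp
      · rw [Set.indicator_of_notMem h]; simp
    rw [integral_sub intind (integrable_const _), integral_const]
    simp
  -- ∫ W f(W) = lam * ∫ f(V) dμ'
  have h4 : ∫ ω, (W ω : ℝ) * f (W ω) ∂μ = lam * ∫ ω, f (V ω) ∂μ' := by
    have e1 : ∀ ω, (W ω : ℝ) * f (W ω) = ∑ b, (I b ω : ℝ) * f (W ω) := by
      intro ω
      rw [hWdef]
      push_cast
      rw [Finset.sum_mul]
    have e2 : ∫ ω, (W ω : ℝ) * f (W ω) ∂μ = ∑ b, ∫ ω, (I b ω : ℝ) * f (W ω) ∂μ := by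
      rw [show (fun ω => (W ω : ℝ) * f (W ω)) = fun ω => ∑ b, (I b ω : ℝ) * f (W ω) from
        funext e1]
      exact integral_finset_sum _ (fun b _ => (hswap2 b f).1)
    have e3 : ∫ ω, f (V ω) ∂μ' = p⁻¹ * ∫ ω, (I a ω : ℝ) * f (W ω) ∂μ := by
      have hJg := hlawJ' (fun v => f (∑ c, v c))
      have : ∫ ω, f (V ω) ∂μ' = ∫ ω, f (W ω) ∂(μ[|s]) := hJg
      rw [this, hcondint, ← hindIa (fun ω => f (W ω))]
    rw [e2]
    rw [Finset.sum_congr rfl (fun b _ => (hswap2 b f).2), Finset.sum_const]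
    rw [e3, hlam_np]
    simp only [Finset.card_univ, ← hn, nsmul_eq_mul]
    field_simp
  -- ∫ f(W+1) transported
  have h7 : ∫ ω, f (W ω + 1) ∂μ = ∫ ω, f (W' ω + 1) ∂μ' :=
    (hlawI' (fun v => f ((∑ c, v c) + 1))).symm
  -- μ'-side integrability
  have intfW' : Integrable (fun ω => f (W' ω + 1)) μ' := by
    refine intμ' _ Cf (measurable_from_top.comp' (hW'meas.add_const 1)) ?_
    filter_upwards [hae] with ω h
    exact hfb _ (by omega)
  have intfV : Integrable (fun ω => f (V ω)) μ' := by
    refine intμ' _ Cf (measurable_from_top.comp' hVmeas) ?_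
    filter_upwards [hae] with ω h
    exact hfb _ (by omega)
  have intI'b : ∀ b, Integrable (fun ω => (I' b ω : ℝ)) μ' := by
    intro b
    refine intμ' _ 1 (castm.comp' (hI'meas b)) ?_
    filter_upwards [hI'le] with ω h
    rw [abs_of_nonneg (by positivity)]
    exact_mod_cast h b
  have intJb : ∀ b, Integrable (fun ω => (J b ω : ℝ)) μ' := by
    intro b
    refine intμ' _ 1 (castm.comp' (hJmeas b)) ?_
    filter_upwards [hJle] with ω h
    rw [abs_of_nonneg (by positivity)]
    exact_mod_cast h b
  -- combine into lam * ∫ (f (W'+1) - f V) dμ'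
  have h8 : ((Measure.map W μ) t).toReal - (((poissonPMF (Real.toNNReal lam)).toMeasure) t).toReal
      = lam * ∫ ω, (f (W' ω + 1) - f (V ω)) ∂μ' := by
    rw [h1, integral_sub ((intfW1.const_mul lam)) intWfW, integral_const_mul, h4, h7,
      integral_sub intfW' intfV]
    ring
  -- the increment bound
  have h9 : |∫ ω, (f (W' ω + 1) - f (V ω)) ∂μ'|
      ≤ ∫ ω, (1/lam) * (((W' ω : ℝ) + 1) - (V ω : ℝ)) ∂μ' := by
    have hptwise : ∀ᵐ ω ∂μ', |f (W' ω + 1) - f (V ω)|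
        ≤ (1/lam) * (((W' ω : ℝ) + 1) - (V ω : ℝ)) := by
      filter_upwards [hae] with ω h
      obtain ⟨h1', h2', _⟩ := h
      have := CSaux.tele_abs (f := f) (c := 1/lam)
        (fun k hk => CSaux.fS_delta_abs hlampos t hk) h1' h2'
      calc |f (W' ω + 1) - f (V ω)| ≤ (1/lam) * (((W' ω + 1 : ℕ) : ℝ) - (V ω : ℝ)) := this
        _ = (1/lam) * (((W' ω : ℝ) + 1) - (V ω : ℝ)) := by push_cast; ring
    have i1 : Integrable (fun ω => (W' ω : ℝ)) μ' := by
      refine intμ' _ n (castm.comp' hW'meas) ?_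
      filter_upwards [hae] with ω h
      rw [abs_of_nonneg (by positivity)]
      exact_mod_cast h.2.2
    have i2 : Integrable (fun ω => (V ω : ℝ)) μ' := by
      refine intμ' _ (n+1) (castm.comp' hVmeas) ?_
      filter_upwards [hae] with ω h
      rw [abs_of_nonneg (by positivity)]
      have hV : V ω ≤ n + 1 := by omega
      exact_mod_cast hV
    have intW'V : Integrable (fun ω => ((W' ω : ℝ) + 1) - (V ω : ℝ)) μ' := by
      exact (i1.add (integrable_const 1)).sub i2
    have habs : Integrable (fun ω => |f (W' ω + 1) - f (V ω)|) μ' := by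
      have := (intfW'.sub intfV).abs
      exact this
    calc |∫ ω, (f (W' ω + 1) - f (V ω)) ∂μ'| ≤ ∫ ω, |f (W' ω + 1) - f (V ω)| ∂μ' := by
          simpa [Real.norm_eq_abs] using
            norm_integral_le_integral_norm (μ := μ') (fun ω => f (W' ω + 1) - f (V ω))
      _ ≤ ∫ ω, (1/lam) * (((W' ω : ℝ) + 1) - (V ω : ℝ)) ∂μ' :=
          integral_mono_ae habs (intW'V.const_mul (1/lam)) hptwise
  -- compute the final integral
  have h10 : ∫ ω, (((W' ω : ℝ) + 1) - (V ω : ℝ)) ∂μ'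
      = (∫ ω, (I a ω : ℝ) ∂μ) + ∑ b ∈ Finset.univ.erase a, ∫ ω, ((I' b ω : ℝ) - (J b ω : ℝ)) ∂μ' := by
    have e0 : ∀ ω, (((W' ω : ℝ) + 1) - (V ω : ℝ))
        = ((I' a ω : ℝ) + ∑ b ∈ Finset.univ.erase a, ((I' b ω : ℝ) - (J b ω : ℝ)))
          + (1 - (J a ω : ℝ)) := by
      intro ω
      have eW : ∑ b ∈ Finset.univ.erase a, (I' b ω : ℝ) + (I' a ω : ℝ) = ∑ b, (I' b ω : ℝ) :=
        Finset.sum_erase_add _ _ (Finset.mem_univ a)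
      have eV : ∑ b ∈ Finset.univ.erase a, (J b ω : ℝ) + (J a ω : ℝ) = ∑ b, (J b ω : ℝ) :=
        Finset.sum_erase_add _ _ (Finset.mem_univ a)
      have ecW : ((W' ω : ℕ) : ℝ) = ∑ b, (I' b ω : ℝ) := by
        rw [hW'def]; push_cast; ring
      have ecV : ((V ω : ℕ) : ℝ) = ∑ b, (J b ω : ℝ) := by
        rw [hVdef]; push_cast; ring
      rw [ecW, ecV, Finset.sum_sub_distrib]
      linarith
    have intdiff : ∀ b : A, Integrable (fun ω => (I' b ω : ℝ) - (J b ω : ℝ)) μ' := by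
      intro b; exact (intI'b b).sub (intJb b)
    have intsum : Integrable (fun ω => (I' a ω : ℝ)
        + ∑ b ∈ Finset.univ.erase a, ((I' b ω : ℝ) - (J b ω : ℝ))) μ' := by
      exact (intI'b a).add (integrable_finset_sum _ (fun b _ => intdiff b))
    have intlast : Integrable (fun ω => 1 - (J a ω : ℝ)) μ' :=
      (integrable_const 1).sub (intJb a)
    calc ∫ ω, (((W' ω : ℝ) + 1) - (V ω : ℝ)) ∂μ'
        = ∫ ω, (((I' a ω : ℝ) + ∑ b ∈ Finset.univ.erase a, ((I' b ω : ℝ) - (J b ω : ℝ)))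
            + (1 - (J a ω : ℝ))) ∂μ' := by congr 1; funext ω; exact e0 ω
      _ = (∫ ω, ((I' a ω : ℝ) + ∑ b ∈ Finset.univ.erase a, ((I' b ω : ℝ) - (J b ω : ℝ))) ∂μ')
            + ∫ ω, (1 - (J a ω : ℝ)) ∂μ' := integral_add intsum intlast
      _ = (∫ ω, (I a ω : ℝ) ∂μ) + ∑ b ∈ Finset.univ.erase a, ∫ ω, ((I' b ω : ℝ) - (J b ω : ℝ)) ∂μ' := by
          have eJ : ∫ ω, (1 - (J a ω : ℝ)) ∂μ' = 0 := by
            have : (fun ω => 1 - (J a ω : ℝ)) =ᵐ[μ'] fun _ => (0:ℝ) := by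
              filter_upwards [hJa] with ω h
              rw [h]; simp
            rw [integral_congr_ae this]; simp
          have eI : ∫ ω, (I' a ω : ℝ) ∂μ' = ∫ ω, (I a ω : ℝ) ∂μ := hlawI' (fun v => (v a : ℝ))
          rw [integral_add (intI'b a) (integrable_finset_sum _ (fun b _ => intdiff b)),
            integral_finset_sum _ (fun b _ => intdiff b), eJ, eI]
          ring
  -- final estimate
  rw [h8]
  have h11 : |lam * ∫ ω, (f (W' ω + 1) - f (V ω)) ∂μ'|
      = lam * |∫ ω, (f (W' ω + 1) - f (V ω)) ∂μ'| := by
    rw [abs_mul, abs_of_pos hlampos]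
  rw [h11]
  calc lam * |∫ ω, (f (W' ω + 1) - f (V ω)) ∂μ'|
      ≤ lam * ∫ ω, (1/lam) * (((W' ω : ℝ) + 1) - (V ω : ℝ)) ∂μ' :=
        mul_le_mul_of_nonneg_left h9 hlampos.le
    _ = ∫ ω, (((W' ω : ℝ) + 1) - (V ω : ℝ)) ∂μ' := by
        rw [integral_const_mul]
        field_simp
    _ = _ := h10

end Main

/-- Corollary 4.3, second bound: Chen–Stein with a monotone
vector-level coupling.  Let `(I_a)_{a ∈ A}` be a finite exchangeable collection of
`{0,1}`-valued random variables with `P(I_a = 1) > 0`, `W = ∑ I_a`, `λ = E[W]`.  Fix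
`a ∈ A` and suppose that on some probability space there are random vectors
`(I'_b)_{b ∈ A}` and `(J_b)_{b ∈ A}` whose laws are, respectively, the law of
`(I_b)_b` and its conditional law given `I_a = 1`, and such that almost surely
`J_b ≤ I'_b` for all `b ≠ a`.  Then
`d_TV(W, Poi(λ)) ≤ E[I_a] + ∑_{b ≠ a} E[I'_b - J_b]`. -/
theorem chenStein_monotone_coupling {Ω Ω' : Type*} [MeasurableSpace Ω] [MeasurableSpace Ω']
    (μ : Measure Ω) [IsProbabilityMeasure μ] (μ' : Measure Ω') [IsProbabilityMeasure μ']
    {A : Type*} [Fintype A] [DecidableEq A] (I : A → Ω → ℕ)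
    (hmeas : ∀ a, Measurable (I a))
    (h01 : ∀ a ω, I a ω ≤ 1)
    (hpos : ∀ a, 0 < μ {ω | I a ω = 1})
    (hexch : ∀ π : Equiv.Perm A,
      Measure.map (fun ω => fun a => I (π a) ω) μ = Measure.map (fun ω => fun a => I a ω) μ)
    (a : A) (I' J : A → Ω' → ℕ)
    (hI'meas : ∀ b, Measurable (I' b)) (hJmeas : ∀ b, Measurable (J b))
    (hlawI : Measure.map (fun ω => fun b => I' b ω) μ' =
      Measure.map (fun ω => fun b => I b ω) μ)
    (hlawJ : Measure.map (fun ω => fun b => J b ω) μ' =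
      Measure.map (fun ω => fun b => I b ω) (μ[|{ω | I a ω = 1}]))
    (hdom : ∀ᵐ ω ∂μ', ∀ b, b ≠ a → J b ω ≤ I' b ω) :
    tvDistM (Measure.map (fun ω => ∑ b, I b ω) μ)
        ((poissonPMF (Real.toNNReal (∫ ω, ((∑ b, I b ω : ℕ) : ℝ) ∂μ))).toMeasure) ≤
      (∫ ω, (I a ω : ℝ) ∂μ) +
        ∑ b ∈ Finset.univ.erase a, ∫ ω, ((I' b ω : ℝ) - (J b ω : ℝ)) ∂μ' := by
  have key := chenStein_monotone_coupling' μ μ' I hmeas h01 hpos hexch a I' J hI'meas hJmeas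
    hlawI hlawJ hdom
  exact ciSup_le (fun t => key t)
end

section
/- Fix n ≥ 2 and integers k, m with 1 ≤ k ≤ n−1 and 1 ≤ m ≤ n−k. Let X = (X_1,…,X_{n−1}) have independent coordinates with X_i ~ Bernoulli(1/i), and let X^k be a random vector distributed as X conditioned on the event {Σ_{i=k}^{n−1} X_i ≥ m} (which has positive probability). Then there exists a coupling of X and X^k, i.e. a pair of random vectors on a common probability space with these marginal laws, such that almost surely X_i ≤ X^k_i for every i ∈ [n−1]. -/
open MeasureTheory ProbabilityTheory
open scoped ENNReal


namespace BCCaux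

noncomputable def bw {d : ℕ} (p : Fin d → ℝ≥0∞) (x : Fin d → Bool) : ℝ≥0∞ :=
  ∏ j, if x j then p j else 1 - p j

lemma sum_snoc {d : ℕ} {M : Type*} [AddCommMonoid M] (f : (Fin (d + 1) → Bool) → M) :
    ∑ X, f X = (∑ x, f (Fin.snoc x true)) + ∑ x, f (Fin.snoc x false) := by
  rw [← Fintype.sum_equiv (Fin.snocEquiv fun _ => Bool) (fun z => f (Fin.snoc z.2 z.1)) f
      (fun z => rfl)]
  rw [Fintype.sum_prod_type, Fintype.sum_bool]

lemma bw_snoc {d : ℕ} (p : Fin (d + 1) → ℝ≥0∞) (x : Fin d → Bool) (b : Bool) :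
    bw p (Fin.snoc x b) =
      bw (p ∘ Fin.castSucc) x * (if b then p (Fin.last d) else 1 - p (Fin.last d)) := by
  unfold bw
  rw [Fin.prod_univ_castSucc]
  simp [Fin.snoc_castSucc, Fin.snoc_last, Function.comp]

lemma bw_le_one {d : ℕ} {p : Fin d → ℝ≥0∞} (hp : ∀ j, p j ≤ 1) (x : Fin d → Bool) :
    bw p x ≤ 1 := by
  unfold bw
  calc (∏ j, if x j then p j else 1 - p j) ≤ ∏ _j, 1 := Finset.prod_le_prod' fun i _ => ?_
    _ = 1 := Finset.prod_const_one
  split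
  exacts [hp i, tsub_le_self]

lemma Z_ne_top {d : ℕ} {p : Fin d → ℝ≥0∞} (hp : ∀ j, p j ≤ 1) (A : Set (Fin d → Bool)) :
    (∑ x, A.indicator (bw p) x) ≠ ∞ := by
  refine (ENNReal.sum_lt_top.mpr fun x _ => ?_).ne
  exact lt_of_le_of_lt ((Set.indicator_le_self A (bw p) x).trans (bw_le_one hp x))
    ENNReal.one_lt_top

theorem exists_coupling (d : ℕ) : ∀ (p : Fin d → ℝ≥0∞), (∀ j, p j ≤ 1) →
    ∀ A : Set (Fin d → Bool),
    (∀ x y : Fin d → Bool, (∀ j, x j = true → y j = true) → x ∈ A → y ∈ A) →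
    0 < ∑ x, A.indicator (bw p) x →
    ∃ ν : (Fin d → Bool) → (Fin d → Bool) → ℝ≥0∞,
      (∀ x y, ν x y ≠ 0 → ∀ j, x j = true → y j = true) ∧
      (∀ x, ∑ y, ν x y = bw p x) ∧
      (∀ y, ∑ x, ν x y = (∑ x, A.indicator (bw p) x)⁻¹ * A.indicator (bw p) y) := by
  induction d with
  | zero =>
    intro p hp A hA hpos
    classical
    have hsub : ∀ x : Fin 0 → Bool, x = default := fun x => Subsingleton.elim _ _
    have hbw : ∀ x : Fin 0 → Bool, bw p x = 1 := fun x => Fin.prod_univ_zero _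
    have hsum : ∀ f : (Fin 0 → Bool) → ℝ≥0∞, ∑ x, f x = f default := fun f => Fintype.sum_subsingleton f default
    have hmem : (default : Fin 0 → Bool) ∈ A := by
      by_contra hmem
      rw [hsum, Set.indicator_of_notMem hmem] at hpos
      exact lt_irrefl _ hpos
    have hZ : ∑ x, A.indicator (bw p) x = 1 := by
      rw [hsum, Set.indicator_of_mem hmem, hbw]
    refine ⟨fun _ _ => 1, fun x y _ j => j.elim0, fun x => ?_, fun y => ?_⟩
    · rw [hsum, hbw]
    · rw [hsum, hZ, hsub y, Set.indicator_of_mem hmem, hbw, inv_one, one_mul]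
  | succ d ih =>
    intro p hp A hA hpos
    classical
    set q := p (Fin.last d) with hqdef
    set p' : Fin d → ℝ≥0∞ := p ∘ Fin.castSucc with hp'def
    have hp'le : ∀ j, p' j ≤ 1 := fun j => hp _
    have hq1 : q ≤ 1 := hp _
    set A₁ : Set (Fin d → Bool) := {x | Fin.snoc x true ∈ A} with hA₁def
    set A₀ : Set (Fin d → Bool) := {x | Fin.snoc x false ∈ A} with hA₀def
    set Z₁ := ∑ x, A₁.indicator (bw p') x with hZ₁def
    set Z₀ := ∑ x, A₀.indicator (bw p') x with hZ₀def
    set Z := ∑ x, A.indicator (bw p) x with hZdef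
    -- indicator decomposition
    have hiT : ∀ x, A.indicator (bw p) (Fin.snoc x true) = A₁.indicator (bw p') x * q := by
      intro x
      by_cases h : Fin.snoc x true ∈ A
      · rw [Set.indicator_of_mem h, Set.indicator_of_mem (s := A₁) h, bw_snoc, if_pos rfl]
      · rw [Set.indicator_of_notMem h, Set.indicator_of_notMem (s := A₁) h, zero_mul]
    have hiF : ∀ x, A.indicator (bw p) (Fin.snoc x false) = A₀.indicator (bw p') x * (1 - q) := by
      intro x
      by_cases h : Fin.snoc x false ∈ A
      · rw [Set.indicator_of_mem h, Set.indicator_of_mem (s := A₀) h, bw_snoc]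
        norm_num
        rfl
      · rw [Set.indicator_of_notMem h, Set.indicator_of_notMem (s := A₀) h, zero_mul]
    have hZsplit : Z = Z₁ * q + Z₀ * (1 - q) := by
      rw [hZdef, sum_snoc (fun X => A.indicator (bw p) X)]
      simp only [hiT, hiF, ← Finset.sum_mul]
      rfl
    -- finiteness and positivity
    have hZtop : Z ≠ ∞ := Z_ne_top hp A
    have hZ₁top : Z₁ ≠ ∞ := Z_ne_top hp'le A₁
    have hZ₀top : Z₀ ≠ ∞ := Z_ne_top hp'le A₀
    have hZne0 : Z ≠ 0 := hpos.ne'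
    have hA01 : A₀ ⊆ A₁ := by
      intro x hx
      refine hA (Fin.snoc x false) (Fin.snoc x true) ?_ hx
      intro j
      refine Fin.lastCases ?_ ?_ j
      · simp [Fin.snoc_last]
      · intro i; simp [Fin.snoc_castSucc]
    have hZ01 : Z₀ ≤ Z₁ :=
      Finset.sum_le_sum fun x _ =>
        Set.indicator_le_indicator_of_subset hA01 (fun _ => zero_le) x
    have hZle : Z ≤ Z₁ := by
      rw [hZsplit]
      calc Z₁ * q + Z₀ * (1 - q) ≤ Z₁ * q + Z₁ * (1 - q) :=
            add_le_add_right (mul_le_mul_left hZ01 _) _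
        _ = Z₁ * (q + (1 - q)) := (mul_add _ _ _).symm
        _ = Z₁ := by rw [add_tsub_cancel_of_le hq1, mul_one]
    have hZ₁pos : 0 < Z₁ := lt_of_lt_of_le hpos hZle
    have hZ₁ne0 : Z₁ ≠ 0 := hZ₁pos.ne'
    -- the tilted head probability
    set α := Z₁ * q / Z with hαdef
    have hqZ : Z₁ * q ≤ Z := by rw [hZsplit]; exact le_self_add
    have hα1 : α ≤ 1 := by
      rw [hαdef, ← ENNReal.div_self hZne0 hZtop]
      exact ENNReal.div_le_div_right hqZ Z
    have hqα : q ≤ α := by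
      have h1 : Z * q / Z = q := by
        rw [mul_comm, mul_div_assoc, ENNReal.div_self hZne0 hZtop, mul_one]
      rw [← h1, hαdef]
      exact ENNReal.div_le_div_right (mul_le_mul_left hZle q) Z
    have hαtop : α ≠ ∞ := (hα1.trans_lt ENNReal.one_lt_top).ne
    have h1α : 1 - α = Z₀ * (1 - q) / Z := by
      have hs : Z₀ * (1 - q) / Z + α = 1 := by
        rw [hαdef, ENNReal.div_add_div_same, add_comm, ← hZsplit,
          ENNReal.div_self hZne0 hZtop]
      exact (ENNReal.eq_sub_of_add_eq hαtop hs).symm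
    -- inductive couplings
    have hA₁up : ∀ x y : Fin d → Bool, (∀ j, x j = true → y j = true) → x ∈ A₁ → y ∈ A₁ := by
      intro x y hxy hx
      refine hA (Fin.snoc x true) (Fin.snoc y true) ?_ hx
      intro j
      refine Fin.lastCases ?_ ?_ j
      · simp [Fin.snoc_last]
      · intro i; simpa [Fin.snoc_castSucc] using hxy i
    have hA₀up : ∀ x y : Fin d → Bool, (∀ j, x j = true → y j = true) → x ∈ A₀ → y ∈ A₀ := by
      intro x y hxy hx
      refine hA (Fin.snoc x false) (Fin.snoc y false) ?_ hx
      intro j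
      refine Fin.lastCases ?_ ?_ j
      · simp [Fin.snoc_last]
      · intro i; simpa [Fin.snoc_castSucc] using hxy i
    obtain ⟨ν₁, hν₁s, hν₁r, hν₁c⟩ := ih p' hp'le A₁ hA₁up hZ₁pos
    obtain ⟨ν₀, hν₀s, hν₀r, hν₀c⟩ :
        ∃ ν₀ : (Fin d → Bool) → (Fin d → Bool) → ℝ≥0∞,
          (∀ x y, ν₀ x y ≠ 0 → ∀ j, x j = true → y j = true) ∧
          (∀ x, (1 - α) * ∑ y, ν₀ x y = (1 - α) * bw p' x) ∧
          (∀ y, (1 - α) * ∑ x, ν₀ x y = (1 - q) / Z * A₀.indicator (bw p') y) := by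
      by_cases hZ₀pos : 0 < Z₀
      · obtain ⟨ν₀, h1, h2, h3⟩ := ih p' hp'le A₀ hA₀up hZ₀pos
        refine ⟨ν₀, h1, fun x => by rw [h2], fun y => ?_⟩
        rw [h3, h1α, ← mul_assoc]
        congr 1
        rw [ENNReal.div_eq_inv_mul, ENNReal.div_eq_inv_mul]
        calc Z⁻¹ * (Z₀ * (1 - q)) * Z₀⁻¹ = (Z₀ * Z₀⁻¹) * (Z⁻¹ * (1 - q)) := by ring
          _ = Z⁻¹ * (1 - q) := by rw [ENNReal.mul_inv_cancel hZ₀pos.ne' hZ₀top, one_mul]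
      · have hZ₀0 : Z₀ = 0 := by simpa using hZ₀pos
        have h1α0 : 1 - α = 0 := by rw [h1α, hZ₀0, zero_mul, ENNReal.zero_div]
        have hind0 : ∀ y, A₀.indicator (bw p') y = 0 := by
          intro y
          have := (Finset.sum_eq_zero_iff.mp (hZ₀def ▸ hZ₀0)) y (Finset.mem_univ y)
          exact this
        exact ⟨fun _ _ => 0, fun x y h => absurd rfl h, fun x => by rw [h1α0, zero_mul, zero_mul],
          fun y => by rw [h1α0, zero_mul, hind0, mul_zero]⟩
    -- the coupling
    refine ⟨fun X Y =>
      if X (Fin.last d) then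
        (if Y (Fin.last d) then q * ν₁ (Fin.init X) (Fin.init Y) else 0)
      else
        (if Y (Fin.last d) then (α - q) * ν₁ (Fin.init X) (Fin.init Y)
         else (1 - α) * ν₀ (Fin.init X) (Fin.init Y)), ?_, ?_, ?_⟩
    · -- support monotone
      intro X Y hne j
      cases hX : X (Fin.last d) <;> cases hY : Y (Fin.last d) <;>
        simp only [hX, hY, if_true, if_false, Bool.false_eq_true, ite_true, ite_false] at hne
      · -- false false
        have h0 : ν₀ (Fin.init X) (Fin.init Y) ≠ 0 := right_ne_zero_of_mul hne
        refine Fin.lastCases ?_ ?_ j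
        · intro h; rw [hX] at h; exact absurd h (by simp)
        · intro i; exact hν₀s _ _ h0 i
      · -- false true
        have h0 : ν₁ (Fin.init X) (Fin.init Y) ≠ 0 := right_ne_zero_of_mul hne
        refine Fin.lastCases ?_ ?_ j
        · intro _; exact hY
        · intro i; exact hν₁s _ _ h0 i
      · -- true false : hne : 0 ≠ 0
        exact absurd rfl hne
      · -- true true
        have h0 : ν₁ (Fin.init X) (Fin.init Y) ≠ 0 := right_ne_zero_of_mul hne
        refine Fin.lastCases ?_ ?_ j
        · intro _; exact hY
        · intro i; exact hν₁s _ _ h0 i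
    · -- first marginal
      intro X
      rw [sum_snoc (fun Y => _)]
      have hXsnoc : bw p X = bw p' (Fin.init X) * (if X (Fin.last d) then q else 1 - q) := by
        conv_lhs => rw [← Fin.snoc_init_self X]
        rw [bw_snoc]
      cases hX : X (Fin.last d) <;>
        simp only [hX, Fin.snoc_last, Fin.init_snoc, if_true, if_false,
          Bool.false_eq_true, ite_true, ite_false] at hXsnoc ⊢
      · -- X last = false
        rw [← Finset.mul_sum, ← Finset.mul_sum, hν₁r, hν₀r, hXsnoc]
        have hco : α - q + (1 - α) = 1 - q := by
          have hq_top : q ≠ ∞ := (hq1.trans_lt ENNReal.one_lt_top).ne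
          refine ENNReal.eq_sub_of_add_eq hq_top ?_
          rw [add_comm (α - q) (1 - α), add_assoc, tsub_add_cancel_of_le hqα,
            tsub_add_cancel_of_le hα1]
        calc (α - q) * bw p' (Fin.init X) + (1 - α) * bw p' (Fin.init X)
            = (α - q + (1 - α)) * bw p' (Fin.init X) := (add_mul _ _ _).symm
          _ = bw p' (Fin.init X) * (1 - q) := by rw [hco, mul_comm]
      · -- X last = true
        rw [← Finset.mul_sum, hν₁r, Finset.sum_const_zero, add_zero, hXsnoc, mul_comm]
    · -- second marginal
      intro Y
      rw [sum_snoc (fun X => _)]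
      have hc : α * Z₁⁻¹ = Z⁻¹ * q := by
        rw [hαdef, ENNReal.div_eq_inv_mul]
        calc Z⁻¹ * (Z₁ * q) * Z₁⁻¹ = (Z₁ * Z₁⁻¹) * (Z⁻¹ * q) := by ring
          _ = Z⁻¹ * q := by rw [ENNReal.mul_inv_cancel hZ₁ne0 hZ₁top, one_mul]
      cases hY : Y (Fin.last d)
      · -- Y last = false
        have hYeq : Fin.snoc (Fin.init Y) false = Y := by
          rw [← hY]; exact Fin.snoc_init_self Y
        simp only [Fin.snoc_last, Fin.init_snoc, hY, if_true, if_false,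
          Bool.false_eq_true, ite_true, ite_false]
        rw [Finset.sum_const_zero, zero_add, ← Finset.mul_sum, hν₀c, ← hYeq, hiF,
          ENNReal.div_eq_inv_mul]
        simp only [Fin.init_snoc]
        ring
      · -- Y last = true
        have hYeq : Fin.snoc (Fin.init Y) true = Y := by
          rw [← hY]; exact Fin.snoc_init_self Y
        simp only [Fin.snoc_last, Fin.init_snoc, hY, if_true, if_false,
          Bool.false_eq_true, ite_true, ite_false]
        rw [← Finset.mul_sum, ← Finset.mul_sum, hν₁c, ← add_mul, add_tsub_cancel_of_le hqα,
          ← hYeq, hiT]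
        simp only [Fin.init_snoc]
        calc α * ((∑ x, A₁.indicator (bw p') x)⁻¹ * A₁.indicator (bw p') (Fin.init Y))
            = (α * Z₁⁻¹) * A₁.indicator (bw p') (Fin.init Y) := by rw [← hZ₁def]; ring
          _ = Z⁻¹ * (A₁.indicator (bw p') (Fin.init Y) * q) := by rw [hc]; ring

lemma measure_eq_sum {β : Type*} [Fintype β] [MeasurableSpace β] [MeasurableSingletonClass β]
    (μ : Measure β) (s : Set β) :
    μ s = ∑ x, s.indicator (fun y => μ {y}) x := by
  classical
  have h1 : μ s = ∑ x ∈ s.toFinite.toFinset, μ {x} := by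
    conv_lhs => rw [show s = ⋃ x ∈ s.toFinite.toFinset, ({x} : Set β) by ext a; simp]
    exact measure_biUnion_finset
      (fun x _ y _ hxy => by
        simp only [Set.disjoint_singleton_left, Set.mem_singleton_iff]
        exact hxy)
      (fun x _ => measurableSet_singleton x)
  rw [h1,
    Finset.sum_congr rfl fun x hx =>
      (Set.indicator_of_mem (s.toFinite.mem_toFinset.mp hx) fun y => μ {y}).symm]
  exact Finset.sum_subset (Finset.subset_univ _)
    (fun x _ hx => Set.indicator_of_notMem (fun hxs => hx (s.toFinite.mem_toFinset.mpr hxs)) _)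

end BCCaux

/-- The law of the vector `X = (X_1, …, X_{n-1})` of independent Bernoulli variables
with `X_i ~ Ber(1/i)`; coordinate `j : Fin (n-1)` stands for `X_{j+1}`. -/
noncomputable def bernoulliVec (n : ℕ) : Measure (∀ _ : Fin (n - 1), Bool) :=
  Measure.pi fun j : Fin (n - 1) =>
    (PMF.bernoulli (((j : ℕ) + 1 : NNReal))⁻¹ (inv_le_one_of_one_le₀ le_add_self)).toMeasure

/-- The event `{Σ_{i=k}^{n-1} X_i ≥ m}`. -/
def tailSumEvent (n k m : ℕ) : Set (∀ _ : Fin (n - 1), Bool) :=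
  {x | m ≤ (Finset.univ.filter fun j : Fin (n - 1) => k ≤ (j : ℕ) + 1 ∧ x j = true).card}

/-- Lemma 5.3: monotone coupling of a Bernoulli vector with its
conditioned version.  Fix `n ≥ 2`, `1 ≤ k ≤ n-1` and `1 ≤ m ≤ n-k`.  Let `X` have
independent coordinates `X_i ~ Ber(1/i)` and let `X^k` be distributed as `X`
conditioned on `{Σ_{i=k}^{n-1} X_i ≥ m}` (an event of positive probability).  Then
there is a coupling of `X` and `X^k` such that almost surely `X_i ≤ X^k_i` for
every `i`. -/
theorem bernoulli_conditional_coupling (n k m : ℕ) (hn : 2 ≤ n)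
    (hk1 : 1 ≤ k) (hk2 : k ≤ n - 1) (hm1 : 1 ≤ m) (hm2 : m ≤ n - k) :
    ∃ (Ω : Type) (_ : MeasurableSpace Ω) (P : Measure Ω) (_ : IsProbabilityMeasure P)
      (X Y : Ω → ∀ _ : Fin (n - 1), Bool),
        Measurable X ∧ Measurable Y ∧
        Measure.map X P = bernoulliVec n ∧
        Measure.map Y P = (bernoulliVec n)[|tailSumEvent n k m] ∧
        ∀ᵐ ω ∂P, ∀ j : Fin (n - 1), X ω j = true → Y ω j = true := by
  classical
  set p : Fin (n - 1) → ℝ≥0∞ := fun j => (((j : ℕ) + 1 : ℝ≥0∞))⁻¹ with hpdef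
  have hp : ∀ j, p j ≤ 1 := fun j => ENNReal.inv_le_one.mpr le_add_self
  set A := tailSumEvent n k m with hAdef
  have hmS : ∀ s : Set (∀ _ : Fin (n - 1), Bool), MeasurableSet s := fun s =>
    s.toFinite.measurableSet
  -- singleton values of the product measure
  have hsingle : ∀ x, bernoulliVec n {x} = BCCaux.bw p x := by
    intro x
    rw [bernoulliVec, ← Set.univ_pi_singleton x, Measure.pi_pi]
    refine Finset.prod_congr rfl fun j _ => ?_
    rw [PMF.toMeasure_apply_singleton _ _ (measurableSet_singleton _)]
    rcases hxj : x j with _ | _ <;> simp [PMF.bernoulli_apply, hxj, hpdef]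
  have hμ : ∀ s : Set (∀ _ : Fin (n - 1), Bool),
      bernoulliVec n s = ∑ x, s.indicator (BCCaux.bw p) x := by
    intro s
    have hfun : (fun y => bernoulliVec n {y}) = BCCaux.bw p := funext hsingle
    rw [BCCaux.measure_eq_sum, hfun]
  -- the event is increasing
  have hAup : ∀ x y : Fin (n - 1) → Bool, (∀ j, x j = true → y j = true) → x ∈ A → y ∈ A := by
    intro x y hxy hx
    refine le_trans hx (Finset.card_le_card ?_)
    intro j hj
    simp only [Finset.mem_filter] at hj ⊢
    exact ⟨hj.1, hj.2.1, hxy j hj.2.2⟩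
  -- the event has positive probability
  have hT : (fun _ : Fin (n - 1) => true) ∈ A := by
    have h1 : (Finset.univ.filter fun j : Fin (n - 1) => k ≤ (j : ℕ) + 1 ∧ true = true).card
        + (Finset.univ.filter fun j : Fin (n - 1) => ¬(k ≤ (j : ℕ) + 1 ∧ true = true)).card
        = n - 1 := by
      rw [Finset.card_filter_add_card_filter_not, Finset.card_univ, Fintype.card_fin]
    have h2 : (Finset.univ.filter fun j : Fin (n - 1) =>
        ¬(k ≤ (j : ℕ) + 1 ∧ true = true)).card ≤ k - 1 := by
      calc (Finset.univ.filter fun j : Fin (n - 1) => ¬(k ≤ (j : ℕ) + 1 ∧ true = true)).card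
          ≤ (Finset.range (k - 1)).card := by
            refine Finset.card_le_card_of_injOn (fun j => (j : ℕ)) ?_ ?_
            · intro j hj
              simp only [Finset.mem_coe, Finset.mem_filter, Finset.mem_univ, true_and, and_true] at hj
              simp only [Finset.mem_coe, Finset.mem_range]
              omega
            · intro a _ b _ h
              exact Fin.val_injective h
        _ = k - 1 := Finset.card_range _
    show m ≤ (Finset.univ.filter fun j : Fin (n - 1) => k ≤ (j : ℕ) + 1 ∧ true = true).card
    omega
  have hpos : 0 < ∑ x, A.indicator (BCCaux.bw p) x := by
    have hbwne : BCCaux.bw p (fun _ => true) ≠ 0 := by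
      unfold BCCaux.bw
      rw [Finset.prod_ne_zero_iff]
      intro j _
      simp only [if_true]
      exact ENNReal.inv_ne_zero.mpr
        (ENNReal.add_ne_top.mpr ⟨ENNReal.natCast_ne_top _, ENNReal.one_ne_top⟩)
    refine lt_of_lt_of_le ?_
      (Finset.single_le_sum (fun i _ => zero_le) (Finset.mem_univ (fun _ => true)))
    rw [Set.indicator_of_mem hT]
    exact pos_iff_ne_zero.mpr hbwne
  obtain ⟨ν, hνs, hνr, hνc⟩ := BCCaux.exists_coupling (n - 1) p hp A hAup hpos
  -- the coupling measure
  set P : Measure ((∀ _ : Fin (n - 1), Bool) × (∀ _ : Fin (n - 1), Bool)) :=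
    ∑ z : (∀ _ : Fin (n - 1), Bool) × (∀ _ : Fin (n - 1), Bool),
      ν z.1 z.2 • Measure.dirac z with hPdef
  have hPapp : ∀ s, P s = ∑ z : (∀ _ : Fin (n - 1), Bool) × (∀ _ : Fin (n - 1), Bool),
      ν z.1 z.2 * s.indicator 1 z := by
    intro s
    rw [hPdef, Measure.finset_sum_apply]
    exact Finset.sum_congr rfl fun z _ => by
      rw [Measure.smul_apply, smul_eq_mul, Measure.dirac_apply]
  have hsum1 : ∑ x, BCCaux.bw p x = 1 := by
    unfold BCCaux.bw
    rw [← Fintype.prod_sum fun (j : Fin (n - 1)) (b : Bool) => if b then p j else 1 - p j]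
    refine Finset.prod_eq_one fun j _ => ?_
    rw [Fintype.sum_bool, if_pos rfl, if_neg (by simp), add_tsub_cancel_of_le (hp j)]
  have hProb : IsProbabilityMeasure P := by
    constructor
    rw [hPapp]
    simp only [Set.indicator_univ, Pi.one_apply, mul_one]
    rw [Fintype.sum_prod_type]
    calc ∑ a, ∑ b, ν a b = ∑ a, BCCaux.bw p a := Finset.sum_congr rfl fun a _ => hνr a
      _ = 1 := hsum1
  refine ⟨_, inferInstance, P, hProb, Prod.fst, Prod.snd, measurable_fst, measurable_snd,
    ?_, ?_, ?_⟩
  · -- first marginal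
    refine Measure.ext_of_singleton fun x => ?_
    rw [Measure.map_apply measurable_fst (measurableSet_singleton x), hsingle, hPapp,
      Fintype.sum_prod_type]
    have hind : ∀ a b, ν a b * (Prod.fst ⁻¹' {x} :
        Set ((∀ _ : Fin (n - 1), Bool) × (∀ _ : Fin (n - 1), Bool))).indicator 1 (a, b)
        = if a = x then ν a b else 0 := by
      intro a b
      by_cases h : a = x
      · rw [Set.indicator_of_mem (by simp [h]), Pi.one_apply, mul_one, if_pos h]
      · rw [Set.indicator_of_notMem (by simp [h]), mul_zero, if_neg h]
    simp_rw [hind]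
    calc ∑ a, ∑ b, (if a = x then ν a b else 0)
        = ∑ a, (if a = x then ∑ b, ν a b else 0) :=
          Finset.sum_congr rfl fun a _ => by split <;> simp
      _ = ∑ b, ν x b := by rw [Finset.sum_ite_eq' Finset.univ x fun a => ∑ b, ν a b]; simp
      _ = BCCaux.bw p x := hνr x
  · -- second marginal
    refine Measure.ext_of_singleton fun y => ?_
    rw [Measure.map_apply measurable_snd (measurableSet_singleton y), hPapp,
      Fintype.sum_prod_type]
    have hind : ∀ a b, ν a b * (Prod.snd ⁻¹' {y} :
        Set ((∀ _ : Fin (n - 1), Bool) × (∀ _ : Fin (n - 1), Bool))).indicator 1 (a, b)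
        = if b = y then ν a b else 0 := by
      intro a b
      by_cases h : b = y
      · rw [Set.indicator_of_mem (by simp [h]), Pi.one_apply, mul_one, if_pos h]
      · rw [Set.indicator_of_notMem (by simp [h]), mul_zero, if_neg h]
    simp_rw [hind]
    have hLHS : ∑ a, ∑ b, (if b = y then ν a b else 0) = ∑ a, ν a y := by
      refine Finset.sum_congr rfl fun a _ => ?_
      rw [Finset.sum_ite_eq' Finset.univ y fun b => ν a b]; simp
    rw [hLHS, hνc y, cond_apply (hmS A), hμ A, hμ (A ∩ {y})]
    congr 1
    have hint : ∀ x, (A ∩ {y}).indicator (BCCaux.bw p) x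
        = if x = y then A.indicator (BCCaux.bw p) x else 0 := by
      intro x
      by_cases hx : x = y
      · rw [if_pos hx]
        by_cases hxA : x ∈ A
        · rw [Set.indicator_of_mem (s := A ∩ {y}) ⟨hxA, hx⟩,
            Set.indicator_of_mem (s := A) hxA]
        · rw [Set.indicator_of_notMem (s := A ∩ {y}) (fun h => hxA h.1),
            Set.indicator_of_notMem (s := A) hxA]
      · rw [Set.indicator_of_notMem (s := A ∩ {y}) (fun h => hx h.2), if_neg hx]
    simp_rw [hint]
    rw [Finset.sum_ite_eq' Finset.univ y fun x => A.indicator (BCCaux.bw p) x]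
    simp
  · -- monotonicity
    rw [ae_iff, hPapp]
    refine Finset.sum_eq_zero fun z _ => ?_
    by_cases hz : ν z.1 z.2 = 0
    · rw [hz, zero_mul]
    · rw [Set.indicator_of_notMem ?_, mul_zero]
      simp only [Set.mem_setOf_eq, not_not]
      exact fun j => hνs z.1 z.2 hz j
end

section
/- Let c ∈ (0,2) and 0 < ε ≤ 1 − c/2, and set a = 1 − ε − c/2. For each n ≥ 2 let (B_j), for integers j with n^a < j ≤ n, be independent random variables with B_j ~ Bernoulli(2/j) (n is taken large enough that every such j is ≥ 2). Then there is a constant C > 0 such that for all sufficiently large n, P( Σ_{n^a < j ≤ n} B_j ≤ c·ln n ) ≤ C·n^{−ε²/(ε + c/2)}. -/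
open MeasureTheory ProbabilityTheory


lemma aux_exp_quad {t : ℝ} (ht : 0 ≤ t) : Real.exp (-t) ≤ 1 - t + t ^ 2 / 2 := by
  have hmono : MonotoneOn (fun y : ℝ => 1 - y + y ^ 2 / 2 - Real.exp (-y)) (Set.Ici 0) := by
    refine monotoneOn_of_deriv_nonneg (convex_Ici 0) (by fun_prop) ?_ ?_
    · intro x hx
      have hd : HasDerivAt (fun y : ℝ => 1 - y + y ^ 2 / 2 - Real.exp (-y))
          (-1 + x + Real.exp (-x)) x := by
        have h1 : HasDerivAt (fun y : ℝ => Real.exp (-y)) (-Real.exp (-x)) x := by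
          simpa [Function.comp_def] using (Real.hasDerivAt_exp (-x)).comp x (hasDerivAt_neg x)
        have h2 : HasDerivAt (fun y : ℝ => 1 - y + y ^ 2 / 2) (-1 + x) x := by
          have := ((hasDerivAt_id x).const_sub 1).add
            (((hasDerivAt_pow 2 x)).div_const 2)
          simpa [pow_one, Pi.add_def] using this
        simpa [sub_eq_add_neg, Pi.add_def, Pi.neg_def] using h2.sub h1
      exact hd.differentiableAt.differentiableWithinAt
    · intro x hx
      have hd : HasDerivAt (fun y : ℝ => 1 - y + y ^ 2 / 2 - Real.exp (-y))
          (-1 + x + Real.exp (-x)) x := by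
        have h1 : HasDerivAt (fun y : ℝ => Real.exp (-y)) (-Real.exp (-x)) x := by
          simpa [Function.comp_def] using (Real.hasDerivAt_exp (-x)).comp x (hasDerivAt_neg x)
        have h2 : HasDerivAt (fun y : ℝ => 1 - y + y ^ 2 / 2) (-1 + x) x := by
          have := ((hasDerivAt_id x).const_sub 1).add
            (((hasDerivAt_pow 2 x)).div_const 2)
          simpa [pow_one, Pi.add_def] using this
        simpa [sub_eq_add_neg, Pi.add_def, Pi.neg_def] using h2.sub h1
      rw [hd.deriv]
      have := Real.add_one_le_exp (-x)
      linarith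
  have h0 : (0:ℝ) ∈ Set.Ici (0:ℝ) := Set.mem_Ici.mpr le_rfl
  have := hmono h0 (Set.mem_Ici.mpr ht) ht
  norm_num [Real.exp_zero] at this
  linarith

lemma aux_harmonic (m : ℕ) : ∀ n : ℕ, m ≤ n →
    Real.log (n + 1) - Real.log (m + 1) ≤ ∑ j ∈ Finset.Ioc m n, (1 : ℝ) / j := by
  intro n
  induction n with
  | zero => intro h; interval_cases m; simp
  | succ n ih =>
    intro h
    rcases Nat.lt_or_ge m (n + 1) with h' | h'
    · have hmn : m ≤ n := Nat.lt_succ_iff.mp h'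
      rw [Finset.sum_Ioc_succ_top hmn]
      have hstep : Real.log (n + 1 + 1) - Real.log (n + 1) ≤ 1 / ((n : ℝ) + 1) := by
        have hpos : (0:ℝ) < (n : ℝ) + 1 := by positivity
        have := Real.log_le_sub_one_of_pos (show (0:ℝ) < ((n:ℝ) + 1 + 1) / ((n:ℝ) + 1) by positivity)
        rw [Real.log_div (by positivity) (by positivity)] at this
        have : Real.log ((n:ℝ) + 1 + 1) - Real.log ((n:ℝ) + 1) ≤ ((n:ℝ) + 1 + 1) / ((n:ℝ) + 1) - 1 := this
        have heq : ((n:ℝ) + 1 + 1) / ((n:ℝ) + 1) - 1 = 1 / ((n:ℝ) + 1) := by field_simp; ring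
        linarith [this, heq ▸ this]
      have := ih hmn
      push_cast
      push_cast at this hstep
      linarith
    · have : m = n + 1 := le_antisymm h h'
      subst this
      simp


lemma aux_bern_mgf {Ω : Type} [MeasurableSpace Ω] (μ : Measure Ω) [IsProbabilityMeasure μ]
    (b : Ω → Bool) (hb : Measurable b) (t : ℝ) :
    mgf (fun ω => if b ω then (1:ℝ) else 0) μ t
      = 1 + (μ {ω | b ω = true}).toReal * (Real.exp t - 1) := by
  have hset : MeasurableSet {ω | b ω = true} := hb (measurableSet_singleton true)
  have hrw : (fun ω => Real.exp (t * if b ω then (1:ℝ) else 0))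
      = fun ω => (Set.indicator {ω | b ω = true} (fun _ => Real.exp t - 1) ω) + 1 := by
    funext ω
    by_cases h : b ω = true
    · simp [h, Set.indicator_apply, Set.mem_setOf_eq]
    · simp [h, Set.indicator_apply, Set.mem_setOf_eq]
  rw [mgf, hrw]
  rw [integral_add ((integrable_const (Real.exp t - 1)).indicator hset) (integrable_const 1)]
  rw [integral_indicator_const _ hset]
  simp [smul_eq_mul]
  simp only [measureReal_def]; ring



set_option maxHeartbeats 800000 in
/-- Lemma A.2: lower tail for the size of a selection set in
Kingman's coalescent.  Let `c ∈ (0,2)`, `0 < ε ≤ 1 - c/2` and `a = 1 - ε - c/2`.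
For each `n`, let `(B_j)` for integers `n^a < j ≤ n` be independent Bernoulli random
variables with `B_j ~ Ber(2/j)`.  Then there is a constant `C > 0` such that for all
sufficiently large `n`, `P(Σ_j B_j ≤ c ln n) ≤ C n^{-ε²/(ε + c/2)}`. -/
theorem selection_set_lower_tail (c ε : ℝ) (hc0 : 0 < c) (hc2 : c < 2)
    (hε0 : 0 < ε) (hε1 : ε ≤ 1 - c / 2) :
    ∃ C : ℝ, 0 < C ∧ ∃ N : ℕ, ∀ n : ℕ, N ≤ n →
      ∀ (Ω : Type) (_ : MeasurableSpace Ω) (μ : Measure Ω), IsProbabilityMeasure μ →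
      ∀ B : ℕ → Ω → Bool,
        (∀ j ∈ (Finset.Icc 1 n).filter
            (fun j : ℕ => (n : ℝ) ^ ((1 : ℝ) - ε - c / 2) < (j : ℝ)), Measurable (B j)) →
        iIndepFun (m := fun _ => ⊤)
          (fun j : ((Finset.Icc 1 n).filter
              (fun j : ℕ => (n : ℝ) ^ ((1 : ℝ) - ε - c / 2) < (j : ℝ))) => B j) μ →
        (∀ j ∈ (Finset.Icc 1 n).filter
            (fun j : ℕ => (n : ℝ) ^ ((1 : ℝ) - ε - c / 2) < (j : ℝ)),
          μ {ω | B j ω = true} = ENNReal.ofReal (2 / (j : ℝ))) →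
        (μ {ω | (∑ j ∈ (Finset.Icc 1 n).filter
              (fun j : ℕ => (n : ℝ) ^ ((1 : ℝ) - ε - c / 2) < (j : ℝ)),
            (if B j ω then (1 : ℝ) else 0)) ≤ c * Real.log n}).toReal ≤
          C * (n : ℝ) ^ (-(ε ^ 2 / (ε + c / 2))) := by
  have hA0 : (0:ℝ) < c + 2 * ε := by linarith
  set A : ℝ := c + 2 * ε with hA_def
  set t0 : ℝ := 2 * ε / A with ht0_def
  have ht00 : 0 < t0 := by positivity
  have ht01 : t0 < 1 := by rw [ht0_def, div_lt_one hA0]; linarith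
  set q : ℝ := t0 - t0 ^ 2 / 2 with hq_def
  have hq0 : 0 < q := by
    have h := mul_pos ht00 (show (0:ℝ) < 2 - t0 by linarith)
    rw [hq_def]; nlinarith
  have hq1 : q ≤ 1 := by
    rw [hq_def]; nlinarith [sq_nonneg t0]
  refine ⟨4, by norm_num, ⌈Real.exp (2 * Real.log 2 / A)⌉₊ + 2, ?_⟩
  intro n hn Ω mΩ μ hμprob B hBmeas hBindep hBdist
  set a : ℝ := (1:ℝ) - ε - c / 2 with ha_def
  have ha0 : 0 ≤ a := by rw [ha_def]; linarith
  have ha1 : a ≤ 1 := by rw [ha_def]; linarith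
  have hn2 : 2 ≤ n := le_trans (by omega) hn
  have hnR1 : (1:ℝ) ≤ (n:ℝ) := by exact_mod_cast Nat.one_le_of_lt hn2
  have hnpos : (0:ℝ) < (n:ℝ) := by linarith
  have hlogn0 : 0 ≤ Real.log n := Real.log_nonneg hnR1
  have hlogn : 2 * Real.log 2 / A ≤ Real.log n := by
    rw [Real.le_log_iff_exp_le hnpos]
    calc Real.exp (2 * Real.log 2 / A) ≤ (⌈Real.exp (2 * Real.log 2 / A)⌉₊ : ℝ) :=
          Nat.le_ceil _
      _ ≤ (n:ℝ) := by exact_mod_cast le_trans (by omega) hn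
  set s := (Finset.Icc 1 n).filter
      (fun j : ℕ => (n : ℝ) ^ a < (j : ℝ)) with hs_def
  have hna1 : (1:ℝ) ≤ (n:ℝ) ^ a := Real.one_le_rpow hnR1 ha0
  set m := ⌊(n:ℝ) ^ a⌋₊ with hm_def
  have hm1 : 1 ≤ m := Nat.le_floor (by exact_mod_cast hna1)
  have hsm : s = Finset.Ioc m n := by
    ext j
    simp only [hs_def, Finset.mem_filter, Finset.mem_Icc, Finset.mem_Ioc]
    constructor
    · rintro ⟨⟨h1, h2⟩, h3⟩
      exact ⟨(Nat.floor_lt (Real.rpow_nonneg hnpos.le a)).mpr h3, h2⟩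
    · rintro ⟨h1, h2⟩
      exact ⟨⟨by omega, h2⟩, (Nat.floor_lt (Real.rpow_nonneg hnpos.le a)).mp h1⟩
  have hmn : m ≤ n := by
    have : (n:ℝ) ^ a ≤ (n:ℝ) ^ (1:ℝ) := Real.rpow_le_rpow_of_exponent_le hnR1 ha1
    rw [Real.rpow_one] at this
    calc m ≤ ⌊(n:ℝ)⌋₊ := Nat.floor_le_floor this
      _ = n := Nat.floor_natCast n
  -- lower bound on the sum of probabilities
  have hsum_p : A * Real.log n - 2 * Real.log 2 ≤ ∑ j ∈ s, 2 / (j:ℝ) := by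
    have hharm := aux_harmonic m n hmn
    have h1 : Real.log (m + 1) ≤ Real.log 2 + a * Real.log n := by
      have hb : ((m:ℝ) + 1) ≤ 2 * (n:ℝ) ^ a := by
        have := Nat.floor_le (Real.rpow_nonneg hnpos.le a)
        linarith [hna1, this]
      calc Real.log ((m:ℝ) + 1) ≤ Real.log (2 * (n:ℝ) ^ a) :=
            Real.log_le_log (by positivity) hb
        _ = Real.log 2 + a * Real.log n := by
            rw [Real.log_mul (by norm_num) (by positivity), Real.log_rpow hnpos]
    have h2 : Real.log n ≤ Real.log (n + 1) := Real.log_le_log hnpos (by linarith)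
    have h3 : ∑ j ∈ s, 2 / (j:ℝ) = 2 * ∑ j ∈ Finset.Ioc m n, (1:ℝ) / j := by
      rw [hsm, Finset.mul_sum]
      refine Finset.sum_congr rfl fun j hj => ?_
      ring
    rw [h3]
    have hAa : A = 2 * (1 - a) := by rw [hA_def, ha_def]; ring
    nlinarith [hharm, h1, h2]
  -- measurability
  have hXmeas : ∀ j ∈ s, Measurable (fun ω => if B j ω then (1:ℝ) else 0) := by
    intro j hj
    exact Measurable.ite ((hBmeas j hj) (measurableSet_singleton true))
      measurable_const measurable_const
  set S : Ω → ℝ := fun ω => ∑ j ∈ s, (if B j ω then (1:ℝ) else 0) with hS_def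
  have hSmeas : Measurable S := Finset.measurable_sum s hXmeas
  have hSnonneg : ∀ ω, 0 ≤ S ω := fun ω =>
    Finset.sum_nonneg fun j hj => by positivity
  have hint : Integrable (fun ω => Real.exp (-t0 * S ω)) μ := by
    refine Integrable.mono' (integrable_const 1)
      ((hSmeas.const_mul (-t0)).exp.aestronglyMeasurable) (ae_of_all _ fun ω => ?_)
    rw [Real.norm_eq_abs, abs_of_pos (Real.exp_pos _)]
    rw [Real.exp_le_one_iff]
    exact mul_nonpos_of_nonpos_of_nonneg (by linarith) (hSnonneg ω)
  -- Chernoff bound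
  have hcher := measure_le_le_exp_mul_mgf (μ := μ) (X := S) (c * Real.log n)
    (neg_nonpos.mpr ht00.le) hint
  rw [neg_neg] at hcher
  -- independence of the real indicators
  have hindep' : iIndepFun (m := fun _ : ↥s => (inferInstance : MeasurableSpace ℝ))
      (fun (j : ↥s) => fun ω => if B (j:ℕ) ω then (1:ℝ) else 0) μ := by
    have := hBindep.comp (fun _ (b : Bool) => if b then (1:ℝ) else 0)
      (fun _ => measurable_from_top)
    convert this using 2
    rfl
  have hprod := hindep'.mgf_sum (t := -t0)
    (fun i => hXmeas i i.2) Finset.univ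
  have hSeq : S = ∑ i : ↥s, (fun ω => if B (i:ℕ) ω then (1:ℝ) else 0) := by
    funext ω
    rw [Finset.sum_apply]
    exact (Finset.sum_coe_sort s (fun j => if B j ω then (1:ℝ) else 0)).symm
  have hmgfS : mgf S μ (-t0) = ∏ j ∈ s, mgf (fun ω => if B j ω then (1:ℝ) else 0) μ (-t0) := by
    rw [hSeq, hprod]
    exact Finset.prod_coe_sort s (fun j => mgf (fun ω => if B j ω then (1:ℝ) else 0) μ (-t0))
  -- bound each factor
  have hfac : ∀ j ∈ s, mgf (fun ω => if B j ω then (1:ℝ) else 0) μ (-t0)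
      ≤ Real.exp (2 / (j:ℝ) * (Real.exp (-t0) - 1)) := by
    intro j hj
    rw [aux_bern_mgf μ (B j) (hBmeas j hj) (-t0), hBdist j hj,
      ENNReal.toReal_ofReal (by positivity)]
    have h := Real.add_one_le_exp (2 / (j:ℝ) * (Real.exp (-t0) - 1))
    linarith
  have hmgf_le : mgf S μ (-t0) ≤ Real.exp ((Real.exp (-t0) - 1) * ∑ j ∈ s, 2 / (j:ℝ)) := by
    rw [hmgfS]
    calc ∏ j ∈ s, mgf (fun ω => if B j ω then (1:ℝ) else 0) μ (-t0)
        ≤ ∏ j ∈ s, Real.exp (2 / (j:ℝ) * (Real.exp (-t0) - 1)) :=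
          Finset.prod_le_prod (fun j hj => mgf_nonneg) hfac
      _ = Real.exp (∑ j ∈ s, 2 / (j:ℝ) * (Real.exp (-t0) - 1)) := (Real.exp_sum _ _).symm
      _ = Real.exp ((Real.exp (-t0) - 1) * ∑ j ∈ s, 2 / (j:ℝ)) := by
          rw [← Finset.sum_mul, mul_comm]
  -- numeric combination
  have hE : Real.exp (-t0) - 1 ≤ -q := by
    have := aux_exp_quad ht00.le
    rw [hq_def]; linarith
  have hlb0 : 0 ≤ A * Real.log n - 2 * Real.log 2 := by
    have := (div_le_iff₀ hA0).mp hlogn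
    nlinarith
  have hexp_le : (Real.exp (-t0) - 1) * (∑ j ∈ s, 2 / (j:ℝ))
      ≤ -q * (A * Real.log n - 2 * Real.log 2) := by
    have hE1 : Real.exp (-t0) - 1 ≤ 0 := by linarith
    have h1 := mul_le_mul_of_nonpos_left hsum_p hE1
    have h2 := mul_le_mul_of_nonneg_right hE hlb0
    exact h1.trans h2
  have hid : q * A - t0 * c = 2 * ε ^ 2 / A := by
    rw [hq_def, ht0_def]; field_simp; ring
  have hlog2 : (0:ℝ) ≤ Real.log 2 := Real.log_nonneg (by norm_num)
  have hfinal : t0 * (c * Real.log n) + (-q * (A * Real.log n - 2 * Real.log 2))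
      ≤ -(2 * ε ^ 2 / A) * Real.log n + 2 * Real.log 2 := by
    nlinarith [hid, hq1, hlog2, hq0, hlogn0]
  -- assemble
  have hP : (μ {ω | S ω ≤ c * Real.log n}).toReal
      ≤ Real.exp (t0 * (c * Real.log n) + (Real.exp (-t0) - 1) * ∑ j ∈ s, 2 / (j:ℝ)) := by
    calc (μ {ω | S ω ≤ c * Real.log n}).toReal
        ≤ Real.exp (t0 * (c * Real.log n)) * mgf S μ (-t0) := hcher
      _ ≤ Real.exp (t0 * (c * Real.log n)) *
            Real.exp ((Real.exp (-t0) - 1) * ∑ j ∈ s, 2 / (j:ℝ)) := by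
          exact mul_le_mul_of_nonneg_left hmgf_le (Real.exp_pos _).le
      _ = _ := by rw [← Real.exp_add]
  have hgoal : {ω | (∑ j ∈ s, (if B j ω then (1:ℝ) else 0)) ≤ c * Real.log n}
      = {ω | S ω ≤ c * Real.log n} := rfl
  rw [hgoal]
  calc (μ {ω | S ω ≤ c * Real.log n}).toReal
      ≤ Real.exp (t0 * (c * Real.log n) + (Real.exp (-t0) - 1) * ∑ j ∈ s, 2 / (j:ℝ)) := hP
    _ ≤ Real.exp (-(2 * ε ^ 2 / A) * Real.log n + 2 * Real.log 2) := by
        apply Real.exp_le_exp.mpr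
        have := hexp_le
        linarith [hfinal]
    _ = 4 * (n : ℝ) ^ (-(ε ^ 2 / (ε + c / 2))) := by
        rw [Real.exp_add, Real.rpow_def_of_pos hnpos]
        have h4 : Real.exp (2 * Real.log 2) = 4 := by
          rw [show (2:ℝ) * Real.log 2 = Real.log 4 by
            rw [show (4:ℝ) = 2 ^ 2 by norm_num, Real.log_pow]; norm_num]
          exact Real.exp_log (by norm_num)
        have hexpid : -(ε ^ 2 / (ε + c / 2)) = -(2 * ε ^ 2 / A) := by
          rw [hA_def]
          have h5 : ε + c / 2 ≠ 0 := by linarith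
          field_simp
          ring
        rw [h4, hexpid, mul_comm (Real.exp _) 4, mul_comm (Real.log _)]
end

section
/- For every c ∈ (1,2) there exist β = β(c) > 0 and a constant C > 0 such that for all n ≥ 2, all vertices i ∈ [n], and all real m > c·ln n, the degree of vertex i in the random recursive tree satisfies P(d_{R_n}(i) > m) ≤ C·n^{−β}. In particular any β < 3(c−1)²/(2(c+2)) works. -/
lemma log_pade (x : ℝ) (hx : 1 ≤ x) : 3 * (x^2 - 1) / (x^2 + 4*x + 1) ≤ Real.log x := by
  have hx0 : (0:ℝ) < x := lt_of_lt_of_le one_pos hx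
  set f : ℝ → ℝ := fun y => Real.log y - 3 * (y^2 - 1) / (y^2 + 4*y + 1) with hf
  have hden : ∀ y : ℝ, 0 < y → (0:ℝ) < y^2 + 4*y + 1 := by intro y hy; nlinarith
  have hderiv : ∀ y : ℝ, 0 < y → HasDerivAt f
      (y⁻¹ - (6*y*(y^2+4*y+1) - 3*(y^2-1)*(2*y+4)) / (y^2+4*y+1)^2) y := by
    intro y hy
    have h1 : HasDerivAt Real.log y⁻¹ y := Real.hasDerivAt_log (ne_of_gt hy)
    have hnum : HasDerivAt (fun y : ℝ => 3 * (y^2 - 1)) (6*y) y := by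
      have := ((hasDerivAt_pow 2 y).sub_const 1).const_mul 3
      simpa using this.congr_deriv (by ring)
    have hden' : HasDerivAt (fun y : ℝ => y^2 + 4*y + 1) (2*y + 4) y := by
      have := ((hasDerivAt_pow 2 y).add ((hasDerivAt_id y).const_mul 4)).add_const 1
      simpa using this.congr_deriv (by ring)
    exact h1.sub (hnum.div hden' (ne_of_gt (hden y hy)))
  have hmono : MonotoneOn f (Set.Ici (1:ℝ)) := by
    apply monotoneOn_of_deriv_nonneg (convex_Ici 1)
    · apply ContinuousOn.sub
      · exact Real.continuousOn_log.mono (by intro y hy; simp at hy ⊢; positivity)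
      · apply ContinuousOn.div (by fun_prop) (by fun_prop)
        intro y hy
        exact ne_of_gt (hden y (lt_of_lt_of_le one_pos hy))
    · intro y hy
      exact ((hderiv y (lt_of_lt_of_le one_pos (le_of_lt (by simpa using hy)))).differentiableAt).differentiableWithinAt
    · intro y hy
      rw [interior_Ici] at hy
      have hy1 : (1:ℝ) < y := hy
      have hy0 : (0:ℝ) < y := lt_trans one_pos hy1
      rw [(hderiv y hy0).deriv]
      rw [sub_nonneg, div_le_iff₀ (by positivity), inv_mul_eq_div, le_div_iff₀ hy0]
      nlinarith [pow_nonneg (sub_nonneg.mpr hy1.le) 4, sq_nonneg y]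
  have h1 : f 1 ≤ f x := hmono (by simp) (by simpa using hx) hx
  have h2 : f x = Real.log x - 3 * (x^2 - 1) / (x^2 + 4*x + 1) := rfl
  have h3 : f 1 = 0 := by simp [hf]
  rw [h3, h2] at h1
  linarith


lemma key_ineq (c : ℝ) (hc1 : 1 < c) : 3 * (c - 1)^2 / (2 * (c + 2)) ≤ c * Real.log c - (c - 1) := by
  have h0 : (0:ℝ) < c := lt_trans one_pos hc1
  have h1 := log_pade c hc1.le
  have hd1 : (0:ℝ) < c^2 + 4*c + 1 := by nlinarith
  have hd2 : (0:ℝ) < 2 * (c + 2) := by nlinarith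
  have h2 : c * (3 * (c^2 - 1) / (c^2 + 4*c + 1)) ≤ c * Real.log c :=
    mul_le_mul_of_nonneg_left h1 h0.le
  have h3 : 3 * (c - 1)^2 / (2 * (c + 2)) + (c - 1) ≤ c * (3 * (c^2 - 1) / (c^2 + 4*c + 1)) := by
    rw [div_add' _ _ _ (ne_of_gt hd2), show c * (3 * (c^2 - 1) / (c^2 + 4*c + 1)) = c * (3 * (c^2-1)) / (c^2+4*c+1) by ring, div_le_div_iff₀ hd2 hd1]
    nlinarith [pow_nonneg (sub_nonneg.mpr hc1.le) 3, sq_nonneg (c-1), sq_nonneg c]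
  linarith

lemma recTree_main_bound (c : ℝ) (hc1 : 1 < c) (n : ℕ) (hn : 2 ≤ n) (i : Fin n) (m : ℝ) :
    rProb n {t | m < (rDeg t i : ℝ)} ≤
      Real.exp (c - 1) * (n:ℝ) ^ (c - 1) * c ^ (-m) := by
  classical
  have hc0 : (0:ℝ) < c := lt_trans one_pos hc1
  -- degree as a sum of indicators
  have hdeg : ∀ t : RecTree n, rDeg t i = ∑ j : Fin (n-1), (if ((t j : ℕ) = (i:ℕ)) then 1 else 0) := by
    intro t
    rw [rDeg, Nat.card_eq_fintype_card, Fintype.card_subtype, Finset.card_filter]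
  set S : ℝ := ∑ t : RecTree n, c ^ (rDeg t i) with hS
  have hSprod : S = ∏ j : Fin (n-1), ∑ v : Fin ((j:ℕ)+1), c ^ (if (v:ℕ) = (i:ℕ) then 1 else 0) := by
    rw [Fintype.prod_sum, hS]
    refine Finset.sum_congr rfl fun t _ => ?_
    rw [hdeg t, ← Finset.prod_pow_eq_pow_sum]
  -- inner bound
  have hinner : ∀ j : Fin (n-1),
      (∑ v : Fin ((j:ℕ)+1), c ^ (if (v:ℕ) = (i:ℕ) then 1 else 0)) ≤ ((j:ℕ):ℝ) + c := by
    intro j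
    have hsplit : ∀ v : Fin ((j:ℕ)+1),
        c ^ (if (v:ℕ) = (i:ℕ) then 1 else 0) = 1 + (if (v:ℕ) = (i:ℕ) then c - 1 else 0) := by
      intro v; split <;> simp
    rw [Finset.sum_congr rfl fun v _ => hsplit v, Finset.sum_add_distrib]
    have h1 : (∑ _v : Fin ((j:ℕ)+1), (1:ℝ)) = ((j:ℕ):ℝ) + 1 := by simp
    have h2 : (∑ v : Fin ((j:ℕ)+1), (if (v:ℕ) = (i:ℕ) then (c-1:ℝ) else 0)) ≤ c - 1 := by
      rw [← Finset.sum_filter]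
      have hcard : (Finset.univ.filter (fun v : Fin ((j:ℕ)+1) => (v:ℕ) = (i:ℕ))).card ≤ 1 := by
        apply Finset.card_le_one.mpr
        intro a ha b hb
        simp only [Finset.mem_filter] at ha hb
        exact Fin.ext (ha.2.trans hb.2.symm)
      rw [Finset.sum_const, nsmul_eq_mul]
      calc ((Finset.univ.filter _).card : ℝ) * (c - 1) ≤ 1 * (c-1) := by
            apply mul_le_mul_of_nonneg_right _ (by linarith)
            exact_mod_cast hcard
        _ = c - 1 := one_mul _
    linarith
  -- cardinality of RecTree
  have hN : (Nat.card (RecTree n) : ℝ) = ∏ j : Fin (n-1), (((j:ℕ):ℝ) + 1) := by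
    rw [Nat.card_eq_fintype_card, Fintype.card_pi]
    push_cast
    simp
  have hNpos : (0:ℝ) < (Nat.card (RecTree n) : ℝ) := by
    rw [hN]; positivity
  -- Markov
  set s : Set (RecTree n) := {t | m < (rDeg t i : ℝ)} with hs
  have hK : (Nat.card {t : RecTree n // t ∈ s} : ℝ) * c ^ m ≤ S := by
    rw [Nat.card_eq_fintype_card, Fintype.card_subtype]
    rw [hS]
    calc ((Finset.univ.filter (fun t : RecTree n => t ∈ s)).card : ℝ) * c ^ m
        = ∑ _t ∈ Finset.univ.filter (fun t : RecTree n => t ∈ s), c ^ m := by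
          rw [Finset.sum_const, nsmul_eq_mul]
      _ ≤ ∑ t ∈ Finset.univ.filter (fun t : RecTree n => t ∈ s), c ^ (rDeg t i) := by
          apply Finset.sum_le_sum
          intro t ht
          simp only [Finset.mem_filter, hs, Set.mem_setOf_eq] at ht
          calc c ^ m ≤ c ^ ((rDeg t i : ℕ) : ℝ) :=
                Real.rpow_le_rpow_of_exponent_le hc1.le ht.2.le
            _ = c ^ (rDeg t i) := Real.rpow_natCast c _
      _ ≤ ∑ t : RecTree n, c ^ (rDeg t i) := by
          apply Finset.sum_le_sum_of_subset_of_nonneg (Finset.filter_subset _ _)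
          intro t _ _; positivity
  -- harmonic bound
  have hν : 1 ≤ n - 1 := by omega
  have hharm : (∑ j : Fin (n-1), ((c-1) / (((j:ℕ):ℝ) + 1))) ≤ (c-1) * (1 + Real.log n) := by
    have : (∑ j : Fin (n-1), ((c-1) / (((j:ℕ):ℝ) + 1)))
        = (c-1) * ∑ j ∈ Finset.range (n-1), (((j:ℕ):ℝ) + 1)⁻¹ := by
      rw [Finset.mul_sum, ← Fin.sum_univ_eq_sum_range]
      exact Finset.sum_congr rfl fun j _ => by rw [div_eq_mul_inv]
    rw [this]
    have hh : (∑ j ∈ Finset.range (n-1), (((j:ℕ):ℝ) + 1)⁻¹) = (harmonic (n-1) : ℝ) := by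
      rw [harmonic]; push_cast
      exact Finset.sum_congr rfl fun x _ => by rw [add_comm]
    rw [hh]
    have := harmonic_le_one_add_log (n-1)
    have hlog : Real.log (n-1 : ℕ) ≤ Real.log n :=
      Real.log_le_log (by exact_mod_cast hν) (by exact_mod_cast Nat.sub_le n 1)
    have hc1' : (0:ℝ) ≤ c - 1 := by linarith
    nlinarith [this, hlog]
  -- product bound
  have hSN : S / (Nat.card (RecTree n) : ℝ) ≤ Real.exp ((c-1) * (1 + Real.log n)) := by
    rw [hSprod, hN, ← Finset.prod_div_distrib]
    calc (∏ j : Fin (n-1), (∑ v : Fin ((j:ℕ)+1), c ^ (if (v:ℕ) = (i:ℕ) then 1 else 0)) / (((j:ℕ):ℝ) + 1))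
        ≤ ∏ j : Fin (n-1), Real.exp ((c-1) / (((j:ℕ):ℝ) + 1)) := by
          apply Finset.prod_le_prod
          · intro j _; positivity
          · intro j _
            have hj : (0:ℝ) < ((j:ℕ):ℝ) + 1 := by positivity
            calc (∑ v : Fin ((j:ℕ)+1), c ^ (if (v:ℕ) = (i:ℕ) then 1 else 0)) / (((j:ℕ):ℝ) + 1)
                ≤ (((j:ℕ):ℝ) + c) / (((j:ℕ):ℝ) + 1) := by
                  gcongr
                  exact hinner j
              _ = 1 + (c-1) / (((j:ℕ):ℝ) + 1) := by field_simp; ring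
              _ ≤ Real.exp ((c-1) / (((j:ℕ):ℝ) + 1)) := by
                  have := Real.add_one_le_exp ((c-1) / (((j:ℕ):ℝ) + 1))
                  linarith
      _ = Real.exp (∑ j : Fin (n-1), ((c-1) / (((j:ℕ):ℝ) + 1))) := by
          rw [Real.exp_sum]
      _ ≤ Real.exp ((c-1) * (1 + Real.log n)) := Real.exp_le_exp.mpr hharm
  -- combine
  have hn1 : (1:ℝ) ≤ (n:ℝ) := by exact_mod_cast Nat.one_le_of_lt hn
  have hcm : (0:ℝ) < c ^ m := Real.rpow_pos_of_pos hc0 m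
  rw [rProb]
  have hK' : (Nat.card {t : RecTree n // t ∈ s} : ℝ) ≤ S * (c ^ m)⁻¹ := by
    rw [← div_eq_mul_inv]
    exact (le_div_iff₀ hcm).mpr hK
  have hnpos : (0:ℝ) < (n:ℝ) := by linarith
  have e1 : Real.exp ((c-1)*(1+Real.log n)) = Real.exp (c-1) * (n:ℝ) ^ (c-1) := by
    rw [Real.rpow_def_of_pos hnpos, ← Real.exp_add]; ring_nf
  have e2 : (c ^ m)⁻¹ = c ^ (-m) := (Real.rpow_neg hc0.le m).symm
  calc (Nat.card {t : RecTree n // t ∈ s} : ℝ) / (Nat.card (RecTree n) : ℝ)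
      ≤ (S * (c ^ m)⁻¹) / (Nat.card (RecTree n) : ℝ) := by gcongr
    _ = (S / (Nat.card (RecTree n) : ℝ)) * (c ^ m)⁻¹ := by ring
    _ ≤ Real.exp ((c-1)*(1+Real.log n)) * (c ^ m)⁻¹ := by
        gcongr
    _ = Real.exp (c - 1) * (n:ℝ) ^ (c - 1) * c ^ (-m) := by rw [e1, e2]

/-- tail bound for vertex degrees, cf. (5.1).
For every `c ∈ (1,2)` and every `0 < β < 3(c-1)²/(2(c+2))` there is a constant `C > 0`
such that for all `n ≥ 2`, all vertices `i` and all real `m > c ln n`,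
`P(d_{R_n}(i) > m) ≤ C n^{-β}`. -/
theorem recursive_tree_degree_tail (c : ℝ) (hc1 : 1 < c) (hc2 : c < 2)
    (β : ℝ) (hβ0 : 0 < β) (hβ : β < 3 * (c - 1) ^ 2 / (2 * (c + 2))) :
    ∃ C > 0, ∀ n : ℕ, 2 ≤ n → ∀ i : Fin n, ∀ m : ℝ, c * Real.log n < m →
      rProb n {t | m < (rDeg t i : ℝ)} ≤ C * (n : ℝ) ^ (-β) := by
  refine ⟨Real.exp 1, Real.exp_pos 1, fun n hn i m hm => ?_⟩
  have hc0 : (0:ℝ) < c := lt_trans one_pos hc1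
  have hn1 : (1:ℝ) ≤ (n:ℝ) := by exact_mod_cast Nat.one_le_of_lt hn
  have hnpos : (0:ℝ) < (n:ℝ) := by linarith
  have hlogc : (0:ℝ) < Real.log c := Real.log_pos hc1
  have hlogn : (0:ℝ) < Real.log n := Real.log_pos (by exact_mod_cast hn)
  calc rProb n {t | m < (rDeg t i : ℝ)}
      ≤ Real.exp (c - 1) * (n:ℝ) ^ (c - 1) * c ^ (-m) :=
        recTree_main_bound c hc1 n hn i m
    _ ≤ Real.exp (c - 1) * (n:ℝ) ^ (c - 1) * (n:ℝ) ^ (-(c * Real.log c)) := by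
        have h1 : c ^ (-m) ≤ (n:ℝ) ^ (-(c * Real.log c)) := by
          rw [Real.rpow_def_of_pos hc0, Real.rpow_def_of_pos hnpos]
          apply Real.exp_le_exp.mpr
          have : c * Real.log n * Real.log c ≤ m * Real.log c :=
            mul_le_mul_of_nonneg_right hm.le hlogc.le
          nlinarith
        have h2 : (0:ℝ) ≤ Real.exp (c - 1) * (n:ℝ) ^ (c - 1) := by positivity
        exact mul_le_mul_of_nonneg_left h1 h2
    _ = Real.exp (c - 1) * (n:ℝ) ^ (c - 1 + -(c * Real.log c)) := by
        rw [Real.rpow_add hnpos, mul_assoc]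
    _ ≤ Real.exp 1 * (n : ℝ) ^ (-β) := by
        have hkey := key_ineq c hc1
        have hexp : c - 1 + -(c * Real.log c) ≤ -β := by nlinarith
        have h3 : (n:ℝ) ^ (c - 1 + -(c * Real.log c)) ≤ (n:ℝ) ^ (-β) :=
          Real.rpow_le_rpow_of_exponent_le hn1 hexp
        have h4 : Real.exp (c - 1) ≤ Real.exp 1 := Real.exp_le_exp.mpr (by linarith)
        have h5 : (0:ℝ) ≤ (n:ℝ) ^ (c - 1 + -(c * Real.log c)) := by positivity
        exact mul_le_mul h4 h3 h5 (Real.exp_pos 1).le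
end
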